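/- arXiv:2210.02008 — 6 statements merged into one kernel-verified Lean document; each statement's English description precedes it below -/
import Mathlib

section
/- The fiberwise Wick product ⋆ makes A[ħ] into an associative unital ℂ[ħ]-algebra: for all f, g, h ∈ A[ħ] one has (f ⋆ g) ⋆ h = f ⋆ (g ⋆ h), and 1 ⋆ f = f ⋆ 1 = f. -/
/-!
STATEMENT 0: The fiberwise Wick product ⋆ makes A[ħ] into an associative unital
ℂ[ħ]-algebra: for all f, g, h ∈ A[ħ] one has (f ⋆ g) ⋆ h = f ⋆ (g ⋆ h), and
1 ⋆ f = f ⋆ 1 = f.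
-/

open MvPolynomial

namespace Stmt0

/-- Variables: `Sum.inl (Sum.inl i)` is `yⁱ`, `Sum.inl (Sum.inr i)` is `ȳⁱ`,
and `Sum.inr ()` is the formal variable `ħ`. -/
abbrev V (n : ℕ) : Type := (Fin n ⊕ Fin n) ⊕ Unit

/-- `A[ħ] = ℂ[y¹,…,yⁿ,ȳ¹,…,ȳⁿ][ħ]`. -/
abbrev W (n : ℕ) : Type := MvPolynomial (V n) ℂ

/-- The variable `ħ`. -/
noncomputable def hbar (n : ℕ) : W n := X (Sum.inr ())

/-- The variable `yⁱ`. -/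
def yv {n : ℕ} (i : Fin n) : V n := Sum.inl (Sum.inl i)

/-- The variable `ȳⁱ`. -/
def yb {n : ℕ} (i : Fin n) : V n := Sum.inl (Sum.inr i)

/-- Iterated partial derivative along a tuple of variables. -/
noncomputable def iterD {n k : ℕ} (vs : Fin k → V n) (f : W n) : W n :=
  (List.ofFn vs).foldr (fun v acc => pderiv v acc) f

/-- The `k`-th term `(1/k!) Σ_{i₁,…,i_k} (∂ᵏf/∂y^{i₁}⋯∂y^{i_k})·(∂ᵏg/∂ȳ^{i₁}⋯∂ȳ^{i_k})`
in the Wick product. -/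
noncomputable def wickTerm {n : ℕ} (k : ℕ) (f g : W n) : W n :=
  ((k.factorial : ℂ))⁻¹ •
    ∑ t : Fin k → Fin n,
      iterD (fun j => yv (t j)) f * iterD (fun j => yb (t j)) g

/-- The fiberwise Wick product `f ⋆ g = Σ_{k≥0} ħᵏ · (k-th term)`.  The sum is
finite: the `k`-fold `y`-derivative of `f` vanishes once `k > totalDegree f`,
so truncating the range at `totalDegree f + 1` loses nothing. -/
noncomputable def wick {n : ℕ} (f g : W n) : W n :=
  ∑ k ∈ Finset.range (f.totalDegree + 1), hbar n ^ k * wickTerm k f g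

lemma pderiv_comm {σ : Type*} [DecidableEq σ] (i j : σ) (f : MvPolynomial σ ℂ) :
    pderiv i (pderiv j f) = pderiv j (pderiv i f) := by
  induction f using MvPolynomial.induction_on' with
  | monomial s a =>
    rcases eq_or_ne i j with rfl | hij
    · rfl
    · simp only [pderiv_monomial]
      have h1 : (s - fun₀ | j => 1) i = s i := by
        simp [Finsupp.sub_apply, Finsupp.single_apply, Ne.symm hij]
      have h2 : (s - fun₀ | i => 1) j = s j := by
        simp [Finsupp.sub_apply, Finsupp.single_apply, hij]
      rw [h1, h2, tsub_right_comm, mul_right_comm]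
  | add p q hp hq => simp [map_add, hp, hq]

lemma iterD_nil {n : ℕ} (vs : Fin 0 → V n) (f : W n) : iterD vs f = f := rfl

lemma iterD_succ {n k : ℕ} (vs : Fin (k+1) → V n) (f : W n) :
    iterD vs f = pderiv (vs 0) (iterD (Fin.tail vs) f) := by
  rw [iterD, List.ofFn_succ]; rfl

lemma iterD_succ' {n k : ℕ} (vs : Fin (k+1) → V n) (f : W n) :
    iterD vs f = iterD (vs ∘ Fin.castSucc) (pderiv (vs (Fin.last k)) f) := by
  rw [iterD, List.ofFn_succ', List.concat_eq_append, List.foldr_append]; rfl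


lemma iterD_add {n k : ℕ} (vs : Fin k → V n) (f g : W n) :
    iterD vs (f + g) = iterD vs f + iterD vs g := by
  induction k with
  | zero => simp [iterD_nil]
  | succ k ih => simp [iterD_succ, ih (Fin.tail vs), map_add]

lemma iterD_zero {n k : ℕ} (vs : Fin k → V n) : iterD vs (0 : W n) = 0 := by
  induction k with
  | zero => simp [iterD_nil]
  | succ k ih => simp [iterD_succ, ih (Fin.tail vs)]

lemma pderiv_iterD {n k : ℕ} (v : V n) (vs : Fin k → V n) (f : W n) :
    pderiv v (iterD vs f) = iterD vs (pderiv v f) := by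
  induction k with
  | zero => simp [iterD_nil]
  | succ k ih => rw [iterD_succ, iterD_succ, pderiv_comm, ih (Fin.tail vs)]

lemma removeNth_succ {α : Type*} {k : ℕ} (j : Fin (k+1)) (vs : Fin (k+2) → α) :
    Fin.removeNth j.succ vs = Fin.cons (vs 0) (Fin.removeNth j (Fin.tail vs)) := by
  ext m
  rcases Fin.eq_zero_or_eq_succ m with rfl | ⟨m', rfl⟩
  · simp [Fin.removeNth]
  · simp [Fin.removeNth, Fin.tail, Fin.succ_succAbove_succ]

lemma iterD_cons {n k : ℕ} (a : V n) (ws : Fin k → V n) (p : W n) :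
    iterD (Fin.cons a ws) p = pderiv a (iterD ws p) := by
  rw [iterD_succ]
  simp [Fin.tail_cons]

lemma iterD_removeNth {n k : ℕ} (j : Fin (k+1)) (vs : Fin (k+1) → V n) (f : W n) :
    iterD vs f = iterD (j.removeNth vs) (pderiv (vs j) f) := by
  induction k with
  | zero =>
    rw [Fin.fin_one_eq_zero j, iterD_succ]
    simp [iterD_nil, pderiv_iterD]
  | succ k ih =>
    rcases Fin.eq_zero_or_eq_succ j with rfl | ⟨j', rfl⟩
    · rw [iterD_succ, pderiv_iterD, Fin.removeNth_zero]
    · rw [iterD_succ, ih j' (Fin.tail vs), removeNth_succ, iterD_cons]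
      rfl

lemma iterD_mul_X {n : ℕ} : ∀ {k : ℕ} (vs : Fin (k+1) → V n) (w : V n) (p : W n),
    iterD vs (X w * p) = X w * iterD vs p
      + ∑ j : Fin (k+1), if vs j = w then iterD (Fin.removeNth j vs) p else 0 := by
  intro k
  induction k with
  | zero =>
    intro vs w p
    rw [iterD_succ vs (X w * p), iterD_nil, pderiv_mul, pderiv_X, iterD_succ vs p, iterD_nil,
      Fin.sum_univ_succ]
    simp only [Fin.removeNth_zero, iterD_nil, Finset.univ_eq_empty, Finset.sum_empty, add_zero]
    rcases eq_or_ne (vs 0) w with h | h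
    · rw [if_pos h, ← h, Pi.single_eq_same]; ring
    · rw [if_neg h, Pi.single_eq_of_ne (Ne.symm h)]; ring
  | succ k ih =>
    intro vs w p
    conv_rhs => rw [Fin.sum_univ_succ]
    rw [iterD_succ vs (X w * p), ih (Fin.tail vs), map_add, pderiv_mul, pderiv_X]
    have h0 : (if vs 0 = w then iterD (Fin.removeNth 0 vs) p else 0)
        = Pi.single (M := fun _ => W n) (vs 0) 1 w * iterD (Fin.tail vs) p := by
      rcases eq_or_ne (vs 0) w with h | h
      · rw [if_pos h, ← h, Pi.single_eq_same, one_mul, Fin.removeNth_zero]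
      · rw [if_neg h, Pi.single_eq_of_ne (Ne.symm h), zero_mul]
    have hsum : (pderiv (vs 0)) (∑ j : Fin (k+1),
        if Fin.tail vs j = w then iterD (Fin.removeNth j (Fin.tail vs)) p else 0)
        = ∑ j : Fin (k+1), if vs j.succ = w then iterD (Fin.removeNth j.succ vs) p else 0 := by
      rw [map_sum]
      refine Finset.sum_congr rfl fun j _ => ?_
      rw [show Fin.tail vs j = vs j.succ from rfl]
      rcases eq_or_ne (vs j.succ) w with h | h
      · rw [if_pos h, if_pos h, removeNth_succ, iterD_cons]
      · rw [if_neg h, if_neg h, map_zero]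
    rw [hsum, ← iterD_succ vs p, h0]
    ring


lemma iterD_mul_left {n : ℕ} : ∀ {k : ℕ} (vs : Fin k → V n) (u f : W n),
    (∀ j, pderiv (vs j) u = 0) → iterD vs (u * f) = u * iterD vs f := by
  intro k
  induction k with
  | zero => intro vs u f _; rw [iterD_nil, iterD_nil]
  | succ k ih =>
    intro vs u f hu
    rw [iterD_succ, iterD_succ, ih (Fin.tail vs) u f (fun j => hu j.succ),
      pderiv_mul, hu 0, zero_mul, zero_add]

lemma iterD_monomial_eq_zero {n : ℕ} : ∀ {k : ℕ} (vs : Fin k → V n) (s : V n →₀ ℕ) (a : ℂ),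
    (s.sum fun _ e => e) < k → iterD vs (monomial s a) = 0 := by
  intro k
  induction k with
  | zero => intro vs s a h; exact absurd h (Nat.not_lt_zero _)
  | succ k ih =>
    intro vs s a h
    rw [iterD_succ' vs, pderiv_monomial]
    rcases Nat.eq_zero_or_pos (s (vs (Fin.last k))) with hz | hp
    · rw [hz]
      push_cast
      rw [mul_zero, map_zero, iterD_zero]
    · apply ih
      have hle : Finsupp.single (vs (Fin.last k)) 1 ≤ s := by
        rw [Finsupp.single_le_iff]; exact hp
      have hsub : ((s - Finsupp.single (vs (Fin.last k)) 1).sum fun _ e => e) + 1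
          = s.sum fun _ e => e := by
        conv_rhs => rw [← tsub_add_cancel_of_le hle]
        rw [Finsupp.sum_add_index' (fun _ => rfl) (fun _ _ _ => rfl),
          Finsupp.sum_single_index rfl]
      omega
  

lemma iterD_sum {n k : ℕ} (vs : Fin k → V n) {ι : Type*} (S : Finset ι) (F : ι → W n) :
    iterD vs (∑ i ∈ S, F i) = ∑ i ∈ S, iterD vs (F i) := by
  classical
  induction S using Finset.induction_on with
  | empty => simp [iterD_zero]
  | insert _ _ hni ih => rw [Finset.sum_insert hni, Finset.sum_insert hni, iterD_add, ih]

lemma iterD_eq_zero_of_lt {n k : ℕ} (vs : Fin k → V n) (f : W n)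
    (h : f.totalDegree < k) : iterD vs f = 0 := by
  conv_lhs => rw [f.as_sum]
  rw [iterD_sum]
  refine Finset.sum_eq_zero fun m hm => ?_
  exact iterD_monomial_eq_zero vs m _ (lt_of_le_of_lt (le_totalDegree hm) h)


lemma wickTerm_zero {n : ℕ} (f g : W n) : wickTerm 0 f g = f * g := by
  rw [wickTerm]
  rw [Fintype.sum_unique (fun t : Fin 0 → Fin n =>
    iterD (fun j => yv (t j)) f * iterD (fun j => yb (t j)) g)]
  simp [iterD_nil]

lemma wickTerm_eq_zero_left {n k : ℕ} (f g : W n) (h : f.totalDegree < k) :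
    wickTerm k f g = 0 := by
  rw [wickTerm]
  rw [Finset.sum_eq_zero fun t _ => by
    rw [iterD_eq_zero_of_lt _ f h, zero_mul]]
  rw [smul_zero]

lemma wickTerm_eq_zero_right {n k : ℕ} (f g : W n) (h : g.totalDegree < k) :
    wickTerm k f g = 0 := by
  rw [wickTerm]
  rw [Finset.sum_eq_zero fun t _ => by
    rw [iterD_eq_zero_of_lt _ g h, mul_zero]]
  rw [smul_zero]

lemma wickTerm_add_left {n k : ℕ} (f₁ f₂ g : W n) :
    wickTerm k (f₁ + f₂) g = wickTerm k f₁ g + wickTerm k f₂ g := by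
  simp only [wickTerm, iterD_add, add_mul, Finset.sum_add_distrib, smul_add]

lemma wickTerm_add_right {n k : ℕ} (f g₁ g₂ : W n) :
    wickTerm k f (g₁ + g₂) = wickTerm k f g₁ + wickTerm k f g₂ := by
  simp only [wickTerm, iterD_add, mul_add, Finset.sum_add_distrib, smul_add]

lemma wickTerm_mul_left {n k : ℕ} (u f g : W n) (hu : ∀ i : Fin n, pderiv (yv i) u = 0) :
    wickTerm k (u * f) g = u * wickTerm k f g := by
  rw [wickTerm, wickTerm, Finset.smul_sum, Finset.smul_sum, Finset.mul_sum]
  refine Finset.sum_congr rfl fun t _ => ?_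
  rw [iterD_mul_left _ u f (fun j => hu (t j)), mul_smul_comm, mul_assoc]

lemma wickTerm_mul_right {n k : ℕ} (w f g : W n) (hw : ∀ i : Fin n, pderiv (yb i) w = 0) :
    wickTerm k f (w * g) = w * wickTerm k f g := by
  rw [wickTerm, wickTerm, Finset.smul_sum, Finset.smul_sum, Finset.mul_sum]
  refine Finset.sum_congr rfl fun t _ => ?_
  rw [iterD_mul_left _ w g (fun j => hw (t j)), mul_smul_comm]
  ring_nf

lemma pderiv_yb_wickTerm {n k : ℕ} (i : Fin n) (f g : W n) :
    pderiv (yb i) (wickTerm k f g)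
      = wickTerm k (pderiv (yb i) f) g + wickTerm k f (pderiv (yb i) g) := by
  rw [wickTerm, wickTerm, wickTerm, Derivation.map_smul, map_sum, ← smul_add, ← Finset.sum_add_distrib]
  congr 1
  refine Finset.sum_congr rfl fun t _ => ?_
  rw [pderiv_mul, pderiv_iterD, pderiv_iterD]


lemma wickTerm_X_mul {n k : ℕ} (i : Fin n) (p g : W n) :
    wickTerm (k+1) (X (yv i) * p) g
      = X (yv i) * wickTerm (k+1) p g + wickTerm k p (pderiv (yb i) g) := by
  classical
  have key : ∀ t : Fin (k+1) → Fin n,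
      iterD (fun j => yv (t j)) (X (yv i) * p) * iterD (fun j => yb (t j)) g
      = X (yv i) * (iterD (fun j => yv (t j)) p * iterD (fun j => yb (t j)) g)
        + ∑ j : Fin (k+1), (if t j = i then
            iterD (fun m => yv (Fin.removeNth j t m)) p
              * iterD (fun m => yb (Fin.removeNth j t m)) (pderiv (yb i) g) else 0) := by
    intro t
    rw [iterD_mul_X (fun j => yv (t j)) (yv i) p, add_mul, mul_assoc, Finset.sum_mul]
    congr 1
    refine Finset.sum_congr rfl fun j _ => ?_
    rw [ite_mul, zero_mul]
    rcases eq_or_ne (t j) i with h | h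
    · rw [if_pos (show yv (t j) = yv i by rw [h]), if_pos h,
        iterD_removeNth j (fun j' => yb (t j')) g]
      rw [h]
      rfl
    · rw [if_neg (show yv (t j) ≠ yv i from fun hc => h (by
        simpa [yv] using hc)), if_neg h]
  have hj : ∀ j : Fin (k+1), (∑ t : Fin (k+1) → Fin n, if t j = i then
      iterD (fun m => yv (Fin.removeNth j t m)) p
        * iterD (fun m => yb (Fin.removeNth j t m)) (pderiv (yb i) g) else 0)
      = ∑ t' : Fin k → Fin n,
          iterD (fun m => yv (t' m)) p * iterD (fun m => yb (t' m)) (pderiv (yb i) g) := by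
    intro j
    rw [← Fintype.sum_equiv (Fin.insertNthEquiv (fun _ => Fin n) j)
      (fun pr : Fin n × (Fin k → Fin n) => if pr.1 = i then
        iterD (fun m => yv (pr.2 m)) p * iterD (fun m => yb (pr.2 m)) (pderiv (yb i) g) else 0)
      _ ?_]
    · rw [Fintype.sum_prod_type]
      have hinner : ∀ a : Fin n, (∑ t' : Fin k → Fin n, if a = i then
          iterD (fun m => yv (t' m)) p * iterD (fun m => yb (t' m)) (pderiv (yb i) g) else 0)
          = if a = i then (∑ t' : Fin k → Fin n,
              iterD (fun m => yv (t' m)) p * iterD (fun m => yb (t' m)) (pderiv (yb i) g))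
            else 0 := by
        intro a; split <;> simp
      rw [Finset.sum_congr rfl fun a _ => hinner a, Fintype.sum_ite_eq' i]
    · rintro ⟨a, t'⟩
      have h1 : (Fin.insertNthEquiv (fun _ => Fin n) j) (a, t') j = a := by
        simp [Fin.insertNthEquiv]
      have h2 : Fin.removeNth j ((Fin.insertNthEquiv (fun _ => Fin n) j) (a, t')) = t' := by
        simp [Fin.insertNthEquiv]
      simp only [h1, h2]
  have expand : (∑ t : Fin (k+1) → Fin n,
        iterD (fun j => yv (t j)) (X (yv i) * p) * iterD (fun j => yb (t j)) g)
      = X (yv i) * (∑ t : Fin (k+1) → Fin n,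
          iterD (fun j => yv (t j)) p * iterD (fun j => yb (t j)) g)
        + (k+1) • ∑ t' : Fin k → Fin n,
            iterD (fun m => yv (t' m)) p * iterD (fun m => yb (t' m)) (pderiv (yb i) g) := by
    rw [Finset.sum_congr rfl fun t _ => key t, Finset.sum_add_distrib, ← Finset.mul_sum]
    congr 1
    rw [Finset.sum_comm, Finset.sum_congr rfl fun j _ => hj j, Finset.sum_const,
      Finset.card_univ, Fintype.card_fin]
  rw [wickTerm, expand, smul_add, ← mul_smul_comm, ← wickTerm]
  congr 1
  rw [wickTerm, ← Nat.cast_smul_eq_nsmul ℂ, smul_smul]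
  congr 1
  push_cast
  rw [Nat.factorial_succ]
  have hk : (k.factorial : ℂ) ≠ 0 := Nat.cast_ne_zero.mpr k.factorial_ne_zero
  have hk1 : ((k : ℂ) + 1) ≠ 0 := by
    have : ((k+1 : ℕ) : ℂ) ≠ 0 := Nat.cast_ne_zero.mpr (Nat.succ_ne_zero k)
    push_cast at this; exact this
  field_simp
  rw [Nat.cast_mul, Nat.cast_succ]


lemma wick_eq_sum_range {n : ℕ} (f g : W n) {N : ℕ} (h : f.totalDegree < N) :
    wick f g = ∑ k ∈ Finset.range N, hbar n ^ k * wickTerm k f g := by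
  rw [wick]
  refine Finset.sum_subset ?_ ?_
  · intro k hk
    rw [Finset.mem_range] at hk ⊢
    omega
  · intro k _ hk
    rw [Finset.mem_range, not_lt] at hk
    rw [wickTerm_eq_zero_left _ _ (by omega), mul_zero]

lemma pderiv_inl_hbar_pow {n : ℕ} (w : Fin n ⊕ Fin n) (k : ℕ) :
    pderiv (Sum.inl w) (hbar n ^ k) = 0 := by
  simp [hbar, pderiv_pow, pderiv_X_of_ne (show (Sum.inr () : V n) ≠ Sum.inl w by simp)]

lemma pderiv_yv_hbar_pow {n : ℕ} (i : Fin n) (k : ℕ) :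
    pderiv (yv i) (hbar n ^ k) = 0 := pderiv_inl_hbar_pow (Sum.inl i) k

lemma pderiv_yb_hbar_pow {n : ℕ} (i : Fin n) (k : ℕ) :
    pderiv (yb i) (hbar n ^ k) = 0 := pderiv_inl_hbar_pow (Sum.inr i) k

lemma pderiv_yv_hbar {n : ℕ} (i : Fin n) : pderiv (yv i) (hbar n) = 0 := by
  simpa using pderiv_yv_hbar_pow i 1

lemma wick_add_right {n : ℕ} (f g h : W n) :
    wick f (g + h) = wick f g + wick f h := by
  rw [wick, wick, wick, ← Finset.sum_add_distrib]
  exact Finset.sum_congr rfl fun k _ => by rw [wickTerm_add_right, mul_add]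

lemma wick_add_left {n : ℕ} (f g h : W n) :
    wick (f + g) h = wick f h + wick g h := by
  set N := max (f + g).totalDegree (max f.totalDegree g.totalDegree) + 1 with hN
  rw [wick_eq_sum_range (N := N) (f+g) h (by omega),
    wick_eq_sum_range (N := N) f h (by have := le_max_left f.totalDegree g.totalDegree; omega),
    wick_eq_sum_range (N := N) g h (by have := le_max_right f.totalDegree g.totalDegree; omega),
    ← Finset.sum_add_distrib]
  exact Finset.sum_congr rfl fun k _ => by rw [wickTerm_add_left, mul_add]

lemma wick_mul_left {n : ℕ} (u f g : W n) (hu : ∀ i : Fin n, pderiv (yv i) u = 0) :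
    wick (u * f) g = u * wick f g := by
  set N := max (u * f).totalDegree f.totalDegree + 1 with hN
  rw [wick_eq_sum_range (N := N) (u*f) g (by omega), wick_eq_sum_range (N := N) f g (by omega), Finset.mul_sum]
  exact Finset.sum_congr rfl fun k _ => by rw [wickTerm_mul_left u f g hu]; ring

lemma wick_mul_right {n : ℕ} (w f g : W n) (hw : ∀ i : Fin n, pderiv (yb i) w = 0) :
    wick f (w * g) = w * wick f g := by
  rw [wick, wick, Finset.mul_sum]
  exact Finset.sum_congr rfl fun k _ => by rw [wickTerm_mul_right w f g hw]; ring

lemma wick_one_left {n : ℕ} (f : W n) : wick 1 f = f := by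
  rw [wick, totalDegree_one]
  simp [wickTerm_zero]

lemma wick_one_right {n : ℕ} (f : W n) : wick f 1 = f := by
  rw [wick]
  rw [Finset.sum_eq_single 0 (fun k _ hk => by
    rw [wickTerm_eq_zero_right _ _ (by rw [totalDegree_one]; omega), mul_zero])
    (fun hk => absurd (Finset.mem_range.2 (by omega)) hk)]
  rw [wickTerm_zero, pow_zero, one_mul, mul_one]

lemma wick_yfree_left {n : ℕ} (u g : W n) (hu : ∀ i : Fin n, pderiv (yv i) u = 0) :
    wick u g = u * g := by
  conv_lhs => rw [← mul_one u]
  rw [wick_mul_left _ _ _ hu, wick_one_left]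

lemma pderiv_yb_wick {n : ℕ} (i : Fin n) (f g : W n) :
    pderiv (yb i) (wick f g)
      = wick (pderiv (yb i) f) g + wick f (pderiv (yb i) g) := by
  set N := max (pderiv (yb i) f).totalDegree f.totalDegree + 1 with hN
  rw [wick_eq_sum_range (N := N) f g (by omega), wick_eq_sum_range (N := N) (pderiv (yb i) f) g (by omega),
    wick_eq_sum_range (N := N) f (pderiv (yb i) g) (by omega), map_sum, ← Finset.sum_add_distrib]
  refine Finset.sum_congr rfl fun k _ => ?_
  rw [pderiv_mul, pderiv_yb_hbar_pow, zero_mul, zero_add, pderiv_yb_wickTerm, mul_add]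

lemma wick_X_mul {n : ℕ} (i : Fin n) (p g : W n) :
    wick (X (yv i) * p) g
      = X (yv i) * wick p g + hbar n * wick p (pderiv (yb i) g) := by
  set N := max (X (yv i) * p).totalDegree p.totalDegree + 1 with hN
  rw [wick_eq_sum_range (N := N+1) (X (yv i) * p) g (show (X (yv i) * p).totalDegree < N + 1 by omega),
    Finset.sum_range_succ']
  have e2 : ∀ k, hbar n ^ (k+1) * wickTerm (k+1) (X (yv i) * p) g
      = X (yv i) * (hbar n ^ (k+1) * wickTerm (k+1) p g)
        + hbar n * (hbar n ^ k * wickTerm k p (pderiv (yb i) g)) := by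
    intro k; rw [wickTerm_X_mul]; ring
  rw [Finset.sum_congr rfl fun k _ => e2 k, Finset.sum_add_distrib, ← Finset.mul_sum,
    ← Finset.mul_sum, ← wick_eq_sum_range (N := N) p (pderiv (yb i) g) (by omega)]
  conv_rhs => rw [wick_eq_sum_range (N := N+1) p g (show p.totalDegree < N + 1 by omega),
    Finset.sum_range_succ']
  rw [wickTerm_zero, wickTerm_zero]
  ring

lemma wick_assoc {n : ℕ} (f g h : W n) :
    wick (wick f g) h = wick f (wick g h) := by
  induction f using MvPolynomial.induction_on generalizing g h with
  | C a =>
    have hu : ∀ i : Fin n, pderiv (yv i) (C a : W n) = 0 := fun i => pderiv_C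
    rw [wick_yfree_left _ _ hu, wick_yfree_left _ _ hu, wick_mul_left _ _ _ hu]
  | add p q hp hq =>
    rw [wick_add_left, wick_add_left, wick_add_left, hp, hq]
  | mul_X p v hp =>
    match v with
    | Sum.inl (Sum.inl i) =>
      rw [mul_comm p (X _)]
      rw [show (Sum.inl (Sum.inl i) : V n) = yv i from rfl]
      rw [wick_X_mul i p g, wick_add_left, wick_X_mul i (wick p g) h,
        wick_mul_left (hbar n) (wick p (pderiv (yb i) g)) h pderiv_yv_hbar,
        hp, hp, hp, wick_X_mul i p (wick g h), pderiv_yb_wick, wick_add_right]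
      ring
    | Sum.inl (Sum.inr i) =>
      have hu : ∀ j : Fin n, pderiv (yv j) (X (Sum.inl (Sum.inr i)) : W n) = 0 :=
        fun j => pderiv_X_of_ne (by simp [yv])
      rw [mul_comm p (X _), wick_mul_left _ _ _ hu, wick_mul_left _ _ _ hu, hp,
        ← wick_mul_left _ _ _ hu]
    | Sum.inr () =>
      have hu : ∀ j : Fin n, pderiv (yv j) (X (Sum.inr ()) : W n) = 0 :=
        fun j => pderiv_X_of_ne (by simp [yv])
      rw [mul_comm p (X _), wick_mul_left _ _ _ hu, wick_mul_left _ _ _ hu, hp,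
        ← wick_mul_left _ _ _ hu]


/-- the Wick product is ℂ[ħ]-bilinear, associative, and unital. -/
theorem wick_assoc_unital (n : ℕ) (hn : 1 ≤ n) :
    (∀ f g h : W n, wick (wick f g) h = wick f (wick g h)) ∧
    (∀ f : W n, wick 1 f = f ∧ wick f 1 = f) ∧
    (∀ f g h : W n, wick (f + g) h = wick f h + wick g h) ∧
    (∀ f g h : W n, wick f (g + h) = wick f g + wick f h) ∧
    (∀ (a : ℂ) (m : ℕ) (f g : W n),
      wick ((C a * hbar n ^ m) * f) g = (C a * hbar n ^ m) * wick f g ∧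
      wick f ((C a * hbar n ^ m) * g) = (C a * hbar n ^ m) * wick f g) := by
  refine ⟨fun f g h => wick_assoc f g h,
    fun f => ⟨wick_one_left f, wick_one_right f⟩,
    fun f g h => wick_add_left f g h,
    fun f g h => wick_add_right f g h,
    fun a m f g => ⟨?_, ?_⟩⟩
  · refine wick_mul_left _ _ _ fun i => ?_
    rw [pderiv_mul, pderiv_C, pderiv_yv_hbar_pow, zero_mul, mul_zero, add_zero]
  · refine wick_mul_right _ _ _ fun i => ?_
    rw [pderiv_mul, pderiv_C, pderiv_yb_hbar_pow, zero_mul, mul_zero, add_zero]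


end Stmt0
end

section
/- The level-c Wick algebra is almost commutative for the anti-holomorphic degree filtration: for all f, g ∈ A and any c ∈ ℂ, (i) f ⋆_c g − f·g has ȳ-degree at most deg_ȳ f + deg_ȳ g − 1 (so the associated graded algebra is the commutative polynomial algebra), and (ii) f ⋆_c g − g ⋆_c f − c·Σ_{i=1}^{n}((∂f/∂yⁱ)(∂g/∂ȳⁱ) − (∂g/∂yⁱ)(∂f/∂ȳⁱ)) has ȳ-degree at most deg_ȳ f + deg_ȳ g − 2. -/
/-!
STATEMENT 8: The level-c Wick algebra is almost commutative for the
anti-holomorphic degree filtration: for all f, g ∈ A and any c ∈ ℂ,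
(i) f ⋆_c g − f·g has ȳ-degree at most deg_ȳ f + deg_ȳ g − 1 (so the associated
graded algebra is the commutative polynomial algebra), and
(ii) f ⋆_c g − g ⋆_c f − c·Σᵢ((∂f/∂yⁱ)(∂g/∂ȳⁱ) − (∂g/∂yⁱ)(∂f/∂ȳⁱ)) has
ȳ-degree at most deg_ȳ f + deg_ȳ g − 2.
(The inequalities are stated without ℕ-truncated subtraction: every monomial of
the difference has ȳ-degree + 1 (resp. + 2) at most deg_ȳ f + deg_ȳ g.)
-/

namespace Stmt8

open MvPolynomial

/-- `A = ℂ[y¹,…,yⁿ,ȳ¹,…,ȳⁿ]`; `Sum.inl i` is `yⁱ` and `Sum.inr i` is `ȳⁱ`. -/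
abbrev A (n : ℕ) : Type := MvPolynomial (Fin n ⊕ Fin n) ℂ

/-- Iterated partial derivative along a tuple of variables. -/
noncomputable def iterD {n k : ℕ} (vs : Fin k → (Fin n ⊕ Fin n)) (f : A n) : A n :=
  (List.ofFn vs).foldr (fun v acc => pderiv v acc) f

/-- The `k`-th term `(cᵏ/k!) Σ_{i₁,…,i_k} (∂ᵏf/∂y^{i₁}⋯∂y^{i_k})·(∂ᵏg/∂ȳ^{i₁}⋯∂ȳ^{i_k})`
in the level-`c` Wick product. -/
noncomputable def wickTermc {n : ℕ} (c : ℂ) (k : ℕ) (f g : A n) : A n :=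
  (c ^ k * ((k.factorial : ℂ))⁻¹) •
    ∑ t : Fin k → Fin n,
      iterD (fun j => Sum.inl (t j)) f * iterD (fun j => Sum.inr (t j)) g

/-- The level-`c` Wick product `f ⋆_c g = Σ_{k≥0} (cᵏ/k!) Σ (∂_y^k f)(∂_ȳ^k g)`;
the sum is finite since the `k`-fold derivative of `f` vanishes for
`k > totalDegree f`, so truncating at `totalDegree f + 1` loses nothing. -/
noncomputable def wickc {n : ℕ} (c : ℂ) (f g : A n) : A n :=
  ∑ k ∈ Finset.range (f.totalDegree + 1), wickTermc c k f g

/-- The total degree of `f ∈ A` in the variables `ȳ¹,…,ȳⁿ`. -/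
def degYb {n : ℕ} (f : A n) : ℕ :=
  f.support.sup fun m => ∑ i : Fin n, m (Sum.inr i)


section Aux
variable {n : ℕ}

/-- ȳ-weight of a monomial. -/
def wt (m : (Fin n ⊕ Fin n) →₀ ℕ) : ℕ := ∑ i : Fin n, m (Sum.inr i)

lemma wt_add (a b : (Fin n ⊕ Fin n) →₀ ℕ) : wt (a + b) = wt a + wt b := by
  simp [wt, Finset.sum_add_distrib]

lemma wt_single_inr (i : Fin n) : wt (Finsupp.single (Sum.inr i : Fin n ⊕ Fin n) 1) = 1 := by
  simp [wt, Finsupp.single_apply]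

def dT (m : (Fin n ⊕ Fin n) →₀ ℕ) : ℕ := ∑ x : Fin n ⊕ Fin n, m x

lemma dT_add (a b : (Fin n ⊕ Fin n) →₀ ℕ) : dT (a + b) = dT a + dT b := by
  simp [dT, Finset.sum_add_distrib]

lemma dT_single (v : Fin n ⊕ Fin n) : dT (Finsupp.single v 1) = 1 := by
  simp [dT, Finsupp.single_apply]

lemma dT_le_totalDegree {f : A n} {m} (h : m ∈ f.support) : dT m ≤ f.totalDegree := by
  have h2 : (m.sum fun _ e => e) = dT m := Finsupp.sum_fintype _ _ (fun _ => rfl)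
  calc dT m = m.sum fun _ e => e := h2.symm
    _ ≤ f.totalDegree := Finset.le_sup (f := fun m => m.sum fun _ e => e) h

lemma wt_le_degYb {f : A n} {m} (h : m ∈ f.support) : wt m ≤ degYb f :=
  Finset.le_sup (f := fun m => ∑ i : Fin n, m (Sum.inr i)) h

/-- Key structure lemma for the support of a partial derivative. -/
lemma mem_support_pderiv {v : Fin n ⊕ Fin n} {f : A n} {m}
    (h : m ∈ (pderiv v f).support) : m + Finsupp.single v 1 ∈ f.support := by
  classical
  conv at h => rw [f.as_sum]
  rw [map_sum] at h
  obtain ⟨m₀, hm₀, hm⟩ := Finset.mem_biUnion.mp (support_sum h)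
  rw [pderiv_monomial] at hm
  rcases Decidable.em (coeff m₀ f * m₀ v = 0) with h0 | h0
  · simp [support_monomial, h0] at hm
  · rw [support_monomial, if_neg h0] at hm
    have hv : m₀ v ≠ 0 := fun hv => h0 (by simp [hv])
    have hle : Finsupp.single v 1 ≤ m₀ := by
      rw [Finsupp.single_le_iff]
      exact Nat.one_le_iff_ne_zero.mpr hv
    have : m + Finsupp.single v 1 = m₀ := by
      rw [Finset.mem_singleton] at hm
      subst hm
      exact tsub_add_cancel_of_le hle
    rwa [this]

/-- Iterated derivative along a list of variables. -/
noncomputable def Dl (l : List (Fin n ⊕ Fin n)) (f : A n) : A n :=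
  l.foldr (fun v acc => pderiv v acc) f

lemma iterD_eq_Dl {k : ℕ} (vs : Fin k → (Fin n ⊕ Fin n)) (f : A n) :
    iterD vs f = Dl (List.ofFn vs) f := rfl

lemma dT_Dl : ∀ (l : List (Fin n ⊕ Fin n)) (f : A n) (m : (Fin n ⊕ Fin n) →₀ ℕ),
    m ∈ (Dl l f).support → dT m + l.length ≤ f.totalDegree
  | [], f, m, h => by simpa [Dl] using dT_le_totalDegree h
  | v :: t, f, m, h => by
    have h1 : m + Finsupp.single v 1 ∈ (Dl t f).support := mem_support_pderiv h
    have := dT_Dl t f _ h1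
    rw [dT_add, dT_single] at this
    simpa [List.length_cons, Nat.add_comm, Nat.add_assoc, Nat.add_left_comm] using this

lemma Dl_eq_zero {l : List (Fin n ⊕ Fin n)} {f : A n} (h : f.totalDegree < l.length) :
    Dl l f = 0 := by
  rw [← support_eq_empty, Finset.eq_empty_iff_forall_notMem]
  intro m hm
  have := dT_Dl l f m hm
  omega

lemma wt_Dl : ∀ (l : List (Fin n ⊕ Fin n)) (f : A n) (m : (Fin n ⊕ Fin n) →₀ ℕ),
    m ∈ (Dl l f).support → wt m ≤ degYb f
  | [], f, m, h => wt_le_degYb h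
  | v :: t, f, m, h => by
    have h1 : m + Finsupp.single v 1 ∈ (Dl t f).support := mem_support_pderiv h
    have := wt_Dl t f _ h1
    rw [wt_add] at this
    omega

lemma wt_Dl_inr : ∀ (l : List (Fin n)) (f : A n) (m : (Fin n ⊕ Fin n) →₀ ℕ),
    m ∈ (Dl (l.map Sum.inr) f).support → wt m + l.length ≤ degYb f
  | [], f, m, h => by simpa [Dl] using wt_le_degYb h
  | v :: t, f, m, h => by
    have h1 : m + Finsupp.single (Sum.inr v) 1 ∈ (Dl (t.map Sum.inr) f).support :=
      mem_support_pderiv h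
    have := wt_Dl_inr t f _ h1
    rw [wt_add, wt_single_inr] at this
    simp only [List.length_cons]
    omega

lemma wt_wickTerm {c : ℂ} {k : ℕ} {f g : A n} {m}
    (h : m ∈ (wickTermc c k f g).support) : wt m + k ≤ degYb f + degYb g := by
  classical
  have h1 := support_smul h
  obtain ⟨t, _, ht⟩ := Finset.mem_biUnion.mp (support_sum h1)
  obtain ⟨a, ha, b, hb, hab⟩ := Finset.mem_add.mp (support_mul _ _ ht)
  have hwa : wt a ≤ degYb f := wt_Dl _ f a (by rwa [iterD_eq_Dl] at ha)
  have hwb : wt b + k ≤ degYb g := by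
    have hl : List.ofFn (fun j => (Sum.inr (t j) : Fin n ⊕ Fin n)) =
        (List.ofFn t).map Sum.inr := by
      rw [List.map_ofFn]; rfl
    have := wt_Dl_inr (List.ofFn t) g b (by rw [iterD_eq_Dl, hl] at hb; exact hb)
    simpa using this
  subst hab
  rw [wt_add]
  omega

lemma wickTerm_eq_zero {c : ℂ} {k : ℕ} {f : A n} (g : A n) (h : f.totalDegree < k) :
    wickTermc c k f g = 0 := by
  have hz : ∀ t : Fin k → Fin n, iterD (fun j => Sum.inl (t j)) f = 0 := fun t => by
    rw [iterD_eq_Dl]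
    exact Dl_eq_zero (by simpa using h)
  simp [wickTermc, hz]

lemma wickTerm_zero (c : ℂ) (f g : A n) : wickTermc c 0 f g = f * g := by
  simp [wickTermc, iterD, List.ofFn_zero]

lemma wickTerm_one (c : ℂ) (f g : A n) :
    wickTermc c 1 f g =
      c • ∑ i : Fin n, pderiv (Sum.inl i) f * pderiv (Sum.inr i) g := by
  rw [wickTermc]
  have he : ∑ t : Fin 1 → Fin n,
      iterD (fun j => Sum.inl (t j)) f * iterD (fun j => Sum.inr (t j)) g
      = ∑ i : Fin n, pderiv (Sum.inl i) f * pderiv (Sum.inr i) g := by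
    apply Fintype.sum_equiv (Equiv.funUnique (Fin 1) (Fin n))
    intro t
    simp [iterD, List.ofFn_succ, List.ofFn_zero, Equiv.funUnique]
  rw [he]
  norm_num

end Aux

theorem wickc_almost_commutative (n : ℕ) (hn : 1 ≤ n) (c : ℂ) (f g : A n) :
    (∀ m ∈ (wickc c f g - f * g).support,
      (∑ i : Fin n, m (Sum.inr i)) + 1 ≤ degYb f + degYb g) ∧
    (∀ m ∈ (wickc c f g - wickc c g f -
        c • ∑ i : Fin n,
          (pderiv (Sum.inl i) f * pderiv (Sum.inr i) g -
            pderiv (Sum.inl i) g * pderiv (Sum.inr i) f)).support,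
      (∑ i : Fin n, m (Sum.inr i)) + 2 ≤ degYb f + degYb g) := by
  classical
  constructor
  · -- part (i)
    intro m hm
    have h0 : (0 : ℕ) ∈ Finset.range (f.totalDegree + 1) := by simp
    have hE : wickc c f g - f * g
        = ∑ k ∈ (Finset.range (f.totalDegree + 1)).erase 0, wickTermc c k f g := by
      rw [wickc, ← Finset.add_sum_erase _ _ h0, wickTerm_zero]
      abel
    rw [hE] at hm
    obtain ⟨k, hk, hmk⟩ := Finset.mem_biUnion.mp (support_sum hm)
    have hk1 : 1 ≤ k := Nat.one_le_iff_ne_zero.mpr (Finset.ne_of_mem_erase hk)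
    have hw := wt_wickTerm hmk
    show wt m + 1 ≤ degYb f + degYb g
    omega
  · -- part (ii)
    intro m hm
    set N := max f.totalDegree g.totalDegree with hN
    have hfg : wickc c f g = ∑ k ∈ Finset.range (N + 2), wickTermc c k f g := by
      refine Finset.sum_subset (Finset.range_subset_range.mpr (by omega)) ?_
      intro k _ hk
      rw [Finset.mem_range] at hk
      exact wickTerm_eq_zero g (by omega)
    have hgf : wickc c g f = ∑ k ∈ Finset.range (N + 2), wickTermc c k g f := by
      refine Finset.sum_subset (Finset.range_subset_range.mpr (by omega)) ?_
      intro k _ hk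
      rw [Finset.mem_range] at hk
      exact wickTerm_eq_zero f (by omega)
    have h0 : (0 : ℕ) ∈ Finset.range (N + 2) := by simp
    have h1 : (1 : ℕ) ∈ (Finset.range (N + 2)).erase 0 := by
      simp [Finset.mem_erase, Finset.mem_range]
    have hsplit : ∀ p q : A n,
        ∑ k ∈ Finset.range (N + 2), wickTermc c k p q
          = wickTermc c 0 p q + (wickTermc c 1 p q +
              ∑ k ∈ ((Finset.range (N + 2)).erase 0).erase 1, wickTermc c k p q) := by
      intro p q
      rw [← Finset.add_sum_erase _ _ h0, ← Finset.add_sum_erase _ _ h1]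
    have hE : wickc c f g - wickc c g f -
        c • ∑ i : Fin n,
          (pderiv (Sum.inl i) f * pderiv (Sum.inr i) g -
            pderiv (Sum.inl i) g * pderiv (Sum.inr i) f)
        = ∑ k ∈ ((Finset.range (N + 2)).erase 0).erase 1,
            (wickTermc c k f g - wickTermc c k g f) := by
      rw [hfg, hgf, hsplit, hsplit, wickTerm_zero, wickTerm_zero, wickTerm_one, wickTerm_one,
        Finset.sum_sub_distrib, Finset.sum_sub_distrib, smul_sub, mul_comm g f]
      abel
    rw [hE] at hm
    obtain ⟨k, hk, hmk⟩ := Finset.mem_biUnion.mp (support_sum hm)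
    have hk2 : 2 ≤ k := by
      have h1' : k ≠ 1 := Finset.ne_of_mem_erase hk
      have h0' : k ≠ 0 := Finset.ne_of_mem_erase (Finset.mem_of_mem_erase hk)
      omega
    have hw : wt m + k ≤ degYb f + degYb g := by
      have hsub := support_sub _ (wickTermc c k f g) (wickTermc c k g f)
      rcases Finset.mem_union.mp (hsub hmk) with h | h
      · exact wt_wickTerm h
      · have := wt_wickTerm h
        omega
    show wt m + 2 ≤ degYb f + degYb g
    omega


end Stmt8
end

section
/- The Bargmann–Fock action is a module action of the Wick algebra: for all f, g ∈ A[ħ] and all s ∈ F[ħ], one has f ⊛ (g ⊛ s) = (f ⋆ g) ⊛ s, and 1 ⊛ s = s. -/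
/-!
STATEMENT 9: The Bargmann–Fock action is a module action of the Wick algebra:
for all f, g ∈ A[ħ] and all s ∈ F[ħ], one has f ⊛ (g ⊛ s) = (f ⋆ g) ⊛ s, and
1 ⊛ s = s.  Here F[ħ] = ℂ[z¹,…,zⁿ][ħ] and the action is determined on
monomials by (y^a ȳ^b) ⊛ s = (−ħ)^{|b|} ∂^{|b|}(z^a·s)/∂z^b, extended
ℂ[ħ]-bilinearly.
-/

namespace Stmt9

open MvPolynomial

/-- Variables: `Sum.inl (Sum.inl i)` is `yⁱ`, `Sum.inl (Sum.inr i)` is `ȳⁱ`,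
and `Sum.inr ()` is the formal variable `ħ`. -/
abbrev V (n : ℕ) : Type := (Fin n ⊕ Fin n) ⊕ Unit

/-- `A[ħ] = ℂ[y¹,…,yⁿ,ȳ¹,…,ȳⁿ][ħ]`. -/
abbrev W (n : ℕ) : Type := MvPolynomial (V n) ℂ

/-- `A = ℂ[y¹,…,yⁿ,ȳ¹,…,ȳⁿ]` (no `ħ`); `Sum.inl i` is `yⁱ`, `Sum.inr i` is `ȳⁱ`. -/
abbrev A (n : ℕ) : Type := MvPolynomial (Fin n ⊕ Fin n) ℂ

/-- The variable `ħ`. -/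
noncomputable def hbar (n : ℕ) : W n := X (Sum.inr ())

/-- The variable `yⁱ`. -/
def yv {n : ℕ} (i : Fin n) : V n := Sum.inl (Sum.inl i)

/-- The variable `ȳⁱ`. -/
def yb {n : ℕ} (i : Fin n) : V n := Sum.inl (Sum.inr i)

/-- The canonical inclusion `A → A[ħ]`. -/
noncomputable def emb {n : ℕ} : A n →ₐ[ℂ] W n := rename Sum.inl

/-- Iterated partial derivative along a tuple of variables. -/
noncomputable def iterD {n k : ℕ} (vs : Fin k → V n) (f : W n) : W n :=
  (List.ofFn vs).foldr (fun v acc => pderiv v acc) f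

/-- The `k`-th term `(1/k!) Σ_{i₁,…,i_k} (∂ᵏf/∂y^{i₁}⋯∂y^{i_k})·(∂ᵏg/∂ȳ^{i₁}⋯∂ȳ^{i_k})`
in the Wick product. -/
noncomputable def wickTerm {n : ℕ} (k : ℕ) (f g : W n) : W n :=
  ((k.factorial : ℂ))⁻¹ •
    ∑ t : Fin k → Fin n,
      iterD (fun j => yv (t j)) f * iterD (fun j => yb (t j)) g

/-- The fiberwise Wick product `f ⋆ g = Σ_{k≥0} ħᵏ · (k-th term)`.  The sum is
finite: the `k`-fold `y`-derivative of `f` vanishes once `k > totalDegree f`,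
so truncating the range at `totalDegree f + 1` loses nothing. -/
noncomputable def wick {n : ℕ} (f g : W n) : W n :=
  ∑ k ∈ Finset.range (f.totalDegree + 1), hbar n ^ k * wickTerm k f g

/-- `F[ħ] = ℂ[z¹,…,zⁿ][ħ]`; `Sum.inl i` is `zⁱ` and `Sum.inr ()` is `ħ`. -/
abbrev Fz (n : ℕ) : Type := MvPolynomial (Fin n ⊕ Unit) ℂ

/-- The iterated partial derivative `∂^{|b|}/∂z^b` for a multi-index `b`. -/
noncomputable def dz {n : ℕ} (b : Fin n → ℕ) (s : Fz n) : Fz n :=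
  (List.finRange n).foldr (fun i t => (fun u => pderiv (Sum.inl i) u)^[b i] t) s

/-- The Bargmann–Fock action of `A[ħ]` on `F[ħ]`: the monomial `ħ^m y^a ȳ^b`
acts on `s` by `ħ^m (−ħ)^{|b|} ∂^{|b|}(z^a·s)/∂z^b`, extended ℂ-linearly. -/
noncomputable def bf {n : ℕ} (f : W n) (s : Fz n) : Fz n :=
  ∑ m ∈ f.support,
    (C (coeff m f) * (X (Sum.inr ()) : Fz n) ^ m (Sum.inr ()) *
        (-(X (Sum.inr ()) : Fz n)) ^ (∑ i : Fin n, m (yb i))) *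
      dz (fun i => m (yb i))
        ((∏ i : Fin n, (X (Sum.inl i) : Fz n) ^ m (yv i)) * s)

section Aux

variable {n : ℕ}

/-- Partial derivatives commute. -/
theorem pderiv_comm' {σ : Type*} (i j : σ) (f : MvPolynomial σ ℂ) :
    pderiv i (pderiv j f) = pderiv j (pderiv i f) := by
  classical
  induction f using MvPolynomial.induction_on with
  | C a => simp [pderiv_C]
  | add p q hp hq => simp [map_add, hp, hq]
  | mul_X p v hp =>
      simp only [pderiv_mul, map_add, pderiv_mul, hp]
      have h1 : pderiv j (X v : MvPolynomial σ ℂ) = if v = j then 1 else 0 := by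
        split <;> simp_all [pderiv_X_self, pderiv_X_of_ne]
      have h2 : pderiv i (X v : MvPolynomial σ ℂ) = if v = i then 1 else 0 := by
        split <;> simp_all [pderiv_X_self, pderiv_X_of_ne]
      split_ifs at h1 h2 <;> simp [h1, h2, pderiv_C] <;> ring

end Aux
section DZ

variable {n : ℕ}

/-- Foldr form of `dz` over an arbitrary list. -/
noncomputable def dzl (l : List (Fin n)) (b : Fin n → ℕ) (s : Fz n) : Fz n :=
  l.foldr (fun i t => (fun u => pderiv (Sum.inl i) u)^[b i] t) s

theorem dz_eq_dzl (b : Fin n → ℕ) (s : Fz n) : dz b s = dzl (List.finRange n) b s := rfl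

theorem iter_pderiv_comm {σ : Type*} (v w : σ) (k : ℕ) (s : MvPolynomial σ ℂ) :
    (fun u => pderiv v u)^[k] (pderiv w s) = pderiv w ((fun u => pderiv v u)^[k] s) := by
  induction k generalizing s with
  | zero => rfl
  | succ k ih =>
      rw [Function.iterate_succ_apply, Function.iterate_succ_apply]
      show (fun u => pderiv v u)^[k] (pderiv v (pderiv w s)) = _
      rw [pderiv_comm' v w s, ih (pderiv v s)]

theorem dzl_pderiv (l : List (Fin n)) (b : Fin n → ℕ) (i : Fin n) (s : Fz n) :
    dzl l b (pderiv (Sum.inl i) s) = pderiv (Sum.inl i) (dzl l b s) := by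
  induction l with
  | nil => rfl
  | cons j tl ih => simp only [dzl, List.foldr_cons, dzl] at ih ⊢; rw [ih, iter_pderiv_comm]

theorem dzl_add (l : List (Fin n)) (b : Fin n → ℕ) (s t : Fz n) :
    dzl l b (s + t) = dzl l b s + dzl l b t := by
  induction l generalizing s t with
  | nil => rfl
  | cons j tl ih =>
      simp only [dzl, List.foldr_cons] at ih ⊢
      rw [ih]
      generalize dzl tl b s = u; generalize dzl tl b t = v
      induction (b j) with
      | zero => simp
      | succ k ihk => simp only [Function.iterate_succ_apply', ihk, map_add]

theorem dzl_zero (l : List (Fin n)) (b : Fin n → ℕ) : dzl l b (0 : Fz n) = 0 := by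
  have := dzl_add l b 0 0
  simpa using this.symm

theorem dzl_C_mul (l : List (Fin n)) (b : Fin n → ℕ) (c : ℂ) (s : Fz n) :
    dzl l b (C c * s) = C c * dzl l b s := by
  induction l generalizing s with
  | nil => rfl
  | cons j tl ih =>
      simp only [dzl, List.foldr_cons] at ih ⊢
      rw [ih]
      generalize dzl tl b s = u
      induction (b j) with
      | zero => simp
      | succ k ihk => simp only [Function.iterate_succ_apply', ihk, pderiv_C_mul]

theorem dzl_hbar_mul (l : List (Fin n)) (b : Fin n → ℕ) (s : Fz n) :
    dzl l b ((X (Sum.inr ()) : Fz n) * s) = X (Sum.inr ()) * dzl l b s := by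
  induction l generalizing s with
  | nil => rfl
  | cons j tl ih =>
      simp only [dzl, List.foldr_cons] at ih ⊢
      rw [ih]
      generalize dzl tl b s = u
      induction (b j) with
      | zero => simp
      | succ k ihk =>
          simp only [Function.iterate_succ_apply', ihk, pderiv_mul]
          rw [pderiv_X_of_ne (by simp)]
          ring

theorem dzl_congr (l : List (Fin n)) {b b' : Fin n → ℕ} (h : ∀ j ∈ l, b j = b' j) (s : Fz n) :
    dzl l b s = dzl l b' s := by
  induction l with
  | nil => rfl
  | cons j tl ih =>
      simp only [dzl, List.foldr_cons]
      rw [show (List.foldr (fun i t => (fun u => pderiv (Sum.inl i) u)^[b i] t) s tl) = dzl tl b s from rfl,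
         show (List.foldr (fun i t => (fun u => pderiv (Sum.inl i) u)^[b' i] t) s tl) = dzl tl b' s from rfl,
         ih (fun j hj => h j (List.mem_cons_of_mem _ hj)), h j List.mem_cons_self]

theorem dzl_succ (l : List (Fin n)) (hl : l.Nodup) {b b' : Fin n → ℕ} (i : Fin n)
    (hi : i ∈ l) (hb : ∀ j, b' j = b j + if j = i then 1 else 0) (s : Fz n) :
    dzl l b' s = pderiv (Sum.inl i) (dzl l b s) := by
  induction l with
  | nil => simp at hi
  | cons j tl ih =>
      rcases List.mem_cons.mp hi with h | h
      · subst h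
        have hj : i ∉ tl := (List.nodup_cons.mp hl).1
        simp only [dzl, List.foldr_cons]
        rw [show (List.foldr (fun i t => (fun u => pderiv (Sum.inl i) u)^[b' i] t) s tl) = dzl tl b' s from rfl,
           show (List.foldr (fun i t => (fun u => pderiv (Sum.inl i) u)^[b i] t) s tl) = dzl tl b s from rfl]
        rw [dzl_congr tl (fun j hj' => by rw [hb j, if_neg (by rintro rfl; exact hj hj'), add_zero]) s]
        rw [hb i, if_pos rfl, Function.iterate_succ_apply']
      · have hji : j ≠ i := by rintro rfl; exact (List.nodup_cons.mp hl).1 h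
        simp only [dzl, List.foldr_cons]
        rw [show (List.foldr (fun i t => (fun u => pderiv (Sum.inl i) u)^[b' i] t) s tl) = dzl tl b' s from rfl,
           show (List.foldr (fun i t => (fun u => pderiv (Sum.inl i) u)^[b i] t) s tl) = dzl tl b s from rfl]
        rw [ih (List.nodup_cons.mp hl).2 h, hb j, if_neg hji, add_zero, iter_pderiv_comm]

theorem dz_succ {b b' : Fin n → ℕ} (i : Fin n)
    (hb : ∀ j, b' j = b j + if j = i then 1 else 0) (s : Fz n) :
    dz b' s = pderiv (Sum.inl i) (dz b s) := by
  rw [dz_eq_dzl, dz_eq_dzl]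
  exact dzl_succ _ (List.nodup_finRange n) i (List.mem_finRange i) hb s

theorem dz_add (b : Fin n → ℕ) (s t : Fz n) : dz b (s + t) = dz b s + dz b t := dzl_add _ b s t
theorem dz_zero (b : Fin n → ℕ) : dz b (0 : Fz n) = 0 := dzl_zero _ b
theorem dz_C_mul (b : Fin n → ℕ) (c : ℂ) (s : Fz n) : dz b (C c * s) = C c * dz b s := dzl_C_mul _ b c s
theorem dz_hbar_mul (b : Fin n → ℕ) (s : Fz n) :
    dz b ((X (Sum.inr ()) : Fz n) * s) = X (Sum.inr ()) * dz b s := dzl_hbar_mul _ b s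
theorem dz_pderiv (b : Fin n → ℕ) (i : Fin n) (s : Fz n) :
    dz b (pderiv (Sum.inl i) s) = pderiv (Sum.inl i) (dz b s) := dzl_pderiv _ b i s

end DZ
section BF

variable {n : ℕ}

/-- `z^a`. -/
noncomputable def zpow (a : Fin n → ℕ) : Fz n := ∏ j, (X (Sum.inl j) : Fz n) ^ a j

/-- The `ħ`-prefactor of a monomial. -/
noncomputable def pref (m : V n →₀ ℕ) : Fz n :=
  (X (Sum.inr ()) : Fz n) ^ m (Sum.inr ()) *
    (-(X (Sum.inr ()) : Fz n)) ^ (∑ i : Fin n, m (yb i))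

/-- The per-monomial term of `bf`. -/
noncomputable def bfT (m : V n →₀ ℕ) (c : ℂ) (s : Fz n) : Fz n :=
  (C c * pref m) * dz (fun i => m (yb i)) (zpow (fun i => m (yv i)) * s)

theorem bf_eq (f : W n) (s : Fz n) : bf f s = ∑ m ∈ f.support, bfT m (coeff m f) s := by
  unfold bf bfT pref zpow
  simp only [mul_assoc]

theorem bfT_zero (m : V n →₀ ℕ) (s : Fz n) : bfT m 0 s = 0 := by simp [bfT]

theorem bfT_add (m : V n →₀ ℕ) (c d : ℂ) (s : Fz n) :
    bfT m (c + d) s = bfT m c s + bfT m d s := by simp [bfT, map_add]; ring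

theorem bf_eq_superset (f : W n) (s : Fz n) {T : Finset (V n →₀ ℕ)} (h : f.support ⊆ T) :
    bf f s = ∑ m ∈ T, bfT m (coeff m f) s := by
  rw [bf_eq]
  refine Finset.sum_subset h fun m _ hm => ?_
  rw [notMem_support_iff.mp hm, bfT_zero]

theorem bf_add_left (f g : W n) (s : Fz n) : bf (f + g) s = bf f s + bf g s := by
  rw [bf_eq_superset (f + g) s (Finset.Subset.trans (support_add) (Finset.Subset.refl _)),
      bf_eq_superset f s (Finset.subset_union_left (s₂ := g.support)),
      bf_eq_superset g s (Finset.subset_union_right (s₁ := f.support)), ← Finset.sum_add_distrib]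
  exact Finset.sum_congr rfl fun m _ => by rw [coeff_add, bfT_add]

theorem bf_monomial (m : V n →₀ ℕ) (c : ℂ) (s : Fz n) : bf (monomial m c) s = bfT m c s := by
  rcases eq_or_ne c 0 with rfl | hc
  · simp [bf_eq, bfT_zero]
  · rw [bf_eq, support_monomial, if_neg hc, Finset.sum_singleton, coeff_monomial, if_pos rfl]

theorem bf_C_mul_left (c : ℂ) (f : W n) (s : Fz n) : bf (C c * f) s = C c * bf f s := by
  have hsub : (C c * f).support ⊆ f.support := by
    rw [← smul_eq_C_mul]; exact support_smul
  rw [bf_eq_superset (C c * f) s hsub, bf_eq, Finset.mul_sum]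
  refine Finset.sum_congr rfl fun m _ => ?_
  rw [coeff_C_mul]
  unfold bfT
  rw [map_mul]
  ring

theorem bf_add_right (f : W n) (s t : Fz n) : bf f (s + t) = bf f s + bf f t := by
  rw [bf_eq, bf_eq, bf_eq, ← Finset.sum_add_distrib]
  refine Finset.sum_congr rfl fun m _ => ?_
  unfold bfT
  rw [mul_add, dz_add, mul_add]

theorem bf_zero_right (f : W n) : bf f (0 : Fz n) = 0 := by
  rw [bf_eq]
  refine Finset.sum_eq_zero fun m _ => ?_
  unfold bfT
  rw [mul_zero, dz_zero, mul_zero]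

theorem bf_neg_right (f : W n) (s : Fz n) : bf f (-s) = -bf f s := by
  have h := bf_add_right f s (-s)
  rw [add_neg_cancel, bf_zero_right] at h
  linear_combination -h

theorem bf_C_mul_right (f : W n) (c : ℂ) (s : Fz n) : bf f (C c * s) = C c * bf f s := by
  rw [bf_eq, bf_eq, Finset.mul_sum]
  refine Finset.sum_congr rfl fun m _ => ?_
  unfold bfT
  rw [show zpow (fun i => m (yv i)) * (C c * s) = C c * (zpow (fun i => m (yv i)) * s) by ring,
      dz_C_mul]
  ring

theorem bf_hbar_right (f : W n) (s : Fz n) :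
    bf f ((X (Sum.inr ()) : Fz n) * s) = X (Sum.inr ()) * bf f s := by
  rw [bf_eq, bf_eq, Finset.mul_sum]
  refine Finset.sum_congr rfl fun m _ => ?_
  unfold bfT
  rw [show zpow (fun i => m (yv i)) * ((X (Sum.inr ()) : Fz n) * s)
        = (X (Sum.inr ()) : Fz n) * (zpow (fun i => m (yv i)) * s) by ring,
      dz_hbar_mul]
  ring

theorem dzl_zero_exp (l : List (Fin n)) (s : Fz n) : dzl l (fun _ => 0) s = s := by
  induction l with
  | nil => rfl
  | cons j tl ih => simpa [dzl, List.foldr_cons] using ih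

theorem dz_zero_exp {b : Fin n → ℕ} (hb : ∀ j, b j = 0) (s : Fz n) : dz b s = s := by
  rw [dz_eq_dzl, dzl_congr _ (fun j _ => hb j), dzl_zero_exp]

theorem bf_one (s : Fz n) : bf (1 : W n) s = s := by
  have h1 : (1 : W n) = monomial 0 1 := by simp [monomial_zero']
  rw [h1, bf_monomial]
  unfold bfT pref zpow
  simp [dz_zero_exp (fun j => rfl)]

end BF
section Mono

variable {n : ℕ}

theorem dz_neg (b : Fin n → ℕ) (s : Fz n) : dz b (-s) = -dz b s := by
  have h := dz_add b s (-s)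
  rw [add_neg_cancel, dz_zero] at h
  linear_combination -h

theorem dz_sub (b : Fin n → ℕ) (s t : Fz n) : dz b (s - t) = dz b s - dz b t := by
  rw [sub_eq_add_neg, dz_add, dz_neg, sub_eq_add_neg]

theorem zpow_eq_monomial (a : Fin n → ℕ) :
    zpow a = monomial (∑ j, Finsupp.single (Sum.inl j : Fin n ⊕ Unit) (a j)) (1 : ℂ) := by
  unfold zpow
  rw [monomial_sum_one (Finset.univ : Finset (Fin n))
    (fun j => Finsupp.single (Sum.inl j : Fin n ⊕ Unit) (a j))]
  exact Finset.prod_congr rfl fun j _ => X_pow_eq_monomial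

theorem mu_apply_inl (a : Fin n → ℕ) (i : Fin n) :
    (∑ j, Finsupp.single (Sum.inl j : Fin n ⊕ Unit) (a j)) (Sum.inl i) = a i := by
  rw [Finsupp.finset_sum_apply]
  simp [Finsupp.single_apply, Finset.sum_ite_eq']

theorem mu_apply_inr (a : Fin n → ℕ) (u : Unit) :
    (∑ j, Finsupp.single (Sum.inl j : Fin n ⊕ Unit) (a j)) (Sum.inr u) = 0 := by
  rw [Finsupp.finset_sum_apply]
  simp [Finsupp.single_apply]

theorem pderiv_zpow (a : Fin n → ℕ) (i0 : Fin n) :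
    pderiv (Sum.inl i0) (zpow a)
      = C ((a i0 : ℂ)) * zpow (fun j => a j - if j = i0 then 1 else 0) := by
  have hmu : (∑ j, Finsupp.single (Sum.inl j : Fin n ⊕ Unit) (a j))
        - Finsupp.single (Sum.inl i0) 1
      = ∑ j, Finsupp.single (Sum.inl j : Fin n ⊕ Unit) (a j - if j = i0 then 1 else 0) := by
    refine Finsupp.ext fun x => ?_
    cases x with
    | inl i =>
        rw [Finsupp.tsub_apply, mu_apply_inl, mu_apply_inl, Finsupp.single_apply]
        by_cases h : i = i0
        · subst h; simp
        · simp [h, Ne.symm h, Sum.inl.injEq]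
    | inr u =>
        rw [Finsupp.tsub_apply, mu_apply_inr, mu_apply_inr, Finsupp.single_apply]
        simp
  rw [zpow_eq_monomial a, pderiv_monomial,
      zpow_eq_monomial (fun j => a j - if j = i0 then 1 else 0), C_mul_monomial,
      mul_one, one_mul, mu_apply_inl, hmu]

/-- `∂P = 0` for the prefactor. -/
theorem pderiv_pref (m : V n →₀ ℕ) (i0 : Fin n) : pderiv (Sum.inl i0) (pref m) = 0 := by
  unfold pref
  rw [pderiv_mul, pderiv_pow, pderiv_pow, pderiv_X_of_ne (by simp), map_neg,
      pderiv_X_of_ne (by simp)]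
  ring

theorem pderiv_CcPref (m : V n →₀ ℕ) (c : ℂ) (i0 : Fin n) (u : Fz n) :
    pderiv (Sum.inl i0) (C c * pref m * u) = C c * pref m * pderiv (Sum.inl i0) u := by
  rw [pderiv_mul, pderiv_mul, pderiv_pref, pderiv_C]
  ring

end Mono
section Llemmas

variable {n : ℕ}

theorem X_mul_monomial' (v : V n) (m : V n →₀ ℕ) (c : ℂ) :
    (X v : W n) * monomial m c = monomial (Finsupp.single v 1 + m) c := by
  rw [monomial_single_add, pow_one]

theorem zpow_add_ite (a : Fin n → ℕ) (i0 : Fin n) :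
    zpow (fun j => a j + if j = i0 then 1 else 0) = zpow a * X (Sum.inl i0) := by
  unfold zpow
  have : ∀ j : Fin n, (X (Sum.inl j) : Fz n) ^ (a j + if j = i0 then 1 else 0)
      = X (Sum.inl j) ^ a j * (if j = i0 then X (Sum.inl j) else 1) := by
    intro j
    by_cases h : j = i0 <;> simp [h, pow_add]
  rw [Finset.prod_congr rfl fun j _ => this j, Finset.prod_mul_distrib,
      Finset.prod_ite_eq' Finset.univ i0 (fun j => (X (Sum.inl j) : Fz n)),
      if_pos (Finset.mem_univ i0)]

/-- L2 -/
theorem bf_hbar_left (f : W n) (s : Fz n) :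
    bf ((X (Sum.inr ()) : W n) * f) s = X (Sum.inr ()) * bf f s := by
  induction f using MvPolynomial.induction_on' with
  | add p q hp hq => rw [mul_add, bf_add_left, bf_add_left, hp, hq, mul_add]
  | monomial m c =>
      rw [X_mul_monomial', bf_monomial, bf_monomial]
      unfold bfT pref
      have hh : ((Finsupp.single (Sum.inr ()) 1 + m : V n →₀ ℕ)) (Sum.inr ()) = m (Sum.inr ()) + 1 := by
        simp [Finsupp.add_apply]; ring
      have hb : ∀ i : Fin n, ((Finsupp.single (Sum.inr ()) 1 + m : V n →₀ ℕ)) (yb i) = m (yb i) := by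
        intro i; simp [yb, Finsupp.add_apply, Finsupp.single_apply]
      have ha : ∀ i : Fin n, ((Finsupp.single (Sum.inr ()) 1 + m : V n →₀ ℕ)) (yv i) = m (yv i) := by
        intro i; simp [yv, Finsupp.add_apply, Finsupp.single_apply]
      simp only [hh, hb, ha, pow_succ]
      ring

/-- L3 -/
theorem bf_y_left (i0 : Fin n) (f : W n) (s : Fz n) :
    bf ((X (yv i0) : W n) * f) s = bf f ((X (Sum.inl i0) : Fz n) * s) := by
  induction f using MvPolynomial.induction_on' with
  | add p q hp hq => rw [mul_add, bf_add_left, hp, hq, bf_add_left]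
  | monomial m c =>
      rw [X_mul_monomial', bf_monomial, bf_monomial]
      unfold bfT pref
      have hh : ((Finsupp.single (yv i0) 1 + m : V n →₀ ℕ)) (Sum.inr ()) = m (Sum.inr ()) := by
        simp [yv, Finsupp.add_apply, Finsupp.single_apply]
      have hb : ∀ i : Fin n, ((Finsupp.single (yv i0) 1 + m : V n →₀ ℕ)) (yb i) = m (yb i) := by
        intro i; simp [yv, yb, Finsupp.add_apply, Finsupp.single_apply]
      have ha : ∀ i : Fin n, ((Finsupp.single (yv i0) 1 + m : V n →₀ ℕ)) (yv i)
          = m (yv i) + (if i = i0 then 1 else 0) := by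
        intro i
        simp only [yv, Finsupp.add_apply, Finsupp.single_apply, Sum.inl.injEq]
        by_cases h : i = i0
        · simp [h, add_comm]
        · simp [h, Ne.symm h]
      simp only [hh, hb, ha]
      rw [zpow_add_ite]
      rw [show zpow (fun i => m (yv i)) * X (Sum.inl i0) * s
            = zpow (fun i => m (yv i)) * ((X (Sum.inl i0) : Fz n) * s) by ring]

/-- L4 -/
theorem bf_yb_left (i0 : Fin n) (f : W n) (s : Fz n) :
    bf ((X (yb i0) : W n) * f) s
      = -((X (Sum.inr ()) : Fz n) * pderiv (Sum.inl i0) (bf f s)) := by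
  induction f using MvPolynomial.induction_on' with
  | add p q hp hq => rw [mul_add, bf_add_left, hp, hq, bf_add_left, map_add]; ring
  | monomial m c =>
      rw [X_mul_monomial', bf_monomial, bf_monomial]
      unfold bfT pref
      have hh : ((Finsupp.single (yb i0) 1 + m : V n →₀ ℕ)) (Sum.inr ()) = m (Sum.inr ()) := by
        simp [yb, Finsupp.add_apply, Finsupp.single_apply]
      have ha : ∀ i : Fin n, ((Finsupp.single (yb i0) 1 + m : V n →₀ ℕ)) (yv i) = m (yv i) := by
        intro i; simp [yv, yb, Finsupp.add_apply, Finsupp.single_apply]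
      have hb : ∀ i : Fin n, ((Finsupp.single (yb i0) 1 + m : V n →₀ ℕ)) (yb i)
          = m (yb i) + (if i = i0 then 1 else 0) := by
        intro i
        simp only [yb, Finsupp.add_apply, Finsupp.single_apply, Sum.inl.injEq, Sum.inr.injEq]
        by_cases h : i = i0
        · simp [h, add_comm]
        · simp [h, Ne.symm h]
      simp only [hh, ha, hb]
      rw [show (∑ i : Fin n, (m (yb i) + if i = i0 then 1 else 0))
            = (∑ i : Fin n, m (yb i)) + 1 by
          rw [Finset.sum_add_distrib]; simp [Finset.sum_ite_eq']]
      rw [dz_succ i0 (fun j => rfl)]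
      rw [show pderiv (Sum.inl i0)
            (C c * ((X (Sum.inr ()) : Fz n) ^ m (Sum.inr ())
              * (-(X (Sum.inr ()) : Fz n)) ^ (∑ i : Fin n, m (yb i)))
              * dz (fun i => m (yb i)) (zpow (fun i => m (yv i)) * s))
          = C c * ((X (Sum.inr ()) : Fz n) ^ m (Sum.inr ())
              * (-(X (Sum.inr ()) : Fz n)) ^ (∑ i : Fin n, m (yb i)))
              * pderiv (Sum.inl i0) (dz (fun i => m (yb i)) (zpow (fun i => m (yv i)) * s))
        from pderiv_CcPref m c i0 _]
      rw [pow_succ]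
      ring

end Llemmas
section B4

variable {n : ℕ}

/-- B4: commuting `bf f` past `ħ ∂ᵢ`. -/
theorem bf_comm_deriv (i0 : Fin n) (f : W n) (s : Fz n) :
    bf f ((X (Sum.inr ()) : Fz n) * pderiv (Sum.inl i0) s)
      = X (Sum.inr ()) * pderiv (Sum.inl i0) (bf f s)
        - X (Sum.inr ()) * bf (pderiv (yv i0) f) s := by
  induction f using MvPolynomial.induction_on' with
  | add p q hp hq => rw [bf_add_left, hp, hq, map_add, bf_add_left, map_add, bf_add_left]; ring
  | monomial m c =>
      rw [bf_monomial, pderiv_monomial, bf_monomial, bf_monomial]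
      unfold bfT
      set a : Fin n → ℕ := fun i => m (yv i) with ha
      set b : Fin n → ℕ := fun i => m (yb i) with hb
      -- exponents of m - single (yv i0) 1
      have h2 : (fun i => ((m - Finsupp.single (yv i0) 1 : V n →₀ ℕ)) (yb i)) = b := by
        funext i
        simp [yv, yb, Finsupp.tsub_apply, Finsupp.single_apply, hb]
      have h3 : (fun i => ((m - Finsupp.single (yv i0) 1 : V n →₀ ℕ)) (yv i))
          = fun j => a j - if j = i0 then 1 else 0 := by
        funext i
        simp only [yv, Finsupp.tsub_apply, Finsupp.single_apply, Sum.inl.injEq, ha]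
        by_cases h : i = i0
        · simp [h]
        · simp [h, Ne.symm h]
      have h4 : pref (m - Finsupp.single (yv i0) 1) = pref m := by
        unfold pref
        have : ((m - Finsupp.single (yv i0) 1 : V n →₀ ℕ)) (Sum.inr ()) = m (Sum.inr ()) := by
          simp [yv, Finsupp.tsub_apply, Finsupp.single_apply]
        rw [this]
        congr 1
        refine congrArg _ (Finset.sum_congr rfl fun i _ => ?_)
        simp [yv, yb, Finsupp.tsub_apply, Finsupp.single_apply]
      rw [h2, h3, h4]
      -- LHS computation
      rw [show zpow a * ((X (Sum.inr ()) : Fz n) * pderiv (Sum.inl i0) s)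
            = (X (Sum.inr ()) : Fz n) * (zpow a * pderiv (Sum.inl i0) s) by ring,
          dz_hbar_mul,
          show zpow a * pderiv (Sum.inl i0) s
            = pderiv (Sum.inl i0) (zpow a * s) - pderiv (Sum.inl i0) (zpow a) * s by
              rw [pderiv_mul]; ring,
          dz_sub, dz_pderiv, pderiv_zpow,
          show C ((a i0 : ℂ)) * zpow (fun j => a j - if j = i0 then 1 else 0) * s
            = C ((a i0 : ℂ)) * (zpow (fun j => a j - if j = i0 then 1 else 0) * s) by ring,
          dz_C_mul]
      -- RHS: pull the prefactor through the derivative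
      rw [pderiv_CcPref m c i0 (dz b (zpow a * s)), map_mul]
      push_cast
      ring

end B4
section SK

variable {n : ℕ}

/-- List version of `iterD`. -/
noncomputable def iterDL (l : List (V n)) (f : W n) : W n := l.foldr (fun v acc => pderiv v acc) f

theorem iterD_eq_iterDL {k : ℕ} (vs : Fin k → V n) (f : W n) :
    iterD vs f = iterDL (List.ofFn vs) f := rfl

theorem iterDL_add (l : List (V n)) (f g : W n) : iterDL l (f + g) = iterDL l f + iterDL l g := by
  induction l generalizing f g with
  | nil => rfl
  | cons v tl ih => simp only [iterDL, List.foldr_cons] at ih ⊢; rw [ih, map_add]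

theorem iterDL_zero (l : List (V n)) : iterDL l (0 : W n) = 0 := by
  induction l with
  | nil => rfl
  | cons v tl ih => simp only [iterDL, List.foldr_cons] at ih ⊢; rw [ih, map_zero]

theorem iterDL_pderiv (l : List (V n)) (v : V n) (f : W n) :
    iterDL l (pderiv v f) = pderiv v (iterDL l f) := by
  induction l generalizing f with
  | nil => rfl
  | cons w tl ih => simp only [iterDL, List.foldr_cons] at ih ⊢; rw [ih, pderiv_comm' w v]

theorem iterD_zero_tuple (vs : Fin 0 → V n) (f : W n) : iterD vs f = f := by
  rw [iterD_eq_iterDL, List.ofFn_zero]; rfl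

theorem iterD_succ {k : ℕ} (vs : Fin (k + 1) → V n) (f : W n) :
    iterD vs f = iterD (fun j => vs (Fin.succ j)) (pderiv (vs 0) f) := by
  rw [iterD_eq_iterDL, List.ofFn_succ, iterD_eq_iterDL]
  show pderiv (vs 0) (iterDL _ f) = _
  rw [iterDL_pderiv]

theorem iterD_add {k : ℕ} (vs : Fin k → V n) (f g : W n) :
    iterD vs (f + g) = iterD vs f + iterD vs g := iterDL_add _ f g

theorem iterD_zero {k : ℕ} (vs : Fin k → V n) : iterD vs (0 : W n) = 0 := iterDL_zero _

/-- The un-normalized `k`-th Wick sum. -/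
noncomputable def Sk (k : ℕ) (f g : W n) : W n :=
  ∑ t : Fin k → Fin n, iterD (fun j => yv (t j)) f * iterD (fun j => yb (t j)) g

theorem wickTerm_eq (k : ℕ) (f g : W n) : wickTerm k f g = ((k.factorial : ℂ))⁻¹ • Sk k f g := rfl

theorem Sk_zero (f g : W n) : Sk 0 f g = f * g := by
  unfold Sk
  letI : Unique (Fin 0 → Fin n) := ⟨⟨fun i => i.elim0⟩, fun a => funext fun i => i.elim0⟩
  rw [Finset.univ_unique, Finset.sum_singleton, iterD_zero_tuple, iterD_zero_tuple]

theorem Sk_rec (k : ℕ) (f g : W n) :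
    Sk (k + 1) f g = ∑ i : Fin n, Sk k (pderiv (yv i) f) (pderiv (yb i) g) := by
  unfold Sk
  rw [Fintype.sum_equiv ((Fin.consEquiv (fun _ : Fin (k+1) => Fin n)).symm)
    (fun t => iterD (fun j => yv (t j)) f * iterD (fun j => yb (t j)) g)
    (fun p => iterD (fun j => yv (p.2 j)) (pderiv (yv p.1) f) *
      iterD (fun j => yb (p.2 j)) (pderiv (yb p.1) g))
    (fun t => by
      show iterD (fun j => yv (t j)) f * iterD (fun j => yb (t j)) g
          = iterD (fun j => yv (t j.succ)) (pderiv (yv (t 0)) f)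
            * iterD (fun j => yb (t j.succ)) (pderiv (yb (t 0)) g)
      rw [iterD_succ (fun j => yv (t j)) f, iterD_succ (fun j => yb (t j)) g])]
  rw [Fintype.sum_prod_type]

theorem Sk_add_left (k : ℕ) (f f' g : W n) : Sk k (f + f') g = Sk k f g + Sk k f' g := by
  unfold Sk
  rw [← Finset.sum_add_distrib]
  exact Finset.sum_congr rfl fun t _ => by rw [iterD_add, add_mul]

theorem Sk_add_right (k : ℕ) (f g g' : W n) : Sk k f (g + g') = Sk k f g + Sk k f g' := by
  unfold Sk
  rw [← Finset.sum_add_distrib]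
  exact Finset.sum_congr rfl fun t _ => by rw [iterD_add, mul_add]

theorem Sk_zero_left (k : ℕ) (g : W n) : Sk k (0 : W n) g = 0 := by
  unfold Sk
  exact Finset.sum_eq_zero fun t _ => by rw [iterD_zero, zero_mul]

theorem Sk_zero_right (k : ℕ) (f : W n) : Sk k f (0 : W n) = 0 := by
  unfold Sk
  exact Finset.sum_eq_zero fun t _ => by rw [iterD_zero, mul_zero]

/-- `pderiv` strictly decreases total degree (or yields `0`). -/
theorem pderiv_totalDegree (v : V n) (f : W n) :
    pderiv v f = 0 ∨ (pderiv v f).totalDegree < f.totalDegree := by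
  by_cases hd : f.totalDegree = 0
  · left
    have hall := (totalDegree_eq_zero_iff (V n) f).mp hd
    conv_lhs => rw [f.as_sum]
    rw [map_sum]
    refine Finset.sum_eq_zero fun m hm => ?_
    rw [pderiv_monomial, hall m hm v]
    simp
  · right
    have hdpos : 0 < f.totalDegree := Nat.pos_of_ne_zero hd
    have : (pderiv v f) = ∑ m ∈ f.support, pderiv v (monomial m (coeff m f)) := by
      conv_lhs => rw [f.as_sum]
      rw [map_sum]
    rw [this]
    refine lt_of_le_of_lt (totalDegree_finset_sum _ _) ?_
    rw [Finset.sup_lt_iff (by simpa using hdpos)]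
    intro m hm
    by_cases hmv : m v = 0
    · rw [pderiv_monomial, hmv]
      simp [hdpos]
    · have hle : Finsupp.single v 1 ≤ m :=
        Finsupp.single_le_iff.mpr (Nat.one_le_iff_ne_zero.mpr hmv)
      have hm' : (m - Finsupp.single v 1) + Finsupp.single v 1 = m := tsub_add_cancel_of_le hle
      have hsum : (m.sum fun _ e => e) = ((m - Finsupp.single v 1).sum fun _ e => e) + 1 := by
        conv_lhs => rw [← hm']
        rw [Finsupp.sum_add_index' (fun _ => rfl) (fun _ _ _ => rfl)]
        rw [Finsupp.sum_single_index rfl]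
      have h1 : (pderiv v (monomial m (coeff m f))).totalDegree
          ≤ (m - Finsupp.single v 1).sum fun _ e => e := by
        rw [pderiv_monomial]
        exact totalDegree_monomial_le _ _
      have h2 : ((m - Finsupp.single v 1).sum fun _ e => e) < f.totalDegree := by
        have h3 := le_totalDegree hm
        omega
      exact lt_of_le_of_lt h1 h2

end SK
section WickLemmas

variable {n : ℕ}

theorem Sk_vanish : ∀ (k : ℕ) (f g : W n), f.totalDegree < k → Sk k f g = 0 := by
  intro k
  induction k with
  | zero => intro f g h; omega
  | succ k ih =>
      intro f g h
      rw [Sk_rec]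
      refine Finset.sum_eq_zero fun i _ => ?_
      rcases pderiv_totalDegree (yv i) f with h0 | hlt
      · rw [h0, Sk_zero_left]
      · exact ih _ _ (by omega)

theorem wt_zero (f g : W n) : wickTerm 0 f g = f * g := by
  rw [wickTerm_eq, Sk_zero]; simp

theorem wt_vanish {k : ℕ} {f : W n} (g : W n) (h : f.totalDegree < k) : wickTerm k f g = 0 := by
  rw [wickTerm_eq, Sk_vanish _ _ _ h, smul_zero]

theorem wt_zero_left (k : ℕ) (g : W n) : wickTerm k (0 : W n) g = 0 := by
  rw [wickTerm_eq, Sk_zero_left, smul_zero]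

theorem wt_add_right (k : ℕ) (f g g' : W n) :
    wickTerm k f (g + g') = wickTerm k f g + wickTerm k f g' := by
  rw [wickTerm_eq, wickTerm_eq, wickTerm_eq, Sk_add_right, smul_add]

theorem wick_flex {N : ℕ} {f : W n} (g : W n) (h : f.totalDegree < N) :
    wick f g = ∑ k ∈ Finset.range N, hbar n ^ k * wickTerm k f g := by
  unfold wick
  refine Finset.sum_subset (Finset.range_subset_range.mpr (by omega)) fun k _ hk => ?_
  rw [wt_vanish g (by simpa using hk), mul_zero]

theorem wick_zero_left (g : W n) : wick (0 : W n) g = 0 := by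
  unfold wick
  exact Finset.sum_eq_zero fun k _ => by rw [wt_zero_left, mul_zero]

theorem wick_add_right (f g g' : W n) : wick f (g + g') = wick f g + wick f g' := by
  unfold wick
  rw [← Finset.sum_add_distrib]
  exact Finset.sum_congr rfl fun k _ => by rw [wt_add_right, mul_add]

theorem wick_C_right (f : W n) (c : ℂ) : wick f (C c) = C c * f := by
  unfold wick
  rw [Finset.sum_eq_single_of_mem 0 (Finset.mem_range.mpr (by omega))]
  · rw [pow_zero, one_mul, wt_zero]; ring
  · intro k _ hk
    obtain ⟨k', rfl⟩ := Nat.exists_eq_succ_of_ne_zero hk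
    rw [wickTerm_eq, Sk_rec]
    rw [Finset.sum_eq_zero fun i _ => by rw [pderiv_C, Sk_zero_right]]
    rw [smul_zero, mul_zero]

/-- `Sk` passes multiplication by a non-`ȳ` variable through the second slot. -/
theorem Sk_pass (w : V n) (hw : ∀ i : Fin n, w ≠ yb i) :
    ∀ (k : ℕ) (f g : W n), Sk k f ((X w : W n) * g) = X w * Sk k f g := by
  intro k
  induction k with
  | zero => intro f g; rw [Sk_zero, Sk_zero]; ring
  | succ k ih =>
      intro f g
      rw [Sk_rec, Sk_rec, Finset.mul_sum]
      refine Finset.sum_congr rfl fun i _ => ?_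
      rw [pderiv_mul, pderiv_X_of_ne (hw i), zero_mul, zero_add, ih]

theorem wt_pass (w : V n) (hw : ∀ i : Fin n, w ≠ yb i) (k : ℕ) (f g : W n) :
    wickTerm k f ((X w : W n) * g) = X w * wickTerm k f g := by
  rw [wickTerm_eq, wickTerm_eq, Sk_pass w hw, mul_smul_comm]

theorem wick_pass (w : V n) (hw : ∀ i : Fin n, w ≠ yb i) (f g : W n) :
    wick f ((X w : W n) * g) = X w * wick f g := by
  unfold wick
  rw [Finset.mul_sum]
  exact Finset.sum_congr rfl fun k _ => by rw [wt_pass w hw]; ring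

theorem pderiv_yb_X (i i0 : Fin n) :
    pderiv (yb i) (X (yb i0) : W n) = if i = i0 then 1 else 0 := by
  by_cases h : i = i0
  · subst h; rw [if_pos rfl, pderiv_X_self]
  · rw [if_neg h]
    exact pderiv_X_of_ne (by simp [yb, Ne.symm h])

theorem Sk_yb_succ (i0 : Fin n) :
    ∀ (k : ℕ) (f g : W n), Sk (k + 1) f ((X (yb i0) : W n) * g)
      = X (yb i0) * Sk (k + 1) f g + (((k + 1 : ℕ)) : W n) * Sk k (pderiv (yv i0) f) g := by
  intro k
  induction k with
  | zero =>
      intro f g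
      rw [Sk_rec, Sk_rec]
      have hterm : ∀ i ∈ Finset.univ, Sk 0 (pderiv (yv i) f) (pderiv (yb i) ((X (yb i0) : W n) * g))
          = (if i = i0 then Sk 0 (pderiv (yv i0) f) g else 0)
            + X (yb i0) * Sk 0 (pderiv (yv i) f) (pderiv (yb i) g) := by
        intro i _
        rw [pderiv_mul, pderiv_yb_X, Sk_add_right]
        by_cases h : i = i0
        · subst h
          rw [if_pos rfl, if_pos rfl, one_mul]
          simp only [Sk_zero]
          ring
        · rw [if_neg h, if_neg h, zero_mul, Sk_zero_right, zero_add]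
          simp only [Sk_zero]
          ring
      rw [Finset.sum_congr rfl hterm, Finset.sum_add_distrib,
          Finset.sum_ite_eq' Finset.univ i0 (fun _ => Sk 0 (pderiv (yv i0) f) g),
          if_pos (Finset.mem_univ i0), ← Finset.mul_sum]
      push_cast
      ring
  | succ k ih =>
      intro f g
      rw [Sk_rec, Sk_rec]
      have hterm : ∀ i ∈ Finset.univ,
          Sk (k + 1) (pderiv (yv i) f) (pderiv (yb i) ((X (yb i0) : W n) * g))
          = (if i = i0 then Sk (k + 1) (pderiv (yv i0) f) g else 0)
            + (X (yb i0) * Sk (k + 1) (pderiv (yv i) f) (pderiv (yb i) g)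
               + (((k + 1 : ℕ)) : W n)
                  * Sk k (pderiv (yv i) (pderiv (yv i0) f)) (pderiv (yb i) g)) := by
        intro i _
        rw [pderiv_mul, pderiv_yb_X, Sk_add_right, ih, pderiv_comm' (yv i0) (yv i) f]
        by_cases h : i = i0
        · subst h
          rw [if_pos rfl, if_pos rfl, one_mul]
        · rw [if_neg h, if_neg h, zero_mul, Sk_zero_right, zero_add]
      rw [Finset.sum_congr rfl hterm, Finset.sum_add_distrib, Finset.sum_add_distrib,
          Finset.sum_ite_eq' Finset.univ i0 (fun _ => Sk (k + 1) (pderiv (yv i0) f) g),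
          if_pos (Finset.mem_univ i0), ← Finset.mul_sum, ← Finset.mul_sum, ← Sk_rec, ← Sk_rec]
      push_cast
      ring

theorem wt_yb_succ (i0 : Fin n) (k : ℕ) (f g : W n) :
    wickTerm (k + 1) f ((X (yb i0) : W n) * g)
      = X (yb i0) * wickTerm (k + 1) f g + wickTerm k (pderiv (yv i0) f) g := by
  rw [wickTerm_eq, wickTerm_eq, wickTerm_eq, Sk_yb_succ, smul_add, mul_smul_comm]
  congr 1
  have hcast : (((k + 1 : ℕ)) : W n) = C (((k + 1 : ℕ) : ℂ)) := by
    push_cast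
    simp [map_add, map_one]
  rw [hcast, ← smul_eq_C_mul, smul_smul]
  have h2 : ((k : ℂ) + 1) ≠ 0 := by
    have := Nat.cast_add_one_ne_zero (R := ℂ) k
    simpa using this
  have h1 : (((k + 1).factorial : ℂ))⁻¹ * ((k + 1 : ℕ) : ℂ) = ((k.factorial : ℂ))⁻¹ := by
    rw [Nat.factorial_succ]
    push_cast
    rw [mul_inv]
    field_simp
  rw [h1]

theorem wick_yb_right (i0 : Fin n) (f g : W n) :
    wick f ((X (yb i0) : W n) * g)
      = X (yb i0) * wick f g + X (Sum.inr ()) * wick (pderiv (yv i0) f) g := by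
  have hsum : wick (pderiv (yv i0) f) g
      = ∑ k ∈ Finset.range f.totalDegree, hbar n ^ k * wickTerm k (pderiv (yv i0) f) g := by
    rcases pderiv_totalDegree (yv i0) f with h0 | hlt
    · rw [h0, wick_zero_left]
      exact (Finset.sum_eq_zero fun k _ => by rw [wt_zero_left, mul_zero]).symm
    · exact wick_flex g hlt
  have hL : wick f ((X (yb i0) : W n) * g)
      = ∑ k ∈ Finset.range f.totalDegree,
          hbar n ^ (k + 1) * (X (yb i0) * wickTerm (k + 1) f g
            + wickTerm k (pderiv (yv i0) f) g)
        + f * ((X (yb i0) : W n) * g) := by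
    unfold wick
    rw [Finset.sum_range_succ'
      (fun k => hbar n ^ k * wickTerm k f ((X (yb i0) : W n) * g)) _]
    simp only [pow_zero, one_mul, wt_zero]
    rw [Finset.sum_congr rfl (fun k _ => by rw [wt_yb_succ i0 k f g])]
  have hR1 : wick f g
      = ∑ k ∈ Finset.range f.totalDegree, hbar n ^ (k + 1) * wickTerm (k + 1) f g + f * g := by
    unfold wick
    rw [Finset.sum_range_succ' (fun k => hbar n ^ k * wickTerm k f g) _]
    simp only [pow_zero, one_mul, wt_zero]
  rw [hL, hR1, hsum]
  have hre : ∀ k ∈ Finset.range f.totalDegree,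
      hbar n ^ (k + 1) * (X (yb i0) * wickTerm (k + 1) f g
          + wickTerm k (pderiv (yv i0) f) g)
      = X (yb i0) * (hbar n ^ (k + 1) * wickTerm (k + 1) f g)
        + hbar n * (hbar n ^ k * wickTerm k (pderiv (yv i0) f) g) := by
    intro k _
    ring
  rw [Finset.sum_congr rfl hre, Finset.sum_add_distrib, ← Finset.mul_sum, ← Finset.mul_sum]
  rw [show (X (Sum.inr ()) : W n) = hbar n from rfl]
  ring

end WickLemmas
section Main

variable {n : ℕ}

theorem bf_C (c : ℂ) (s : Fz n) : bf (C c : W n) s = C c * s := by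
  rw [show (C c : W n) = monomial 0 c from C_apply, bf_monomial]
  unfold bfT pref
  simp only [Finsupp.coe_zero, Pi.zero_apply, pow_zero, mul_one, one_mul, Finset.sum_const_zero]
  rw [dz_zero_exp (fun j => rfl), show zpow (fun _ : Fin n => 0) = (1 : Fz n) by
        unfold zpow; simp, one_mul]

theorem bf_module (g : W n) : ∀ (f : W n) (s : Fz n),
    bf f (bf g s) = bf (wick f g) s := by
  induction g using MvPolynomial.induction_on with
  | C c =>
      intro f s
      rw [bf_C, bf_C_mul_right, wick_C_right, bf_C_mul_left]
  | add p q hp hq =>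
      intro f s
      rw [bf_add_left, bf_add_right, hp f s, hq f s, wick_add_right, bf_add_left]
  | mul_X p v hp =>
      intro f s
      rw [mul_comm p (X v)]
      obtain (i | i) | u := v
      · -- y case
        show bf f (bf ((X (yv i) : W n) * p) s) = bf (wick f ((X (yv i) : W n) * p)) s
        rw [bf_y_left, hp f ((X (Sum.inl i) : Fz n) * s), ← bf_y_left i (wick f p) s,
            ← wick_pass (yv i) (fun j => by simp [yv, yb])]
      · -- ȳ case
        show bf f (bf ((X (yb i) : W n) * p) s) = bf (wick f ((X (yb i) : W n) * p)) s
        rw [bf_yb_left, bf_neg_right, bf_comm_deriv, hp f s, hp (pderiv (yv i) f) s,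
            wick_yb_right, bf_add_left, bf_yb_left i (wick f p) s,
            bf_hbar_left (wick (pderiv (yv i) f) p) s]
        ring
      · -- ħ case
        show bf f (bf ((X (Sum.inr ()) : W n) * p) s) = bf (wick f ((X (Sum.inr ()) : W n) * p)) s
        rw [bf_hbar_left, bf_hbar_right, hp f s, ← bf_hbar_left,
            wick_pass (Sum.inr ()) (fun j => by simp [yb])]

end Main

theorem bargmann_fock_module (n : ℕ) (hn : 1 ≤ n) (f g : W n) (s : Fz n) :
    bf f (bf g s) = bf (wick f g) s ∧ bf (1 : W n) s = s :=
  ⟨bf_module g f s, bf_one s⟩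

end Stmt9
end

section
/- Under the Bargmann–Fock representation, the ȳ-degree filtration corresponds to the order filtration of differential operators: for any c ∈ ℂ, if f ∈ A has ȳ-degree at most N, then for all polynomials h₀, h₁, …, h_N ∈ ℂ[z¹,…,zⁿ] the iterated commutator [⋯[[Φ_c(f), M_{h₀}], M_{h₁}], …, M_{h_N}] is the zero operator on ℂ[z¹,…,zⁿ], where M_h denotes the multiplication operator s ↦ h·s; i.e., Φ_c(f) is a differential operator of order at most N in the Grothendieck sense. -/
/-!
STATEMENT 12: Under the Bargmann–Fock representation, the ȳ-degree filtration
corresponds to the order filtration of differential operators: for any c ∈ ℂ,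
if f ∈ A has ȳ-degree at most N, then for all polynomials h₀, …, h_N the
iterated commutator [⋯[[Φ_c(f), M_{h₀}], M_{h₁}], …, M_{h_N}] is the zero
operator on ℂ[z¹,…,zⁿ], where M_h is the multiplication operator; i.e.,
Φ_c(f) is a differential operator of order at most N in the Grothendieck sense.
-/

namespace Stmt12

open MvPolynomial

/-- `A = ℂ[y¹,…,yⁿ,ȳ¹,…,ȳⁿ]`; `Sum.inl i` is `yⁱ` and `Sum.inr i` is `ȳⁱ`. -/
abbrev A (n : ℕ) : Type := MvPolynomial (Fin n ⊕ Fin n) ℂ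

/-- `ℂ[z¹,…,zⁿ]`. -/
abbrev Pz (n : ℕ) : Type := MvPolynomial (Fin n) ℂ

/-- The iterated partial derivative `∂^{|b|}/∂z^b` for a multi-index `b`. -/
noncomputable def dOp {n : ℕ} (b : Fin n → ℕ) : Module.End ℂ (Pz n) :=
  (List.finRange n).foldr
    (fun i L => ((pderiv i : Derivation ℂ (Pz n) (Pz n)).toLinearMap ^ b i) * L) 1

/-- The level-`c` Bargmann–Fock representation: the monomial `y^a ȳ^b` acts on
`s` by `(−c)^{|b|} ∂^{|b|}(z^a·s)/∂z^b`, extended ℂ-linearly in `f`. -/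
noncomputable def Phi {n : ℕ} (c : ℂ) (f : A n) : Module.End ℂ (Pz n) :=
  ∑ m ∈ f.support,
    (coeff m f * (-c) ^ (∑ i : Fin n, m (Sum.inr i))) •
      (dOp (fun i => m (Sum.inr i)) *
        LinearMap.mulLeft ℂ (∏ i : Fin n, (X i : Pz n) ^ m (Sum.inl i)))

noncomputable def ad {n : ℕ} (p : Pz n) (T : Module.End ℂ (Pz n)) : Module.End ℂ (Pz n) :=
  T * LinearMap.mulLeft ℂ p - LinearMap.mulLeft ℂ p * T

def IsOrd {n : ℕ} : ℕ → Module.End ℂ (Pz n) → Prop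
  | 0, T => ∀ p, ad p T = 0
  | (k+1), T => ∀ p, IsOrd k (ad p T)

theorem ad_zero {n : ℕ} (p : Pz n) : ad p (0 : Module.End ℂ (Pz n)) = 0 := by
  simp [ad]

theorem ad_add {n : ℕ} (p : Pz n) (S T : Module.End ℂ (Pz n)) :
    ad p (S + T) = ad p S + ad p T := by
  simp only [ad, add_mul, mul_add]; abel

theorem ad_smul {n : ℕ} (p : Pz n) (a : ℂ) (T : Module.End ℂ (Pz n)) :
    ad p (a • T) = a • ad p T := by
  simp [ad, smul_sub]

theorem ad_mul {n : ℕ} (p : Pz n) (S T : Module.End ℂ (Pz n)) :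
    ad p (S * T) = ad p S * T + S * ad p T := by
  simp only [ad, sub_mul, mul_sub, mul_assoc]; abel

theorem IsOrd_zero {n : ℕ} : ∀ k, IsOrd k (0 : Module.End ℂ (Pz n)) := by
  intro k; induction k with
  | zero => intro p; exact ad_zero p
  | succ k ih => intro p; rw [show IsOrd k (ad p (0:Module.End ℂ (Pz n))) = IsOrd k 0 from by rw [ad_zero]]; exact ih

theorem IsOrd_add {n : ℕ} : ∀ (k : ℕ) (S T : Module.End ℂ (Pz n)),
    IsOrd k S → IsOrd k T → IsOrd k (S + T) := by
  intro k; induction k with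
  | zero => intro S T hS hT p; rw [ad_add, hS p, hT p, add_zero]
  | succ k ih => intro S T hS hT p; rw [ad_add]; exact ih _ _ (hS p) (hT p)

theorem IsOrd_smul {n : ℕ} : ∀ (k : ℕ) (a : ℂ) (T : Module.End ℂ (Pz n)),
    IsOrd k T → IsOrd k (a • T) := by
  intro k; induction k with
  | zero => intro a T hT p; rw [ad_smul, hT p, smul_zero]
  | succ k ih => intro a T hT p; rw [ad_smul]; exact ih _ _ (hT p)

theorem IsOrd_succ {n : ℕ} : ∀ (k : ℕ) (T : Module.End ℂ (Pz n)),
    IsOrd k T → IsOrd (k+1) T := by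
  intro k; induction k with
  | zero => intro T hT p; rw [hT p]; exact IsOrd_zero 0
  | succ k ih => intro T hT p; exact ih _ (hT p)

theorem IsOrd_mono {n : ℕ} {k m : ℕ} (hkm : k ≤ m) (T : Module.End ℂ (Pz n))
    (hT : IsOrd k T) : IsOrd m T := by
  induction m with
  | zero => exact (Nat.le_zero.mp hkm) ▸ hT
  | succ m ih =>
    rcases Nat.lt_or_ge k (m+1) with h | h
    · exact IsOrd_succ m T (ih (Nat.lt_succ_iff.mp h))
    · exact (Nat.le_antisymm hkm h) ▸ hT

theorem IsOrd_mul {n : ℕ} : ∀ (k p q : ℕ) (S T : Module.End ℂ (Pz n)), p + q = k →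
    IsOrd p S → IsOrd q T → IsOrd k (S * T) := by
  intro k
  induction k with
  | zero =>
    intro p q S T hpq hS hT
    obtain ⟨rfl, rfl⟩ : p = 0 ∧ q = 0 := by omega
    intro h
    rw [ad_mul, hS h, hT h, zero_mul, mul_zero, add_zero]
  | succ k ih =>
    intro p q S T hpq hS hT h
    show IsOrd k (ad h (S * T))
    rw [ad_mul]
    apply IsOrd_add
    · cases p with
      | zero => rw [hS h, zero_mul]; exact IsOrd_zero k
      | succ p' => exact ih p' q _ _ (by omega) (hS h) hT
    · cases q with
      | zero => rw [hT h, mul_zero]; exact IsOrd_zero k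
      | succ q' => exact ih p q' _ _ (by omega) hS (hT h)

theorem IsOrd_one {n : ℕ} : IsOrd 0 (1 : Module.End ℂ (Pz n)) := by
  intro p; simp [ad]

theorem IsOrd_mulLeft {n : ℕ} (g : Pz n) : IsOrd 0 (LinearMap.mulLeft ℂ g) := by
  intro p
  apply LinearMap.ext; intro s
  simp [ad, Module.End.mul_apply]
  ring

theorem ad_pderiv {n : ℕ} (i : Fin n) (p : Pz n) :
    ad p ((pderiv i : Derivation ℂ (Pz n) (Pz n)).toLinearMap) =
      LinearMap.mulLeft ℂ (pderiv i p) := by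
  apply LinearMap.ext; intro s
  simp [ad, Module.End.mul_apply, pderiv_mul]
  ring

theorem IsOrd_pderiv {n : ℕ} (i : Fin n) :
    IsOrd 1 ((pderiv i : Derivation ℂ (Pz n) (Pz n)).toLinearMap) := by
  intro p; rw [ad_pderiv]; exact IsOrd_mulLeft _

theorem IsOrd_pderiv_pow {n : ℕ} (i : Fin n) (b : ℕ) :
    IsOrd b (((pderiv i : Derivation ℂ (Pz n) (Pz n)).toLinearMap) ^ b) := by
  induction b with
  | zero => rw [pow_zero]; exact IsOrd_one
  | succ b ih =>
    rw [pow_succ]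
    exact IsOrd_mul (b+1) b 1 _ _ rfl ih (IsOrd_pderiv i)


theorem IsOrd_foldr {n : ℕ} (b : Fin n → ℕ) : ∀ (l : List (Fin n)),
    IsOrd (l.map b).sum
      (l.foldr (fun i L =>
        ((pderiv i : Derivation ℂ (Pz n) (Pz n)).toLinearMap ^ b i) * L) 1) := by
  intro l
  induction l with
  | nil => exact IsOrd_one
  | cons i l ih =>
    simp only [List.foldr_cons, List.map_cons, List.sum_cons]
    exact IsOrd_mul _ (b i) (l.map b).sum _ _ rfl (IsOrd_pderiv_pow i (b i)) ih

theorem IsOrd_dOp {n : ℕ} (b : Fin n → ℕ) : IsOrd (∑ i : Fin n, b i) (dOp b) := by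
  rw [Fin.sum_univ_def]
  exact IsOrd_foldr b (List.finRange n)

theorem IsOrd_Phi {n : ℕ} (c : ℂ) (N : ℕ) (f : A n)
    (hf : ∀ m ∈ f.support, ∑ i : Fin n, m (Sum.inr i) ≤ N) :
    IsOrd N (Phi c f) := by
  unfold Phi
  apply Finset.sum_induction _ (IsOrd N) (IsOrd_add N) (IsOrd_zero N)
  intro m hm
  apply IsOrd_smul
  exact IsOrd_mul N N 0 _ _ rfl
    (IsOrd_mono (hf m hm) _ (IsOrd_dOp _)) (IsOrd_mulLeft _)

theorem foldl_ad_eq_zero {n : ℕ} : ∀ (N : ℕ) (T : Module.End ℂ (Pz n)) (l : List (Pz n)),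
    l.length = N + 1 → IsOrd N T →
    l.foldl (fun T p => T * LinearMap.mulLeft ℂ p - LinearMap.mulLeft ℂ p * T) T = 0 := by
  intro N
  induction N with
  | zero =>
    intro T l hl hT
    match l, hl with
    | [p], _ => simpa [ad] using hT p
  | succ N ih =>
    intro T l hl hT
    match l, hl with
    | p :: l', hl =>
      simp only [List.foldl_cons]
      exact ih (ad p T) l' (by simpa using hl) (hT p)


theorem bargmann_fock_order_filtration (n : ℕ) (hn : 1 ≤ n) (c : ℂ) (N : ℕ)
    (f : A n) (hf : ∀ m ∈ f.support, ∑ i : Fin n, m (Sum.inr i) ≤ N)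
    (h : Fin (N + 1) → Pz n) :
    (List.ofFn h).foldl
      (fun T p => T * LinearMap.mulLeft ℂ p - LinearMap.mulLeft ℂ p * T)
      (Phi c f) = 0 :=
  foldl_ad_eq_zero N (Phi c f) (List.ofFn h) List.length_ofFn (IsOrd_Phi c N f hf)

end Stmt12
end

section
/- The operator e^S intertwines the Moyal–Weyl and Wick products: the ℂ[ħ]-linear map e^S := Σ_{m≥0} S^m/m! on A[ħ], where S = (ħ/2)·Σ_{i=1}^{n} ∂²/∂yⁱ∂ȳⁱ (the sum defining e^S is finite on each polynomial since S lowers total degree in the variables y, ȳ by 2), is a linear bijection with inverse e^{−S}, and it satisfies e^S(f ⋆_MW g) = e^S(f) ⋆ e^S(g) for all f, g ∈ A[ħ]; hence (A[ħ], ⋆_MW) and (A[ħ], ⋆) are isomorphic algebras. -/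
/-!
STATEMENT 13: The operator e^S intertwines the Moyal–Weyl and Wick products:
the ℂ[ħ]-linear map e^S := Σ_{m≥0} S^m/m! on A[ħ], where
S = (ħ/2)·Σᵢ ∂²/∂yⁱ∂ȳⁱ (the sum defining e^S is finite on each polynomial
since S lowers total degree in y, ȳ by 2), is a linear bijection with inverse
e^{−S}, and it satisfies e^S(f ⋆_MW g) = e^S(f) ⋆ e^S(g) for all f, g ∈ A[ħ];
hence (A[ħ], ⋆_MW) and (A[ħ], ⋆) are isomorphic algebras.
-/

namespace Stmt13

open MvPolynomial

/-- Variables: `Sum.inl (Sum.inl i)` is `yⁱ`, `Sum.inl (Sum.inr i)` is `ȳⁱ`,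
and `Sum.inr ()` is the formal variable `ħ`. -/
abbrev V (n : ℕ) : Type := (Fin n ⊕ Fin n) ⊕ Unit

/-- `A[ħ] = ℂ[y¹,…,yⁿ,ȳ¹,…,ȳⁿ][ħ]`. -/
abbrev W (n : ℕ) : Type := MvPolynomial (V n) ℂ

/-- `A = ℂ[y¹,…,yⁿ,ȳ¹,…,ȳⁿ]` (no `ħ`); `Sum.inl i` is `yⁱ`, `Sum.inr i` is `ȳⁱ`. -/
abbrev A (n : ℕ) : Type := MvPolynomial (Fin n ⊕ Fin n) ℂ

/-- The variable `ħ`. -/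
noncomputable def hbar (n : ℕ) : W n := X (Sum.inr ())

/-- The variable `yⁱ`. -/
def yv {n : ℕ} (i : Fin n) : V n := Sum.inl (Sum.inl i)

/-- The variable `ȳⁱ`. -/
def yb {n : ℕ} (i : Fin n) : V n := Sum.inl (Sum.inr i)

/-- The canonical inclusion `A → A[ħ]`. -/
noncomputable def emb {n : ℕ} : A n →ₐ[ℂ] W n := rename Sum.inl

/-- Iterated partial derivative along a tuple of variables. -/
noncomputable def iterD {n k : ℕ} (vs : Fin k → V n) (f : W n) : W n :=
  (List.ofFn vs).foldr (fun v acc => pderiv v acc) f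

/-- The `k`-th term `(1/k!) Σ_{i₁,…,i_k} (∂ᵏf/∂y^{i₁}⋯∂y^{i_k})·(∂ᵏg/∂ȳ^{i₁}⋯∂ȳ^{i_k})`
in the Wick product. -/
noncomputable def wickTerm {n : ℕ} (k : ℕ) (f g : W n) : W n :=
  ((k.factorial : ℂ))⁻¹ •
    ∑ t : Fin k → Fin n,
      iterD (fun j => yv (t j)) f * iterD (fun j => yb (t j)) g

/-- The fiberwise Wick product `f ⋆ g = Σ_{k≥0} ħᵏ · (k-th term)`.  The sum is
finite: the `k`-fold `y`-derivative of `f` vanishes once `k > totalDegree f`,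
so truncating the range at `totalDegree f + 1` loses nothing. -/
noncomputable def wick {n : ℕ} (f g : W n) : W n :=
  ∑ k ∈ Finset.range (f.totalDegree + 1), hbar n ^ k * wickTerm k f g

/-- The operator `S = (ħ/2)·Σᵢ ∂²/∂yⁱ∂ȳⁱ`. -/
noncomputable def Sop {n : ℕ} (f : W n) : W n :=
  (2 : ℂ)⁻¹ • (hbar n * ∑ i : Fin n, pderiv (yv i) (pderiv (yb i) f))

/-- `e^S = Σ_{m≥0} S^m/m!`; the sum is finite on each polynomial since `S`
lowers the total degree in the variables `y, ȳ` by 2, so `S^m f = 0` once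
`m > totalDegree f` and truncating the range loses nothing. -/
noncomputable def expS {n : ℕ} (f : W n) : W n :=
  ∑ m ∈ Finset.range (f.totalDegree + 1), ((m.factorial : ℂ))⁻¹ • Sop^[m] f

/-- `e^{−S} = Σ_{m≥0} (−S)^m/m!`. -/
noncomputable def expNegS {n : ℕ} (f : W n) : W n :=
  ∑ m ∈ Finset.range (f.totalDegree + 1),
    ((-1 : ℂ) ^ m * ((m.factorial : ℂ))⁻¹) • Sop^[m] f

/-- The `(k,l)`-term of the Moyal–Weyl product:
`(1/(k!·l!)) Σ_{i₁,…,i_k} Σ_{j₁,…,j_l}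
(∂^{k+l}f/∂y^{i}⋯∂ȳ^{j}⋯)·(∂^{k+l}g/∂ȳ^{i}⋯∂y^{j}⋯)`. -/
noncomputable def mwTerm {n : ℕ} (k l : ℕ) (f g : W n) : W n :=
  ((k.factorial : ℂ) * (l.factorial : ℂ))⁻¹ •
    ∑ t : Fin k → Fin n, ∑ u : Fin l → Fin n,
      iterD (fun j => yv (t j)) (iterD (fun j => yb (u j)) f) *
        iterD (fun j => yb (t j)) (iterD (fun j => yv (u j)) g)

/-- The Moyal–Weyl product
`f ⋆_MW g = Σ_{k,l≥0} (ħ/2)^{k+l}·(−1)^l·(k,l)-term`; all nonzero terms have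
`k + l ≤ totalDegree f`, so the truncation loses nothing. -/
noncomputable def moyal {n : ℕ} (f g : W n) : W n :=
  ∑ k ∈ Finset.range (f.totalDegree + 1), ∑ l ∈ Finset.range (f.totalDegree + 1),
    ((-1 : ℂ) ^ l) • (((2 : ℂ)⁻¹ • hbar n) ^ (k + l) * mwTerm k l f g)

open MvPolynomial

variable {n : ℕ}

/-- total degree of an exponent vector in the `y, ȳ` variables only -/
def wdeg (s : V n →₀ ℕ) : ℕ := ∑ j : Fin n ⊕ Fin n, s (Sum.inl j)

/-- weight: total degree in the `y, ȳ` variables -/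
noncomputable def wt (f : W n) : ℕ := f.support.sup wdeg

lemma wt_le_iff {f : W n} {d : ℕ} : wt f ≤ d ↔ ∀ s ∈ f.support, wdeg s ≤ d :=
  Finset.sup_le_iff

lemma wdeg_add (s t : V n →₀ ℕ) : wdeg (s + t) = wdeg s + wdeg t := by
  simp [wdeg, Finset.sum_add_distrib]

lemma wt_zero : wt (0 : W n) = 0 := by simp [wt]

lemma wt_add_le {f g : W n} {d : ℕ} (hf : wt f ≤ d) (hg : wt g ≤ d) :
    wt (f + g) ≤ d := by
  rw [wt_le_iff] at *
  intro s hs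
  rcases Finset.mem_union.1 (Finsupp.support_add hs) with h | h
  · exact hf s h
  · exact hg s h

lemma wt_smul_le (c : ℂ) (f : W n) : wt (c • f) ≤ wt f := by
  rw [wt_le_iff]
  intro s hs
  exact Finset.le_sup (Finsupp.support_smul hs)

lemma wt_sum_le {ι : Type*} {s : Finset ι} {g : ι → W n} {d : ℕ}
    (h : ∀ i ∈ s, wt (g i) ≤ d) : wt (∑ i ∈ s, g i) ≤ d := by
  classical
  induction s using Finset.induction_on with
  | empty => simp [wt_zero]
  | @insert a s' hx ih =>
    rw [Finset.sum_insert hx]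
    exact wt_add_le (h a (Finset.mem_insert_self a s'))
      (ih fun i hi => h i (Finset.mem_insert_of_mem hi))

lemma wt_mul_le (f g : W n) : wt (f * g) ≤ wt f + wt g := by
  classical
  rw [wt_le_iff]
  intro s hs
  rcases Finset.mem_add.1 (MvPolynomial.support_mul f g hs) with ⟨a, ha, b, hb, rfl⟩
  rw [wdeg_add]
  exact add_le_add (Finset.le_sup ha) (Finset.le_sup hb)

lemma wt_hbar : wt (hbar n) = 0 := by
  classical
  rw [wt, hbar, support_X]
  simp [wdeg, Finsupp.single_apply]

lemma wt_one : wt (1 : W n) = 0 := by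
  classical
  rw [wt]
  refine le_antisymm ?_ (Nat.zero_le _)
  rw [Finset.sup_le_iff]
  intro s hs
  have h0 : s = 0 := by
    have := Finsupp.mem_support_iff.1 hs
    rw [← MvPolynomial.coeff, MvPolynomial.coeff_one] at this
    by_contra hne
    rw [if_neg (fun h : (0:V n →₀ ℕ) = s => hne h.symm)] at this
    exact this rfl
  simp [h0, wdeg]

lemma wt_C (a : ℂ) : wt (C a : W n) ≤ 0 := by
  classical
  rw [wt_le_iff]
  intro s hs
  have h0 : s = 0 := by
    have := Finsupp.mem_support_iff.1 hs
    rw [← MvPolynomial.coeff, MvPolynomial.coeff_C] at this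
    by_contra hne
    rw [if_neg (fun h : (0:V n →₀ ℕ) = s => hne h.symm)] at this
    exact this rfl
  simp [h0, wdeg]

lemma wt_hbar_pow (m : ℕ) : wt (hbar n ^ m) ≤ 0 := by
  induction m with
  | zero => simp [wt_one]
  | succ m ih =>
    calc wt (hbar n ^ (m + 1)) ≤ wt (hbar n ^ m) + wt (hbar n) := by
          rw [pow_succ]; exact wt_mul_le _ _
    _ ≤ 0 := by rw [wt_hbar]; omega

/-- key support lemma for `pderiv` in a `y`/`ȳ` direction -/
lemma exists_of_mem_support_pderiv (j : Fin n ⊕ Fin n) (f : W n)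
    {s : V n →₀ ℕ} (hs : s ∈ (pderiv (Sum.inl j) f).support) :
    ∃ s' ∈ f.support, wdeg s + 1 ≤ wdeg s' := by
  classical
  have hf : f = ∑ s' ∈ f.support, monomial s' (coeff s' f) :=
    (f.support_sum_monomial_coeff).symm
  rw [hf, map_sum] at hs
  have hs2 := Finsupp.mem_support_iff.1 hs
  -- find a term with nonzero coefficient at s
  have : ∃ s' ∈ f.support,
      MvPolynomial.coeff s (pderiv (Sum.inl j) (monomial s' (coeff s' f))) ≠ 0 := by
    by_contra h
    push_neg at h
    apply hs2
    rw [← MvPolynomial.coeff] at *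
    rw [MvPolynomial.coeff_sum]
    exact Finset.sum_eq_zero h
  obtain ⟨s', hs', hne⟩ := this
  refine ⟨s', hs', ?_⟩
  rw [pderiv_monomial, coeff_monomial] at hne
  by_cases he : s' - Finsupp.single (Sum.inl j) 1 = s
  · have hv : s' (Sum.inl j) ≠ 0 := by
      intro h0
      rw [he] at hne
      simp [h0] at hne
    subst he
    -- wdeg (s' - single v 1) + 1 ≤ wdeg s'
    have h1 : (1 : ℕ) ≤ s' (Sum.inl j) := Nat.one_le_iff_ne_zero.2 hv
    have key : ∀ i : Fin n ⊕ Fin n,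
        (s' - Finsupp.single (Sum.inl j) 1 : V n →₀ ℕ) (Sum.inl i)
          = s' (Sum.inl i) - (if i = j then 1 else 0) := by
      intro i
      rw [Finsupp.tsub_apply, Finsupp.single_apply]
      by_cases hij : i = j
      · subst hij; simp
      · rw [if_neg (fun h : (Sum.inl j : V n) = Sum.inl i => hij (Sum.inl.inj h).symm),
            if_neg hij]
    unfold wdeg
    rw [← Finset.sum_erase_add _ _ (Finset.mem_univ j),
        ← Finset.sum_erase_add _ (fun i => s' (Sum.inl i)) (Finset.mem_univ j)]
    have he1 : ∀ i ∈ Finset.univ.erase j,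
        (s' - Finsupp.single (Sum.inl j) 1 : V n →₀ ℕ) (Sum.inl i) = s' (Sum.inl i) := by
      intro i hi
      rw [key i, if_neg (Finset.mem_erase.1 hi).1]
      omega
    rw [Finset.sum_congr rfl he1, key j, if_pos rfl]
    omega
  · simp [he] at hne

lemma wt_pderiv_le (j : Fin n ⊕ Fin n) (f : W n) {d : ℕ} (h : wt f ≤ d + 1) :
    wt (pderiv (Sum.inl j) f) ≤ d := by
  rw [wt_le_iff]
  intro s hs
  obtain ⟨s', hs', hle⟩ := exists_of_mem_support_pderiv j f hs
  have := (wt_le_iff.1 h) s' hs'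
  omega

lemma pderiv_eq_zero_of_wt (j : Fin n ⊕ Fin n) {f : W n} (h : wt f ≤ 0) :
    pderiv (Sum.inl j) f = 0 := by
  rw [← MvPolynomial.support_eq_empty]
  rw [Finset.eq_empty_iff_forall_notMem]
  intro s hs
  obtain ⟨s', hs', hle⟩ := exists_of_mem_support_pderiv j f hs
  have := (wt_le_iff.1 h) s' hs'
  omega

lemma wt_le_totalDegree (f : W n) : wt f ≤ f.totalDegree := by
  rw [wt_le_iff]
  intro s hs
  refine le_trans ?_ (MvPolynomial.le_totalDegree hs)
  rw [Finsupp.sum_fintype _ _ (fun _ => rfl)]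
  rw [show (∑ v : V n, s v) = (∑ x : Fin n ⊕ Fin n, s (Sum.inl x)) + ∑ u : Unit, s (Sum.inr u)
    from Fintype.sum_sum_type _]
  exact Nat.le_add_right _ _

section Expo

variable {M : Type*} [AddCommGroup M] [Module ℂ M]

/-- truncated exponential of an operator -/
noncomputable def expo (A : Module.End ℂ M) (N : ℕ) (x : M) : M :=
  ∑ m ∈ Finset.range N, ((m.factorial : ℂ))⁻¹ • (A ^ m) x

lemma pow_apply_eq_zero_of_le {A : Module.End ℂ M} {x : M} {N m : ℕ}
    (h : (A ^ N) x = 0) (hm : N ≤ m) : (A ^ m) x = 0 := by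
  obtain ⟨k, rfl⟩ := Nat.exists_eq_add_of_le hm
  rw [add_comm, pow_add, Module.End.mul_apply, h, map_zero]

lemma expo_congr {A : Module.End ℂ M} {x : M} {N : ℕ} (h : (A ^ N) x = 0)
    {N₁ N₂ : ℕ} (h1 : N ≤ N₁) (h2 : N ≤ N₂) : expo A N₁ x = expo A N₂ x := by
  have key : ∀ K, N ≤ K → expo A K x = expo A N x := by
    intro K hK
    refine (Finset.sum_subset (Finset.range_subset_range.2 hK) ?_).symm
    intro m _ hm
    rw [Finset.mem_range, not_lt] at hm
    rw [pow_apply_eq_zero_of_le h hm, smul_zero]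
  rw [key N₁ h1, key N₂ h2]

lemma expo_add_x (A : Module.End ℂ M) (N : ℕ) (x y : M) :
    expo A N (x + y) = expo A N x + expo A N y := by
  simp [expo, map_add, smul_add, Finset.sum_add_distrib]

lemma expo_smul_x (A : Module.End ℂ M) (N : ℕ) (c : ℂ) (x : M) :
    expo A N (c • x) = c • expo A N x := by
  simp only [expo, map_smul, Finset.smul_sum, smul_comm c]

lemma expo_zero_op {N : ℕ} (hN : 1 ≤ N) (x : M) : expo (0 : Module.End ℂ M) N x = x := by
  rw [expo, Finset.sum_eq_single 0]
  · simp
  · intro m _ hm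
    rw [zero_pow hm]
    simp
  · intro h
    exact absurd (Finset.mem_range.2 hN) h

/-- transport of a truncated exponential through an intertwining linear map -/
lemma expo_map {M' : Type*} [AddCommGroup M'] [Module ℂ M']
    (φ : M →ₗ[ℂ] M') {A : Module.End ℂ M} {B : Module.End ℂ M'}
    (h : ∀ z, φ (A z) = B (φ z)) (N : ℕ) (x : M) :
    φ (expo A N x) = expo B N (φ x) := by
  have hpow : ∀ m z, φ ((A ^ m) z) = (B ^ m) (φ z) := by
    intro m
    induction m with
    | zero => simp
    | succ m ih =>
      intro z
      rw [pow_succ, pow_succ, Module.End.mul_apply, Module.End.mul_apply, ih, h]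
  simp [expo, map_sum, map_smul, hpow]

end Expo

section Filtration

variable {M : Type*} [AddCommGroup M] [Module ℂ M]
variable (F : ℕ → Submodule ℂ M)

/-- an operator lowering the filtration by one -/
def IsRed (A : Module.End ℂ M) : Prop := ∀ d, ∀ x ∈ F (d + 1), A x ∈ F d

variable {F}

lemma IsRed.add {A B : Module.End ℂ M} (hA : IsRed F A) (hB : IsRed F B) :
    IsRed F (A + B) := fun d x hx => by
  rw [LinearMap.add_apply]; exact Submodule.add_mem _ (hA d x hx) (hB d x hx)

lemma IsRed.smul {A : Module.End ℂ M} (c : ℂ) (hA : IsRed F A) :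
    IsRed F (c • A) := fun d x hx => by
  rw [LinearMap.smul_apply]; exact Submodule.smul_mem _ _ (hA d x hx)

lemma IsRed.neg {A : Module.End ℂ M} (hA : IsRed F A) : IsRed F (-A) := by
  have := hA.smul (-1 : ℂ)
  rwa [neg_one_smul] at this

variable (hF0 : F 0 = ⊥)
include hF0

lemma IsRed.mul (hmono : Monotone F) {A B : Module.End ℂ M}
    (hA : IsRed F A) (hB : IsRed F B) : IsRed F (A * B) := by
  intro d x hx
  rw [Module.End.mul_apply]
  have hBx := hB d x hx
  cases d with
  | zero =>
    rw [hF0, Submodule.mem_bot] at hBx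
    rw [hBx, map_zero, hF0]
    exact Submodule.zero_mem _
  | succ e =>
    exact hmono (Nat.le_succ e) (hA e _ hBx)

lemma IsRed.pow_mem {A : Module.End ℂ M} (hA : IsRed F A) :
    ∀ (l N : ℕ) (x : M), x ∈ F N → (A ^ l) x ∈ F (N - l) := by
  intro l
  induction l with
  | zero => intro N x hx; simpa using hx
  | succ l ih =>
    intro N x hx
    rw [pow_succ, Module.End.mul_apply]
    cases N with
    | zero =>
      rw [hF0, Submodule.mem_bot] at hx
      rw [hx, map_zero, map_zero]
      exact Submodule.zero_mem _
    | succ e =>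
      have := ih e (A x) (hA e x hx)
      simpa [Nat.succ_sub_succ] using this
omit hF0

lemma IsRed.nilp (hF0 : F 0 = ⊥) {A : Module.End ℂ M} (hA : IsRed F A) {x : M} {N : ℕ}
    (hx : x ∈ F N) : (A ^ N) x = 0 := by
  have := hA.pow_mem hF0 N N x hx
  rwa [Nat.sub_self, hF0, Submodule.mem_bot] at this

/-- the key exp-additivity for commuting filtration-lowering operators -/
lemma expo_add_op (hF0 : F 0 = ⊥) {A B : Module.End ℂ M} (hAB : Commute A B)
    (hA : IsRed F A) (hB : IsRed F B) {x : M} {N : ℕ} (hx : x ∈ F N)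
    {Mb : ℕ} (hM : N ≤ Mb) :
    expo (A + B) Mb x = expo A Mb (expo B Mb x) := by
  classical
  set g : ℕ → ℕ → M := fun k l => (((k.factorial : ℂ))⁻¹ * ((l.factorial : ℂ))⁻¹) •
    (A ^ k) ((B ^ l) x) with hg
  have vanish : ∀ k l, N ≤ k + l → g k l = 0 := by
    intro k l hkl
    have hBl : (B ^ l) x ∈ F (N - l) := hB.pow_mem hF0 l N x hx
    have hz : (A ^ (N - l)) ((B ^ l) x) = 0 := hA.nilp hF0 hBl
    have : (A ^ k) ((B ^ l) x) = 0 := pow_apply_eq_zero_of_le hz (by omega)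
    rw [hg]; simp [this]
  -- RHS = double sum of g
  have hRHS : expo A Mb (expo B Mb x) = ∑ k ∈ Finset.range Mb, ∑ l ∈ Finset.range Mb, g k l := by
    rw [expo]
    refine Finset.sum_congr rfl fun k _ => ?_
    rw [expo, map_sum, Finset.smul_sum]
    refine Finset.sum_congr rfl fun l _ => ?_
    rw [map_smul, smul_smul, hg]
  rw [hRHS]
  -- both sides equal the guarded sum over range N × range N
  have perk : ∀ k, (∑ m ∈ Finset.range N, if k ≤ m then g k (m - k) else 0)
      = ∑ l ∈ Finset.range N, if k + l < N then g k l else 0 := by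
    intro k
    rw [← Finset.sum_filter, ← Finset.sum_filter]
    have h1 : (Finset.range N).filter (fun m => k ≤ m) = Finset.Ico k N := by
      ext m; simp [Finset.mem_range, Finset.mem_Ico]; omega
    have h2 : (Finset.range N).filter (fun l => k + l < N) = Finset.range (N - k) := by
      ext l; simp [Finset.mem_range]; omega
    rw [h1, h2, Finset.sum_Ico_eq_sum_range]
    refine Finset.sum_congr rfl fun l _ => ?_
    congr 1
    omega
  -- RHS reduction
  have hRHS2 : (∑ k ∈ Finset.range Mb, ∑ l ∈ Finset.range Mb, g k l)
      = ∑ k ∈ Finset.range N, ∑ l ∈ Finset.range N, if k + l < N then g k l else 0 := by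
    rw [← Finset.sum_subset (Finset.range_subset_range.2 hM)]
    · refine Finset.sum_congr rfl fun k hk => ?_
      have : ∀ l ∈ Finset.range Mb, g k l = if k + l < N then g k l else 0 := by
        intro l _
        by_cases h : k + l < N
        · rw [if_pos h]
        · rw [if_neg h, vanish k l (by omega)]
      rw [Finset.sum_congr rfl this]
      refine (Finset.sum_subset (Finset.range_subset_range.2 hM) ?_).symm
      intro l _ hl
      rw [Finset.mem_range, not_lt] at hl
      rw [if_neg (by omega)]
    · intro k _ hk
      rw [Finset.mem_range, not_lt] at hk
      exact Finset.sum_eq_zero fun l _ => vanish k l (by omega)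
  rw [hRHS2]
  -- LHS
  rw [expo]
  have hco : ∀ m k : ℕ, k ≤ m → ((m.factorial : ℂ))⁻¹ * (m.choose k : ℂ)
      = ((k.factorial : ℂ))⁻¹ * (((m - k).factorial : ℂ))⁻¹ := by
    intro m k hk
    have h := Nat.choose_mul_factorial_mul_factorial hk
    have hC : (m.choose k : ℂ) * (k.factorial : ℂ) * ((m - k).factorial : ℂ)
        = (m.factorial : ℂ) := by
      exact_mod_cast congrArg (Nat.cast : ℕ → ℂ) h
    have h1 : ((k.factorial : ℂ)) ≠ 0 := Nat.cast_ne_zero.2 (Nat.factorial_ne_zero k)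
    have h2 : (((m - k).factorial : ℂ)) ≠ 0 := Nat.cast_ne_zero.2 (Nat.factorial_ne_zero _)
    have h3 : ((m.factorial : ℂ)) ≠ 0 := Nat.cast_ne_zero.2 (Nat.factorial_ne_zero m)
    field_simp
    linear_combination hC
  have hpow : ∀ m : ℕ, ((A + B) ^ m) x
      = ∑ k ∈ Finset.range (m + 1), (m.choose k : ℂ) • (A ^ k) ((B ^ (m - k)) x) := by
    intro m
    rw [hAB.add_pow, LinearMap.sum_apply]
    refine Finset.sum_congr rfl fun k _ => ?_
    rw [Module.End.mul_apply, Module.End.mul_apply, Module.End.natCast_apply,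
        ← Nat.cast_smul_eq_nsmul ℂ, map_smul, map_smul]
  have hL1 : ∀ m : ℕ, ((m.factorial : ℂ))⁻¹ • ((A + B) ^ m) x
      = ∑ k ∈ Finset.range (m + 1), g k (m - k) := by
    intro m
    rw [hpow, Finset.smul_sum]
    refine Finset.sum_congr rfl fun k hk => ?_
    rw [smul_smul, hco m k (by rw [Finset.mem_range] at hk; omega), hg]
  rw [Finset.sum_congr rfl fun m _ => hL1 m]
  rw [← Finset.sum_subset (Finset.range_subset_range.2 hM) (fun m _ hm =>
    Finset.sum_eq_zero fun k hk => vanish k (m - k)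
      (by rw [Finset.mem_range, not_lt] at hm; rw [Finset.mem_range] at hk; omega))]
  have hL2 : ∀ m : ℕ, (∑ k ∈ Finset.range (m + 1), g k (m - k))
      = ∑ k ∈ Finset.range N, if k ≤ m then g k (m - k) else 0 := by
    intro m
    rw [show (∑ k ∈ Finset.range (m + 1), g k (m - k))
        = ∑ k ∈ Finset.range (m + 1), if k ≤ m then g k (m - k) else 0 from
      Finset.sum_congr rfl fun k hk => by
        rw [if_pos (by rw [Finset.mem_range] at hk; omega)]]
    rcases le_or_gt (m + 1) N with h | h
    · exact Finset.sum_subset (Finset.range_subset_range.2 h) fun k _ hk => by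
        rw [Finset.mem_range, not_lt] at hk
        rw [if_neg (by omega)]
    · refine (Finset.sum_subset (Finset.range_subset_range.2 (by omega)) fun k _ hk => ?_).symm
      rw [Finset.mem_range, not_lt] at hk
      by_cases hkm : k ≤ m
      · rw [if_pos hkm, vanish k (m - k) (by omega)]
      · rw [if_neg hkm]
  rw [Finset.sum_congr rfl fun m _ => hL2 m, Finset.sum_comm]
  exact Finset.sum_congr rfl fun k _ => perk k

end Filtration

open MvPolynomial

variable {n : ℕ}

/-- `Sop` as a linear endomorphism -/
noncomputable def SW (n : ℕ) : Module.End ℂ (W n) :=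
  (2 : ℂ)⁻¹ • (LinearMap.mulLeft ℂ (hbar n) ∘ₗ
    ∑ i : Fin n, ((pderiv (yv i)).toLinearMap ∘ₗ (pderiv (yb i)).toLinearMap))

lemma SW_apply (f : W n) : SW n f = Sop f := by
  simp [SW, Sop, LinearMap.sum_apply, Finset.mul_sum]

lemma SW_coe : ⇑(SW n) = (Sop : W n → W n) := funext SW_apply

lemma SW_pow_apply (m : ℕ) (f : W n) : (SW n ^ m) f = Sop^[m] f := by
  rw [Module.End.pow_apply, SW_coe]

/-- the submodule of weight at most `d` -/
noncomputable def Wle (n : ℕ) (d : ℕ) : Submodule ℂ (W n) where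
  carrier := {f | wt f ≤ d}
  add_mem' := fun hf hg => wt_add_le hf hg
  zero_mem' := by simp [wt_zero]
  smul_mem' := fun c f hf => le_trans (wt_smul_le c f) hf

@[simp] lemma mem_Wle {d : ℕ} {f : W n} : f ∈ Wle n d ↔ wt f ≤ d := Iff.rfl

/-- the filtration on `W n` -/
noncomputable def FW (n : ℕ) : ℕ → Submodule ℂ (W n)
  | 0 => ⊥
  | d + 1 => Wle n d

@[simp] lemma FW_zero : FW n 0 = ⊥ := rfl
@[simp] lemma mem_FW_succ {d : ℕ} {f : W n} : f ∈ FW n (d + 1) ↔ wt f ≤ d := Iff.rfl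

lemma Sop_eq_zero_of_wt {f : W n} (h : wt f ≤ 0) : Sop f = 0 := by
  rw [Sop]
  have : ∀ i : Fin n, pderiv (yv i) (pderiv (yb i) f) = 0 := by
    intro i
    rw [yb, pderiv_eq_zero_of_wt _ h, map_zero]
  rw [Finset.sum_congr rfl fun i _ => this i]
  simp

lemma wt_pderiv_weak (j : Fin n ⊕ Fin n) (f : W n) {d : ℕ} (h : wt f ≤ d) :
    wt (pderiv (Sum.inl j) f) ≤ d :=
  wt_pderiv_le j f (le_trans h (Nat.le_succ d))

lemma wt_Sop_le {f : W n} {d : ℕ} (h : wt f ≤ d) : wt (Sop f) ≤ d := by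
  rw [Sop]
  refine le_trans (wt_smul_le _ _) ?_
  refine le_trans (wt_mul_le _ _) ?_
  rw [wt_hbar, zero_add]
  refine wt_sum_le fun i _ => ?_
  exact wt_pderiv_weak _ _ (wt_pderiv_weak _ _ h)

lemma wt_Sop_lt {f : W n} {d : ℕ} (h : wt f ≤ d + 1) : wt (Sop f) ≤ d := by
  rw [Sop]
  refine le_trans (wt_smul_le _ _) ?_
  refine le_trans (wt_mul_le _ _) ?_
  rw [wt_hbar, zero_add]
  refine wt_sum_le fun i _ => ?_
  exact wt_pderiv_weak _ _ (wt_pderiv_le _ _ h)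

lemma isRed_SW : IsRed (FW n) (SW n) := by
  intro d x hx
  rw [SW_apply]
  cases d with
  | zero =>
    rw [mem_FW_succ] at hx
    rw [FW_zero, Submodule.mem_bot]
    exact Sop_eq_zero_of_wt hx
  | succ e =>
    rw [mem_FW_succ] at hx
    exact wt_Sop_lt hx

lemma SW_pow_eq_zero {f : W n} {m : ℕ} (hm : wt f + 1 ≤ m) : (SW n ^ m) f = 0 := by
  refine pow_apply_eq_zero_of_le ?_ hm
  exact isRed_SW.nilp rfl (mem_FW_succ.2 le_rfl)

set_option maxHeartbeats 1000000 in
lemma expS_eq_expo {f : W n} {M : ℕ} (hM : wt f + 1 ≤ M) :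
    expS f = expo (SW n) M f := by
  have h1 : expS f = expo (SW n) (f.totalDegree + 1) f := by
    rw [expS, expo]
    exact Finset.sum_congr rfl fun m _ => by rw [SW_pow_apply]
  rw [h1]
  exact expo_congr (SW_pow_eq_zero le_rfl)
    (by have := wt_le_totalDegree f; omega) hM

lemma negSW_pow_apply (m : ℕ) (f : W n) :
    ((-SW n) ^ m) f = ((-1 : ℂ) ^ m) • (SW n ^ m) f := by
  rw [show -SW n = (-1 : ℂ) • SW n from (neg_one_smul ℂ (SW n)).symm, smul_pow,
    LinearMap.smul_apply]

lemma expNegS_eq_expo {f : W n} {M : ℕ} (hM : wt f + 1 ≤ M) :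
    expNegS f = expo (-SW n) M f := by
  have h1 : expNegS f = expo (-SW n) (f.totalDegree + 1) f := by
    rw [expNegS, expo]
    refine Finset.sum_congr rfl fun m _ => ?_
    rw [negSW_pow_apply, SW_pow_apply, smul_smul, mul_comm]
  rw [h1]
  refine expo_congr (x := f) (N := wt f + 1) ?_ (by have := wt_le_totalDegree f; omega) hM
  rw [negSW_pow_apply, SW_pow_eq_zero le_rfl, smul_zero]

lemma wt_SW_pow_le (m : ℕ) (f : W n) : wt ((SW n ^ m) f) ≤ wt f := by
  induction m with
  | zero => simp
  | succ m ih =>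
    rw [pow_succ', Module.End.mul_apply, SW_apply]
    exact le_trans (wt_Sop_le le_rfl) ih

lemma wt_expo_SW_le (M : ℕ) (f : W n) (A : Module.End ℂ (W n))
    (hA : ∀ m g, (A ^ m) g = ((-1:ℂ)^m) • (SW n ^ m) g ∨ (A ^ m) g = (SW n ^ m) g) :
    wt (expo A M f) ≤ wt f := by
  refine wt_sum_le fun m _ => ?_
  refine le_trans (wt_smul_le _ _) ?_
  rcases hA m f with h | h <;> rw [h]
  · exact le_trans (wt_smul_le _ _) (wt_SW_pow_le m f)
  · exact wt_SW_pow_le m f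

lemma wt_expS_le (f : W n) : wt (expS f) ≤ wt f := by
  rw [expS_eq_expo (M := wt f + 1) le_rfl]
  exact wt_expo_SW_le _ _ _ (fun m g => Or.inr rfl)

lemma wt_expNegS_le (f : W n) : wt (expNegS f) ≤ wt f := by
  rw [expNegS_eq_expo (M := wt f + 1) le_rfl]
  exact wt_expo_SW_le _ _ _ (fun m g => Or.inl (negSW_pow_apply m g))

/-- Conjunct 1 -/
lemma expS_add (f g : W n) : expS (f + g) = expS f + expS g := by
  have hf : wt f + 1 ≤ wt f + wt g + 1 := by omega
  have hg' : wt g + 1 ≤ wt f + wt g + 1 := by omega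
  have hfg : wt (f + g) + 1 ≤ wt f + wt g + 1 := by
    have := wt_add_le (f := f) (g := g) (d := wt f + wt g) (by omega) (by omega)
    omega
  rw [expS_eq_expo hfg, expS_eq_expo hf, expS_eq_expo hg', expo_add_x]

lemma pderiv_chbar_mul (j : Fin n ⊕ Fin n) (a : ℂ) (m : ℕ) (g : W n) :
    pderiv (Sum.inl j) (C a * hbar n ^ m * g)
      = C a * hbar n ^ m * pderiv (Sum.inl j) g := by
  rw [pderiv_mul]
  have : pderiv (Sum.inl j) (C a * hbar n ^ m) = 0 := by
    rw [pderiv_C_mul, pderiv_pow, hbar, pderiv_X_of_ne (by simp)]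
    ring
  rw [this, zero_mul, zero_add]

lemma Sop_chbar_mul (a : ℂ) (m : ℕ) (g : W n) :
    Sop (C a * hbar n ^ m * g) = C a * hbar n ^ m * Sop g := by
  rw [Sop, Sop]
  have : ∀ i : Fin n, pderiv (yv i) (pderiv (yb i) (C a * hbar n ^ m * g))
      = C a * hbar n ^ m * pderiv (yv i) (pderiv (yb i) g) := by
    intro i
    rw [yb, yv, pderiv_chbar_mul, pderiv_chbar_mul]
  rw [Finset.sum_congr rfl fun i _ => this i, ← Finset.mul_sum]
  rw [mul_left_comm, mul_smul_comm]

lemma SW_pow_chbar_mul (k : ℕ) (a : ℂ) (m : ℕ) (g : W n) :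
    (SW n ^ k) (C a * hbar n ^ m * g) = C a * hbar n ^ m * (SW n ^ k) g := by
  induction k generalizing g with
  | zero => simp
  | succ k ih =>
    rw [pow_succ, Module.End.mul_apply, Module.End.mul_apply, SW_apply, SW_apply,
      Sop_chbar_mul, ih]

/-- Conjunct 2 -/
lemma expS_chbar_mul (a : ℂ) (m : ℕ) (f : W n) :
    expS (C a * hbar n ^ m * f) = C a * hbar n ^ m * expS f := by
  have hc : wt (C a * hbar n ^ m : W n) ≤ 0 := by
    refine le_trans (wt_mul_le _ _) ?_
    have := wt_C (n := n) a
    have := wt_hbar_pow (n := n) m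
    omega
  have hcf : wt (C a * hbar n ^ m * f) + 1 ≤ wt f + 1 := by
    have := le_trans (wt_mul_le (C a * hbar n ^ m) f) (by omega : wt (C a * hbar n ^ m : W n) + wt f ≤ 0 + wt f)
    omega
  rw [expS_eq_expo hcf, expS_eq_expo (M := wt f + 1) le_rfl, expo, expo,
    Finset.mul_sum]
  refine Finset.sum_congr rfl fun k _ => ?_
  rw [SW_pow_chbar_mul, mul_smul_comm]

/-- Conjunct 3, part 1 -/
lemma expS_expNegS (f : W n) : expS (expNegS f) = f := by
  set M := wt f + 1 with hM
  have h1 : wt (expNegS f) + 1 ≤ M := by have := wt_expNegS_le f; omega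
  rw [expS_eq_expo h1, expNegS_eq_expo (M := M) le_rfl]
  rw [← expo_add_op (F := FW n) rfl (Commute.refl (SW n)).neg_right isRed_SW
    isRed_SW.neg (mem_FW_succ.2 le_rfl) (le_refl M)]
  rw [add_neg_cancel]
  exact expo_zero_op (by omega) f

/-- Conjunct 3, part 2 -/
lemma expNegS_expS (f : W n) : expNegS (expS f) = f := by
  set M := wt f + 1 with hM
  have h1 : wt (expS f) + 1 ≤ M := by have := wt_expS_le f; omega
  rw [expNegS_eq_expo h1, expS_eq_expo (M := M) le_rfl]
  rw [← expo_add_op (F := FW n) rfl (Commute.refl (SW n)).neg_left isRed_SW.neg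
    isRed_SW (mem_FW_succ.2 le_rfl) (le_refl M)]
  rw [neg_add_cancel]
  exact expo_zero_op (by omega) f

/-- Conjunct 4 -/
lemma expS_bijective : Function.Bijective (expS (n := n)) :=
  ⟨Function.LeftInverse.injective (g := expNegS) expNegS_expS,
   Function.RightInverse.surjective (g := expNegS) expS_expNegS⟩

open MvPolynomial TensorProduct

set_option maxHeartbeats 1000000
set_option synthInstance.maxHeartbeats 400000

variable {n : ℕ}

/-! ### basic endomorphisms of `W n` -/

noncomputable def Dv (v : V n) : Module.End ℂ (W n) := (pderiv v).toLinearMap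

noncomputable def Lh (n : ℕ) : Module.End ℂ (W n) := LinearMap.mulLeft ℂ (hbar n)

@[simp] lemma Dv_apply (v : V n) (f : W n) : Dv v f = pderiv v f := rfl
@[simp] lemma Lh_apply (f : W n) : Lh n f = hbar n * f := rfl

/-- partial derivatives commute -/
lemma pderiv_comm (v w : V n) (f : W n) :
    pderiv v (pderiv w f) = pderiv w (pderiv v f) := by
  classical
  induction f using MvPolynomial.induction_on' with
  | monomial s a =>
    rw [pderiv_monomial, pderiv_monomial, pderiv_monomial, pderiv_monomial]
    by_cases hvw : v = w
    · subst hvw; rfl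
    · rw [show s - Finsupp.single w 1 - Finsupp.single v 1
          = s - Finsupp.single v 1 - Finsupp.single w 1 from by
        ext u
        rw [Finsupp.tsub_apply, Finsupp.tsub_apply, Finsupp.tsub_apply, Finsupp.tsub_apply]
        omega]
      congr 1
      rw [Finsupp.tsub_apply, Finsupp.tsub_apply, Finsupp.single_apply,
        Finsupp.single_apply, if_neg hvw, if_neg (fun h => hvw h.symm)]
      simp only [Nat.sub_zero]
      ring
  | add p q hp hq => simp [hp, hq]

lemma commute_Dv (v w : V n) : Commute (Dv v) (Dv w) :=
  LinearMap.ext fun f => pderiv_comm v w f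

lemma pderiv_hbar_mul (j : Fin n ⊕ Fin n) (f : W n) :
    pderiv (Sum.inl j) (hbar n * f) = hbar n * pderiv (Sum.inl j) f := by
  rw [pderiv_mul, hbar, pderiv_X_of_ne (by simp)]
  simp

lemma commute_Lh_Dv (j : Fin n ⊕ Fin n) : Commute (Lh n) (Dv (Sum.inl j)) := by
  refine LinearMap.ext fun f => ?_
  simp only [Module.End.mul_apply, Dv_apply, Lh_apply]
  exact (pderiv_hbar_mul j f).symm

lemma SW_eq : SW n = (2 : ℂ)⁻¹ • (Lh n * ∑ i : Fin n, Dv (yv i) * Dv (yb i)) := rfl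

lemma commute_SW_Dv (j : Fin n ⊕ Fin n) : Commute (SW n) (Dv (Sum.inl j)) := by
  rw [SW_eq]
  refine Commute.smul_left ?_ _
  refine Commute.mul_left ((commute_Lh_Dv j)) ?_
  refine Commute.sum_left _ _ _ fun i _ => ?_
  exact Commute.mul_left (commute_Dv _ _) (commute_Dv _ _)

lemma commute_SW_Lh : Commute (SW n) (Lh n) := by
  rw [SW_eq]
  refine Commute.smul_left ?_ _
  refine Commute.mul_left (Commute.refl _) ?_
  refine Commute.sum_left _ _ _ fun i _ => ?_
  exact Commute.mul_left (commute_Lh_Dv _).symm (commute_Lh_Dv _).symm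

/-! ### operators on the tensor square -/

abbrev T (n : ℕ) : Type := W n ⊗[ℂ] W n

noncomputable def Pop (n : ℕ) : Module.End ℂ (T n) :=
  ∑ i : Fin n, TensorProduct.map (Dv (yv i)) (Dv (yb i))

noncomputable def Qop (n : ℕ) : Module.End ℂ (T n) :=
  ∑ i : Fin n, TensorProduct.map (Dv (yb i)) (Dv (yv i))

noncomputable def Hm (n : ℕ) : Module.End ℂ (T n) := TensorProduct.map (Lh n) 1

noncomputable def S1 (n : ℕ) : Module.End ℂ (T n) := TensorProduct.map (SW n) 1
noncomputable def S2 (n : ℕ) : Module.End ℂ (T n) := TensorProduct.map 1 (SW n)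

noncomputable def Pq (n : ℕ) : Module.End ℂ (T n) := (2 : ℂ)⁻¹ • (Hm n * Pop n)
noncomputable def Qq (n : ℕ) : Module.End ℂ (T n) := (2 : ℂ)⁻¹ • (Hm n * Qop n)

noncomputable def RT (n : ℕ) : Module.End ℂ (T n) := S1 n + S2 n + Pq n + Qq n

noncomputable def mu (n : ℕ) : T n →ₗ[ℂ] W n := LinearMap.mul' ℂ (W n)

@[simp] lemma mu_tmul (f g : W n) : mu n (f ⊗ₜ g) = f * g := LinearMap.mul'_apply

lemma commute_map {a b c d : Module.End ℂ (W n)} (h1 : Commute a c) (h2 : Commute b d) :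
    Commute (TensorProduct.map a b) (TensorProduct.map c d) := by
  unfold Commute SemiconjBy
  rw [← TensorProduct.map_mul, ← TensorProduct.map_mul, h1.eq, h2.eq]

/-- all five generators commute pairwise -/
lemma commute_S1_S2 : Commute (S1 n) (S2 n) :=
  commute_map (Commute.one_right _) (Commute.one_left _)

lemma commute_S1_Hm : Commute (S1 n) (Hm n) :=
  commute_map commute_SW_Lh (Commute.one_right _)

lemma commute_S2_Hm : Commute (S2 n) (Hm n) :=
  commute_map (Commute.one_left _) (Commute.one_right _)

lemma commute_S1_Pop : Commute (S1 n) (Pop n) :=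
  Commute.sum_right _ _ _ fun i _ =>
    commute_map (commute_SW_Dv _) (Commute.one_left _)

lemma commute_S1_Qop : Commute (S1 n) (Qop n) :=
  Commute.sum_right _ _ _ fun i _ =>
    commute_map (commute_SW_Dv _) (Commute.one_left _)

lemma commute_S2_Pop : Commute (S2 n) (Pop n) :=
  Commute.sum_right _ _ _ fun i _ =>
    commute_map (Commute.one_left _) (commute_SW_Dv _)

lemma commute_S2_Qop : Commute (S2 n) (Qop n) :=
  Commute.sum_right _ _ _ fun i _ =>
    commute_map (Commute.one_left _) (commute_SW_Dv _)

lemma commute_Hm_Pop : Commute (Hm n) (Pop n) :=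
  Commute.sum_right _ _ _ fun i _ =>
    commute_map (commute_Lh_Dv _) (Commute.one_left _)

lemma commute_Hm_Qop : Commute (Hm n) (Qop n) :=
  Commute.sum_right _ _ _ fun i _ =>
    commute_map (commute_Lh_Dv _) (Commute.one_left _)

lemma commute_Pop_Qop : Commute (Pop n) (Qop n) :=
  Commute.sum_right _ _ _ fun j _ =>
    Commute.sum_left _ _ _ fun i _ =>
      commute_map (commute_Dv _ _) (commute_Dv _ _)

lemma commute_S1_Pq : Commute (S1 n) (Pq n) :=
  ((commute_S1_Hm.mul_right commute_S1_Pop)).smul_right _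

lemma commute_S1_Qq : Commute (S1 n) (Qq n) :=
  ((commute_S1_Hm.mul_right commute_S1_Qop)).smul_right _

lemma commute_S2_Pq : Commute (S2 n) (Pq n) :=
  ((commute_S2_Hm.mul_right commute_S2_Pop)).smul_right _

lemma commute_S2_Qq : Commute (S2 n) (Qq n) :=
  ((commute_S2_Hm.mul_right commute_S2_Qop)).smul_right _

lemma commute_Pq_Qq : Commute (Pq n) (Qq n) := by
  refine Commute.smul_left (Commute.smul_right ?_ _) _
  refine Commute.mul_left ?_ ?_
  · exact (Commute.refl _).mul_right commute_Hm_Qop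
  · exact (commute_Hm_Pop.symm).mul_right commute_Pop_Qop

lemma commute_HmPop_Pq : Commute (Hm n * Pop n) (Pq n) :=
  (Commute.refl _).smul_right _

lemma commute_RT_PqQq : Commute (RT n) (Pq n + -Qq n) := by
  unfold RT
  refine Commute.add_right ?_ ?_
  · exact Commute.add_left (Commute.add_left (Commute.add_left commute_S1_Pq commute_S2_Pq)
      (Commute.refl _)) commute_Pq_Qq.symm
  · have h : Commute (S1 n + S2 n + Pq n + Qq n) (Qq n) :=
      Commute.add_left (Commute.add_left (Commute.add_left commute_S1_Qq commute_S2_Qq)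
        commute_Pq_Qq) (Commute.refl _)
    have h2 := h.smul_right (-1 : ℂ)
    rwa [neg_one_smul ℂ (Qq n)] at h2

/-! ### the filtration on `T n` -/

noncomputable def FT (n : ℕ) : ℕ → Submodule ℂ (T n)
  | 0 => ⊥
  | d + 1 => Submodule.span ℂ {x | ∃ f g : W n, wt f + wt g ≤ d ∧ x = f ⊗ₜ g}

@[simp] lemma FT_zero : FT n 0 = ⊥ := rfl

lemma tmul_mem_FT_succ {f g : W n} {d : ℕ} (h : wt f + wt g ≤ d) :
    f ⊗ₜ g ∈ FT n (d + 1) :=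
  Submodule.subset_span ⟨f, g, h, rfl⟩

lemma tmul_mem_FT {f g : W n} {d : ℕ} (h : wt f + wt g < d) :
    f ⊗ₜ[ℂ] g ∈ FT n d := by
  cases d with
  | zero => omega
  | succ e => exact tmul_mem_FT_succ (by omega)

lemma FT_mono : Monotone (FT n) := by
  refine monotone_nat_of_le_succ fun d => ?_
  cases d with
  | zero => exact bot_le
  | succ e =>
    refine Submodule.span_mono fun x hx => ?_
    obtain ⟨f, g, h, rfl⟩ := hx
    exact ⟨f, g, by omega, rfl⟩

lemma isRedT_of {A : Module.End ℂ (T n)}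
    (hA : ∀ (f g : W n) (d : ℕ), wt f + wt g ≤ d → A (f ⊗ₜ g) ∈ FT n d) :
    IsRed (FT n) A := by
  intro d x hx
  induction hx using Submodule.span_induction with
  | mem y hy =>
    obtain ⟨f, g, h, rfl⟩ := hy
    exact hA f g d h
  | zero => rw [map_zero]; exact Submodule.zero_mem _
  | add y z _ _ hy hz => rw [map_add]; exact Submodule.add_mem _ hy hz
  | smul c y _ hy => rw [map_smul]; exact Submodule.smul_mem _ c hy

lemma presT_of {A : Module.End ℂ (T n)}
    (hA : ∀ (f g : W n) (d : ℕ), wt f + wt g ≤ d → A (f ⊗ₜ g) ∈ FT n (d + 1)) :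
    ∀ d, ∀ x ∈ FT n d, A x ∈ FT n d := by
  intro d x hx
  cases d with
  | zero =>
    rw [FT_zero, Submodule.mem_bot] at hx ⊢
    rw [hx, map_zero]
  | succ e =>
    induction hx using Submodule.span_induction with
    | mem y hy =>
      obtain ⟨f, g, h, rfl⟩ := hy
      exact hA f g e h
    | zero => rw [map_zero]; exact Submodule.zero_mem _
    | add y z _ _ hy hz => rw [map_add]; exact Submodule.add_mem _ hy hz
    | smul c y _ hy => rw [map_smul]; exact Submodule.smul_mem _ c hy

lemma isRedT_S1 : IsRed (FT n) (S1 n) := by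
  refine isRedT_of fun f g d h => ?_
  have : S1 n (f ⊗ₜ g) = SW n f ⊗ₜ g := by
    simp [S1, TensorProduct.map_tmul]
  rw [this, SW_apply]
  by_cases hf : wt f = 0
  · rw [Sop_eq_zero_of_wt (by omega), TensorProduct.zero_tmul]
    exact Submodule.zero_mem _
  · refine tmul_mem_FT ?_
    have h1 : wt (Sop f) ≤ wt f - 1 := wt_Sop_lt (by omega)
    rw [SW_apply] at *
    omega

lemma isRedT_S2 : IsRed (FT n) (S2 n) := by
  refine isRedT_of fun f g d h => ?_
  have : S2 n (f ⊗ₜ g) = f ⊗ₜ SW n g := by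
    simp [S2, TensorProduct.map_tmul]
  rw [this, SW_apply]
  by_cases hg : wt g = 0
  · rw [Sop_eq_zero_of_wt (by omega), TensorProduct.tmul_zero]
    exact Submodule.zero_mem _
  · refine tmul_mem_FT ?_
    have h1 : wt (Sop g) ≤ wt g - 1 := wt_Sop_lt (by omega)
    omega

lemma Pop_tmul (f g : W n) :
    Pop n (f ⊗ₜ g) = ∑ i : Fin n, pderiv (yv i) f ⊗ₜ[ℂ] pderiv (yb i) g := by
  simp [Pop, LinearMap.sum_apply, TensorProduct.map_tmul]

lemma Qop_tmul (f g : W n) :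
    Qop n (f ⊗ₜ g) = ∑ i : Fin n, pderiv (yb i) f ⊗ₜ[ℂ] pderiv (yv i) g := by
  simp [Qop, LinearMap.sum_apply, TensorProduct.map_tmul]

lemma isRedT_Pop : IsRed (FT n) (Pop n) := by
  refine isRedT_of fun f g d h => ?_
  rw [Pop_tmul]
  refine Submodule.sum_mem _ fun i _ => ?_
  by_cases hf : wt f = 0
  · rw [yv, pderiv_eq_zero_of_wt _ (by omega), TensorProduct.zero_tmul]
    exact Submodule.zero_mem _
  by_cases hg : wt g = 0
  · rw [yb, pderiv_eq_zero_of_wt _ (by omega), TensorProduct.tmul_zero]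
    exact Submodule.zero_mem _
  refine tmul_mem_FT ?_
  have h1 : wt (pderiv (yv i) f) ≤ wt f - 1 := by
    rw [yv]; exact wt_pderiv_le _ _ (by omega)
  have h2 : wt (pderiv (yb i) g) ≤ wt g - 1 := by
    rw [yb]; exact wt_pderiv_le _ _ (by omega)
  omega

lemma isRedT_Qop : IsRed (FT n) (Qop n) := by
  refine isRedT_of fun f g d h => ?_
  rw [Qop_tmul]
  refine Submodule.sum_mem _ fun i _ => ?_
  by_cases hf : wt f = 0
  · rw [yb, pderiv_eq_zero_of_wt _ (by omega), TensorProduct.zero_tmul]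
    exact Submodule.zero_mem _
  by_cases hg : wt g = 0
  · rw [yv, pderiv_eq_zero_of_wt _ (by omega), TensorProduct.tmul_zero]
    exact Submodule.zero_mem _
  refine tmul_mem_FT ?_
  have h1 : wt (pderiv (yb i) f) ≤ wt f - 1 := by
    rw [yb]; exact wt_pderiv_le _ _ (by omega)
  have h2 : wt (pderiv (yv i) g) ≤ wt g - 1 := by
    rw [yv]; exact wt_pderiv_le _ _ (by omega)
  omega

lemma presT_Hm : ∀ d, ∀ x ∈ FT n d, Hm n x ∈ FT n d := by
  refine presT_of fun f g d h => ?_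
  have : Hm n (f ⊗ₜ g) = (hbar n * f) ⊗ₜ g := by
    simp [Hm, TensorProduct.map_tmul]
  rw [this]
  refine tmul_mem_FT_succ ?_
  have := wt_mul_le (hbar n) f
  rw [wt_hbar] at this
  omega

lemma isRedT_Pq : IsRed (FT n) (Pq n) := by
  refine IsRed.smul _ ?_
  intro d x hx
  rw [Module.End.mul_apply]
  exact presT_Hm d _ (isRedT_Pop d x hx)

lemma isRedT_Qq : IsRed (FT n) (Qq n) := by
  refine IsRed.smul _ ?_
  intro d x hx
  rw [Module.End.mul_apply]
  exact presT_Hm d _ (isRedT_Qop d x hx)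

lemma isRedT_RT : IsRed (FT n) (RT n) :=
  ((isRedT_S1.add isRedT_S2).add isRedT_Pq).add isRedT_Qq

lemma isRedT_HmPop : IsRed (FT n) (Hm n * Pop n) := by
  intro d x hx
  rw [Module.End.mul_apply]
  exact presT_Hm d _ (isRedT_Pop d x hx)

lemma isRedT_PqQq : IsRed (FT n) (Pq n + -Qq n) :=
  isRedT_Pq.add isRedT_Qq.neg

open MvPolynomial TensorProduct

set_option maxHeartbeats 1000000
set_option synthInstance.maxHeartbeats 400000

variable {n : ℕ}

/-! ### iterD basics -/

lemma iterD_nil (vs : Fin 0 → V n) (f : W n) : iterD vs f = f := by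
  simp [iterD, List.ofFn_zero]

lemma iterD_succ {k : ℕ} (vs : Fin (k + 1) → V n) (f : W n) :
    iterD vs f = pderiv (vs 0) (iterD (fun j => vs j.succ) f) := by
  simp [iterD, List.ofFn_succ]

lemma iterD_cons {k : ℕ} (c : Fin n → V n) (i : Fin n) (t : Fin k → Fin n) (f : W n) :
    iterD (fun j : Fin (k + 1) => c ((Fin.cons i t : Fin (k + 1) → Fin n) j)) f
      = pderiv (c i) (iterD (fun j => c (t j)) f) := by
  rw [iterD_succ]
  simp only [Fin.cons_zero, Fin.cons_succ]

lemma iterD_map_zero : ∀ {k : ℕ} (vs : Fin k → V n), iterD vs (0 : W n) = 0 := by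
  intro k
  induction k with
  | zero => intro vs; rw [iterD_nil]
  | succ k ih => intro vs; rw [iterD_succ, ih, map_zero]

lemma wt_iterD : ∀ {k : ℕ} (vs : Fin k → V n),
    (∀ j, ∃ w, vs j = Sum.inl w) → ∀ (f : W n) (d : ℕ), wt f ≤ k + d → wt (iterD vs f) ≤ d := by
  intro k
  induction k with
  | zero => intro vs _ f d h; rw [iterD_nil]; omega
  | succ k ih =>
    intro vs hvs f d h
    rw [iterD_succ]
    obtain ⟨w, hw⟩ := hvs 0
    rw [hw]
    refine wt_pderiv_le w _ ?_
    refine ih (fun j => vs j.succ) (fun j => hvs j.succ) f (d + 1) (by omega)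

lemma iterD_eq_zero {k : ℕ} (vs : Fin k → V n)
    (hvs : ∀ j, ∃ w, vs j = Sum.inl w) {f : W n} (h : wt f < k) : iterD vs f = 0 := by
  cases k with
  | zero => omega
  | succ m =>
    rw [iterD_succ]
    obtain ⟨w, hw⟩ := hvs 0
    rw [hw]
    refine pderiv_eq_zero_of_wt w ?_
    exact wt_iterD (fun j => vs j.succ) (fun j => hvs j.succ) f 0 (by omega)

lemma hvs_yv {k : ℕ} (t : Fin k → Fin n) : ∀ j, ∃ w, (fun j => yv (t j)) j = Sum.inl w :=
  fun j => ⟨Sum.inl (t j), rfl⟩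

lemma hvs_yb {k : ℕ} (t : Fin k → Fin n) : ∀ j, ∃ w, (fun j => yb (t j)) j = Sum.inl w :=
  fun j => ⟨Sum.inr (t j), rfl⟩

/-! ### tensor power formulas -/

lemma map_pow_tmul (a b : Module.End ℂ (W n)) (m : ℕ) (f g : W n) :
    ((TensorProduct.map a b) ^ m) (f ⊗ₜ g) = ((a ^ m) f) ⊗ₜ ((b ^ m) g) := by
  rw [TensorProduct.map_pow, TensorProduct.map_tmul]

lemma Lh_pow_apply (m : ℕ) (f : W n) : ((Lh n) ^ m) f = hbar n ^ m * f := by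
  induction m with
  | zero => simp
  | succ m ih =>
    rw [pow_succ', Module.End.mul_apply, ih, Lh_apply, pow_succ']
    ring

lemma Hm_pow_tmul (m : ℕ) (f g : W n) :
    ((Hm n) ^ m) (f ⊗ₜ g) = (hbar n ^ m * f) ⊗ₜ g := by
  rw [Hm, map_pow_tmul, Lh_pow_apply, one_pow, Module.End.one_apply]

lemma Pop_pow_tmul : ∀ (k : ℕ) (f g : W n),
    ((Pop n) ^ k) (f ⊗ₜ g) = ∑ t : Fin k → Fin n,
      iterD (fun j => yv (t j)) f ⊗ₜ[ℂ] iterD (fun j => yb (t j)) g := by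
  intro k
  induction k with
  | zero =>
    intro f g
    rw [pow_zero, Module.End.one_apply, Fintype.sum_unique]
    rw [iterD_nil, iterD_nil]
  | succ k ih =>
    intro f g
    rw [pow_succ', Module.End.mul_apply, ih, map_sum]
    rw [← Equiv.sum_comp (Fin.consEquiv (fun _ => Fin n))
      (fun t => iterD (fun j => yv (t j)) f ⊗ₜ[ℂ] iterD (fun j => yb (t j)) g),
      Fintype.sum_prod_type]
    rw [Finset.sum_comm]
    refine Finset.sum_congr rfl fun t _ => ?_
    rw [Pop_tmul]
    refine Finset.sum_congr rfl fun i _ => ?_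
    simp only [Fin.consEquiv_apply]
    rw [iterD_cons, iterD_cons]

lemma Qop_pow_tmul : ∀ (k : ℕ) (f g : W n),
    ((Qop n) ^ k) (f ⊗ₜ g) = ∑ t : Fin k → Fin n,
      iterD (fun j => yb (t j)) f ⊗ₜ[ℂ] iterD (fun j => yv (t j)) g := by
  intro k
  induction k with
  | zero =>
    intro f g
    rw [pow_zero, Module.End.one_apply, Fintype.sum_unique]
    rw [iterD_nil, iterD_nil]
  | succ k ih =>
    intro f g
    rw [pow_succ', Module.End.mul_apply, ih, map_sum]
    rw [← Equiv.sum_comp (Fin.consEquiv (fun _ => Fin n))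
      (fun t => iterD (fun j => yb (t j)) f ⊗ₜ[ℂ] iterD (fun j => yv (t j)) g),
      Fintype.sum_prod_type]
    rw [Finset.sum_comm]
    refine Finset.sum_congr rfl fun t _ => ?_
    rw [Qop_tmul]
    refine Finset.sum_congr rfl fun i _ => ?_
    simp only [Fin.consEquiv_apply]
    rw [iterD_cons, iterD_cons]

lemma PopQop_pow_tmul (k l : ℕ) (f g : W n) :
    ((Pop n) ^ k) (((Qop n) ^ l) (f ⊗ₜ g))
      = ∑ u : Fin l → Fin n, ∑ t : Fin k → Fin n,
          iterD (fun j => yv (t j)) (iterD (fun j => yb (u j)) f) ⊗ₜ[ℂ]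
            iterD (fun j => yb (t j)) (iterD (fun j => yv (u j)) g) := by
  rw [Qop_pow_tmul, map_sum]
  exact Finset.sum_congr rfl fun u _ => Pop_pow_tmul k _ _

open MvPolynomial TensorProduct

set_option maxHeartbeats 1000000
set_option synthInstance.maxHeartbeats 400000

variable {n : ℕ}

lemma key_tmul (f g : W n) : Sop (f * g) = mu n (RT n (f ⊗ₜ g)) := by
  have hmu : mu n (RT n (f ⊗ₜ g))
      = Sop f * g + f * Sop g
        + (2 : ℂ)⁻¹ • ∑ i : Fin n, (hbar n * pderiv (yv i) f) * pderiv (yb i) g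
        + (2 : ℂ)⁻¹ • ∑ i : Fin n, (hbar n * pderiv (yb i) f) * pderiv (yv i) g := by
    rw [RT, LinearMap.add_apply, LinearMap.add_apply, LinearMap.add_apply,
      map_add, map_add, map_add]
    refine congrArg₂ (· + ·) ?_ ?_
    · refine congrArg₂ (· + ·) ?_ ?_
      · refine congrArg₂ (· + ·) ?_ ?_
        · rw [show S1 n (f ⊗ₜ g) = (SW n f) ⊗ₜ[ℂ] g by simp [S1], mu_tmul, SW_apply]
        · rw [show S2 n (f ⊗ₜ g) = f ⊗ₜ[ℂ] (SW n g) by simp [S2], mu_tmul, SW_apply]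
      · simp only [Pq, LinearMap.smul_apply, Module.End.mul_apply, Pop_tmul, map_sum,
          map_smul, Hm, TensorProduct.map_tmul, Lh_apply, Module.End.one_apply, mu_tmul]
    · simp only [Qq, LinearMap.smul_apply, Module.End.mul_apply, Qop_tmul, map_sum,
        map_smul, Hm, TensorProduct.map_tmul, Lh_apply, Module.End.one_apply, mu_tmul]
  rw [hmu]
  have expand : ∀ i : Fin n, pderiv (yv i) (pderiv (yb i) (f * g))
      = pderiv (yv i) (pderiv (yb i) f) * g + pderiv (yb i) f * pderiv (yv i) g
        + (pderiv (yv i) f * pderiv (yb i) g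
          + f * pderiv (yv i) (pderiv (yb i) g)) := by
    intro i
    rw [show pderiv (yb i) (f * g) = pderiv (yb i) f * g + f * pderiv (yb i) g from
      pderiv_mul, map_add, pderiv_mul, pderiv_mul]
  rw [Sop, Sop, Sop]
  rw [Finset.sum_congr rfl fun i _ => expand i]
  rw [Finset.sum_add_distrib, Finset.sum_add_distrib, Finset.sum_add_distrib]
  rw [mul_add, mul_add, mul_add, smul_add, smul_add, smul_add]
  have r1 : ((2 : ℂ)⁻¹ • (hbar n * ∑ i : Fin n, pderiv (yv i) (pderiv (yb i) f))) * g
      = (2 : ℂ)⁻¹ • (hbar n * ∑ i : Fin n, pderiv (yv i) (pderiv (yb i) f) * g) := by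
    rw [smul_mul_assoc, mul_assoc, Finset.sum_mul]
  have r2 : f * ((2 : ℂ)⁻¹ • (hbar n * ∑ i : Fin n, pderiv (yv i) (pderiv (yb i) g)))
      = (2 : ℂ)⁻¹ • (hbar n * ∑ i : Fin n, f * pderiv (yv i) (pderiv (yb i) g)) := by
    rw [mul_smul_comm, mul_left_comm, Finset.mul_sum]
  have r3 : (2 : ℂ)⁻¹ • ∑ i : Fin n, (hbar n * pderiv (yv i) f) * pderiv (yb i) g
      = (2 : ℂ)⁻¹ • (hbar n * ∑ i : Fin n, pderiv (yv i) f * pderiv (yb i) g) := by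
    congr 1
    rw [Finset.mul_sum]
    exact Finset.sum_congr rfl fun i _ => mul_assoc _ _ _
  have r4 : (2 : ℂ)⁻¹ • ∑ i : Fin n, (hbar n * pderiv (yb i) f) * pderiv (yv i) g
      = (2 : ℂ)⁻¹ • (hbar n * ∑ i : Fin n, pderiv (yb i) f * pderiv (yv i) g) := by
    congr 1
    rw [Finset.mul_sum]
    exact Finset.sum_congr rfl fun i _ => mul_assoc _ _ _
  rw [r1, r2, r3, r4]
  abel

lemma key_z (z : T n) : SW n (mu n z) = mu n (RT n z) := by
  have h : (SW n).comp (mu n) = (mu n).comp (RT n) := by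
    refine TensorProduct.ext' fun f g => ?_
    rw [LinearMap.comp_apply, LinearMap.comp_apply, mu_tmul, SW_apply, key_tmul]
  have := LinearMap.congr_fun h z
  rwa [LinearMap.comp_apply, LinearMap.comp_apply] at this

open MvPolynomial TensorProduct

set_option maxHeartbeats 1000000
set_option synthInstance.maxHeartbeats 400000

variable {n : ℕ}

lemma wt_iterD_weak {k : ℕ} (vs : Fin k → V n) (hvs : ∀ j, ∃ w, vs j = Sum.inl w)
    (f : W n) : wt (iterD vs f) ≤ wt f :=
  wt_iterD vs hvs f (wt f) (by omega)

lemma mw_vanish (f g : W n) {k l : ℕ} (h : wt f + 1 ≤ k ∨ wt f + 1 ≤ l) :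
    (∑ t : Fin k → Fin n, ∑ u : Fin l → Fin n,
      iterD (fun j => yv (t j)) (iterD (fun j => yb (u j)) f) *
        iterD (fun j => yb (t j)) (iterD (fun j => yv (u j)) g)) = 0 := by
  refine Finset.sum_eq_zero fun t _ => Finset.sum_eq_zero fun u _ => ?_
  rcases h with h | h
  · rw [iterD_eq_zero _ (hvs_yv t)
      (by have := wt_iterD_weak _ (hvs_yb u) f; omega), zero_mul]
  · rw [iterD_eq_zero _ (hvs_yb u) (by omega), iterD_map_zero, zero_mul]

lemma wt_moyal_le (f g : W n) : wt (moyal f g) ≤ wt f + wt g := by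
  rw [moyal]
  refine wt_sum_le fun k _ => wt_sum_le fun l _ => ?_
  refine le_trans (wt_smul_le _ _) ?_
  refine le_trans (wt_mul_le _ _) ?_
  have h1 : wt (((2 : ℂ)⁻¹ • hbar n) ^ (k + l)) ≤ 0 := by
    rw [smul_pow]
    exact le_trans (wt_smul_le _ _) (wt_hbar_pow _)
  have h2 : wt (mwTerm k l f g) ≤ wt f + wt g := by
    rw [mwTerm]
    refine le_trans (wt_smul_le _ _) ?_
    refine wt_sum_le fun t _ => wt_sum_le fun u _ => ?_
    refine le_trans (wt_mul_le _ _) ?_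
    have e1 := wt_iterD_weak _ (hvs_yv t) (iterD (fun j => yb (u j)) f)
    have e2 := wt_iterD_weak _ (hvs_yb u) f
    have e3 := wt_iterD_weak _ (hvs_yb t) (iterD (fun j => yv (u j)) g)
    have e4 := wt_iterD_weak _ (hvs_yv u) g
    omega
  omega

lemma sum_trunc1 {h : ℕ → W n} {c M1 M2 : ℕ} (hv : ∀ k, c ≤ k → h k = 0)
    (h1 : c ≤ M1) (h2 : c ≤ M2) :
    ∑ k ∈ Finset.range M1, h k = ∑ k ∈ Finset.range M2, h k := by
  have single : ∀ M, c ≤ M → ∑ k ∈ Finset.range M, h k = ∑ k ∈ Finset.range c, h k := by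
    intro M hM
    refine (Finset.sum_subset (Finset.range_subset_range.2 hM) fun k _ hk => ?_).symm
    rw [Finset.mem_range, not_lt] at hk
    exact hv k hk
  rw [single M1 h1, single M2 h2]

lemma sum_trunc2 {h : ℕ → ℕ → W n} {c M1 M2 : ℕ}
    (hv : ∀ k l, (c ≤ k ∨ c ≤ l) → h k l = 0) (h1 : c ≤ M1) (h2 : c ≤ M2) :
    (∑ k ∈ Finset.range M1, ∑ l ∈ Finset.range M1, h k l)
      = ∑ k ∈ Finset.range M2, ∑ l ∈ Finset.range M2, h k l := by
  have single : ∀ M, c ≤ M → (∑ k ∈ Finset.range M, ∑ l ∈ Finset.range M, h k l)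
      = ∑ k ∈ Finset.range c, ∑ l ∈ Finset.range c, h k l := by
    intro M hM
    rw [show (∑ k ∈ Finset.range M, ∑ l ∈ Finset.range M, h k l)
        = ∑ k ∈ Finset.range M, ∑ l ∈ Finset.range c, h k l from
      Finset.sum_congr rfl fun k _ =>
        (Finset.sum_subset (Finset.range_subset_range.2 hM) fun l _ hl => by
          rw [Finset.mem_range, not_lt] at hl
          exact hv k l (Or.inr hl)).symm]
    refine (Finset.sum_subset (Finset.range_subset_range.2 hM) fun k _ hk => ?_).symm
    rw [Finset.mem_range, not_lt] at hk
    exact Finset.sum_eq_zero fun l _ => hv k l (Or.inl hk)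
  rw [single M1 h1, single M2 h2]

lemma expo_side (f g : W n) (Mb : ℕ) :
    mu n (expo (Pq n) Mb (expo (-(Qq n)) Mb (f ⊗ₜ g)))
      = ∑ k ∈ Finset.range Mb, ∑ l ∈ Finset.range Mb,
          (((k.factorial : ℂ))⁻¹ * ((l.factorial : ℂ))⁻¹) •
            mu n (((Pq n) ^ k) (((-(Qq n)) ^ l) (f ⊗ₜ g))) := by
  rw [expo, map_sum]
  refine Finset.sum_congr rfl fun k _ => ?_
  rw [map_smul, expo, map_sum, map_sum, Finset.smul_sum]
  refine Finset.sum_congr rfl fun l _ => ?_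
  rw [map_smul, map_smul, smul_smul]

lemma term_eq (f g : W n) (k l : ℕ) :
    (((k.factorial : ℂ))⁻¹ * ((l.factorial : ℂ))⁻¹) •
        mu n (((Pq n) ^ k) (((-(Qq n)) ^ l) (f ⊗ₜ g)))
      = ((-1 : ℂ) ^ l) • (((2 : ℂ)⁻¹ • hbar n) ^ (k + l) * mwTerm k l f g) := by
  have hP : (Pq n) ^ k = (((2 : ℂ)⁻¹) ^ k) • ((Hm n) ^ k * (Pop n) ^ k) := by
    rw [Pq, smul_pow, commute_Hm_Pop.mul_pow]
  have hQ : (-(Qq n)) ^ l = ((-(2 : ℂ)⁻¹) ^ l) • ((Hm n) ^ l * (Qop n) ^ l) := by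
    have h0 : -(Qq n) = (-(2 : ℂ)⁻¹) • (Hm n * Qop n) := by
      rw [Qq]
      exact (neg_smul ((2:ℂ)⁻¹) (Hm n * Qop n)).symm
    rw [h0, smul_pow, commute_Hm_Qop.mul_pow]
  have hx : ((Pq n) ^ k) (((-(Qq n)) ^ l) (f ⊗ₜ g))
      = ((((2 : ℂ)⁻¹) ^ k) * ((-(2 : ℂ)⁻¹) ^ l)) •
          (((Hm n) ^ (k + l)) (((Pop n) ^ k) (((Qop n) ^ l) (f ⊗ₜ g)))) := by
    rw [hP, hQ, LinearMap.smul_apply, LinearMap.smul_apply, map_smul, smul_smul,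
      Module.End.mul_apply, Module.End.mul_apply]
    congr 1
    have swap : ((Pop n) ^ k) (((Hm n) ^ l) (((Qop n) ^ l) (f ⊗ₜ g)))
        = ((Hm n) ^ l) (((Pop n) ^ k) (((Qop n) ^ l) (f ⊗ₜ g))) := by
      have hc := ((commute_Hm_Pop (n := n)).pow_pow l k).eq
      have := LinearMap.congr_fun hc (((Qop n) ^ l) (f ⊗ₜ g))
      rw [Module.End.mul_apply, Module.End.mul_apply] at this
      exact this.symm
    rw [swap, ← Module.End.mul_apply ((Hm n) ^ k), ← pow_add]
  have hy : mu n (((Hm n) ^ (k + l)) (((Pop n) ^ k) (((Qop n) ^ l) (f ⊗ₜ g))))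
      = hbar n ^ (k + l) * ∑ t : Fin k → Fin n, ∑ u : Fin l → Fin n,
          iterD (fun j => yv (t j)) (iterD (fun j => yb (u j)) f) *
            iterD (fun j => yb (t j)) (iterD (fun j => yv (u j)) g) := by
    rw [PopQop_pow_tmul]
    simp only [map_sum, Hm_pow_tmul, mu_tmul]
    rw [Finset.sum_comm, Finset.mul_sum]
    refine Finset.sum_congr rfl fun t _ => ?_
    rw [Finset.mul_sum]
    exact Finset.sum_congr rfl fun u _ => mul_assoc _ _ _
  rw [hx, map_smul, hy, smul_smul, mwTerm, smul_pow, smul_mul_assoc, mul_smul_comm,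
    smul_smul, smul_smul]
  congr 1
  rw [neg_pow, pow_add, mul_inv]
  ring

lemma moyal_eq (f g : W n) {Mb : ℕ} (hMb : wt f + 1 ≤ Mb) :
    moyal f g = mu n (expo (Pq n) Mb (expo (-(Qq n)) Mb (f ⊗ₜ g))) := by
  rw [expo_side, moyal]
  rw [Finset.sum_congr rfl fun k (_ : k ∈ Finset.range Mb) =>
    Finset.sum_congr rfl fun l (_ : l ∈ Finset.range Mb) => term_eq f g k l]
  refine sum_trunc2 (c := wt f + 1) ?_ (by have := wt_le_totalDegree f; omega) hMb
  intro k l hkl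
  rw [mwTerm, mw_vanish f g hkl, smul_zero, mul_zero, smul_zero]

lemma wick_vanish (F G : W n) {k : ℕ} (h : wt F + 1 ≤ k) :
    (∑ t : Fin k → Fin n,
      iterD (fun j => yv (t j)) F * iterD (fun j => yb (t j)) G) = 0 := by
  refine Finset.sum_eq_zero fun t _ => ?_
  rw [iterD_eq_zero _ (hvs_yv t) (by omega), zero_mul]

lemma wick_eq (F G : W n) {Mb : ℕ} (h : wt F + 1 ≤ Mb) :
    wick F G = mu n (expo (Hm n * Pop n) Mb (F ⊗ₜ G)) := by
  rw [wick, expo, map_sum]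
  have hterm : ∀ k : ℕ, ((k.factorial : ℂ))⁻¹ • mu n (((Hm n * Pop n) ^ k) (F ⊗ₜ G))
      = hbar n ^ k * wickTerm k F G := by
    intro k
    rw [commute_Hm_Pop.mul_pow, Module.End.mul_apply, Pop_pow_tmul]
    simp only [map_sum, Hm_pow_tmul, mu_tmul]
    rw [wickTerm, mul_smul_comm, Finset.mul_sum]
    congr 1
    exact Finset.sum_congr rfl fun t _ => mul_assoc _ _ _
  have hsum : (∑ k ∈ Finset.range Mb,
        mu n (((k.factorial : ℂ))⁻¹ • ((Hm n * Pop n) ^ k) (F ⊗ₜ G)))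
      = ∑ k ∈ Finset.range Mb, hbar n ^ k * wickTerm k F G :=
    Finset.sum_congr rfl fun k _ => by rw [map_smul, hterm k]
  rw [hsum]
  refine sum_trunc1 (c := wt F + 1) ?_ (by have := wt_le_totalDegree F; omega) h
  intro k hk
  rw [wickTerm, wick_vanish F G hk, smul_zero, mul_zero]

open MvPolynomial TensorProduct

set_option maxHeartbeats 1000000
set_option synthInstance.maxHeartbeats 400000

variable {n : ℕ}

lemma commute_Pq_negQq : Commute (Pq n) (-(Qq n)) := by
  have h2 := (commute_Pq_Qq (n := n)).smul_right (-1 : ℂ)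
  rwa [neg_one_smul ℂ (Qq n)] at h2

lemma commute_HmPop_S12 : Commute (Hm n * Pop n) (S1 n + S2 n) := by
  refine Commute.add_right ?_ ?_
  · exact Commute.mul_left commute_S1_Hm.symm commute_S1_Pop.symm
  · exact Commute.mul_left commute_S2_Hm.symm commute_S2_Pop.symm

lemma op_sum_eq : RT n + (Pq n + -(Qq n)) = (Hm n * Pop n) + (S1 n + S2 n) := by
  have h1 : RT n + (Pq n + -(Qq n))
      = (S1 n + S2 n) + (Pq n + Pq n) + (Qq n + -(Qq n)) := by
    rw [RT]; abel
  have h2 : Pq n + Pq n = Hm n * Pop n := by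
    rw [Pq, ← add_smul]
    norm_num
  rw [h1, h2]
  abel

lemma S2_pow_tmul (m : ℕ) (f g : W n) :
    ((S2 n) ^ m) (f ⊗ₜ g) = f ⊗ₜ ((SW n ^ m) g) := by
  rw [S2, map_pow_tmul, one_pow, Module.End.one_apply]

lemma S1_pow_tmul (m : ℕ) (f g : W n) :
    ((S1 n) ^ m) (f ⊗ₜ g) = ((SW n ^ m) f) ⊗ₜ g := by
  rw [S1, map_pow_tmul, one_pow, Module.End.one_apply]

lemma expo_S2_tmul (Mb : ℕ) (f g : W n) :
    expo (S2 n) Mb (f ⊗ₜ g) = f ⊗ₜ (expo (SW n) Mb g) := by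
  rw [expo, expo, tmul_sum]
  refine Finset.sum_congr rfl fun m _ => ?_
  rw [S2_pow_tmul, tmul_smul]

lemma expo_S1_tmul (Mb : ℕ) (f G : W n) :
    expo (S1 n) Mb (f ⊗ₜ G) = (expo (SW n) Mb f) ⊗ₜ G := by
  rw [expo, expo, sum_tmul]
  refine Finset.sum_congr rfl fun m _ => ?_
  rw [S1_pow_tmul, smul_tmul']

/-- Conjunct 5 -/
lemma expS_moyal (f g : W n) : expS (moyal f g) = wick (expS f) (expS g) := by
  set Mb := wt f + wt g + 1 with hMbdef
  have hx : f ⊗ₜ[ℂ] g ∈ FT n Mb := tmul_mem_FT (by omega)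
  have hwt : wt (moyal f g) + 1 ≤ Mb := by have := wt_moyal_le f g; omega
  rw [expS_eq_expo (M := Mb) hwt, moyal_eq f g (Mb := Mb) (by omega)]
  rw [← expo_map (mu n) (fun z => (key_z z).symm) Mb
    (expo (Pq n) Mb (expo (-(Qq n)) Mb (f ⊗ₜ g)))]
  rw [← expo_add_op rfl commute_Pq_negQq isRedT_Pq isRedT_Qq.neg hx le_rfl]
  rw [← expo_add_op rfl commute_RT_PqQq isRedT_RT isRedT_PqQq hx le_rfl]
  rw [op_sum_eq]
  rw [expo_add_op rfl commute_HmPop_S12 isRedT_HmPop (isRedT_S1.add isRedT_S2) hx le_rfl]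
  rw [expo_add_op rfl commute_S1_S2 isRedT_S1 isRedT_S2 hx le_rfl]
  rw [expo_S2_tmul, expo_S1_tmul]
  rw [← expS_eq_expo (M := Mb) (f := f) (by omega),
    ← expS_eq_expo (M := Mb) (f := g) (by omega)]
  rw [← wick_eq (expS f) (expS g) (Mb := Mb) (by have := wt_expS_le f; omega)]

theorem expS_intertwines_moyal_wick (n : ℕ) (hn : 1 ≤ n) :
    (∀ f g : W n, expS (f + g) = expS f + expS g) ∧
    (∀ (a : ℂ) (m : ℕ) (f : W n),
      expS (C a * hbar n ^ m * f) = C a * hbar n ^ m * expS f) ∧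
    (∀ f : W n, expS (expNegS f) = f ∧ expNegS (expS f) = f) ∧
    Function.Bijective (expS (n := n)) ∧
    (∀ f g : W n, expS (moyal f g) = wick (expS f) (expS g)) :=
  ⟨expS_add, expS_chbar_mul, fun f => ⟨expS_expNegS f, expNegS_expS f⟩,
    expS_bijective, expS_moyal⟩

end Stmt13
end

section
/- The full Taylor expansion intertwines Wick products (flat Fedosov correspondence): the ℂ[ħ]-linear map T : B[ħ] → C[ħ] defined on B by T(f) = Σ_{a,b ∈ ℕⁿ} (1/(a!·b!)) (∂^{|a|+|b|}f/∂z^a∂z̄^b)·y^a ȳ^b (equivalently T(f)(z, z̄, y, ȳ) = f(z+y, z̄+ȳ)) is an injective algebra homomorphism from (B[ħ], ⋆_z) to (C[ħ], ⋆_y): T(f ⋆_z g) = T(f) ⋆_y T(g) for all f, g ∈ B[ħ], and T(f) recovers f by setting y = ȳ = 0. -/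
/-!
STATEMENT 18: The full Taylor expansion intertwines Wick products (flat Fedosov
correspondence): the ℂ[ħ]-linear map T : B[ħ] → C[ħ] defined on B by
T(f) = Σ_{a,b} (1/(a!·b!)) (∂^{|a|+|b|}f/∂z^a∂z̄^b)·y^a ȳ^b (equivalently
T(f)(z, z̄, y, ȳ) = f(z+y, z̄+ȳ)) is an injective algebra homomorphism from
(B[ħ], ⋆_z) to (C[ħ], ⋆_y): T(f ⋆_z g) = T(f) ⋆_y T(g) for all f, g ∈ B[ħ],
and T(f) recovers f by setting y = ȳ = 0.
-/

open MvPolynomial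

namespace Stmt18

/-- Variables of `B[ħ]`: `Sum.inl (Sum.inl i)` is `zⁱ`, `Sum.inl (Sum.inr i)`
is `z̄ⁱ`, `Sum.inr ()` is `ħ`. -/
abbrev VB (n : ℕ) : Type := (Fin n ⊕ Fin n) ⊕ Unit

/-- Variables of `C[ħ]`: `Sum.inl (Sum.inl i)` is `zⁱ`, `Sum.inl (Sum.inr i)`
is `z̄ⁱ`, `Sum.inr (Sum.inl (Sum.inl i))` is `yⁱ`,
`Sum.inr (Sum.inl (Sum.inr i))` is `ȳⁱ`, and `Sum.inr (Sum.inr ())` is `ħ`. -/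
abbrev VC (n : ℕ) : Type := (Fin n ⊕ Fin n) ⊕ ((Fin n ⊕ Fin n) ⊕ Unit)

/-- `B[ħ] = ℂ[z,z̄][ħ]`. -/
abbrev BH (n : ℕ) : Type := MvPolynomial (VB n) ℂ

/-- `C[ħ] = ℂ[z,z̄,y,ȳ][ħ]`. -/
abbrev CH (n : ℕ) : Type := MvPolynomial (VC n) ℂ

/-- Iterated partial derivative along a tuple of variables. -/
noncomputable def iterD {σ : Type} {k : ℕ} (vs : Fin k → σ) (f : MvPolynomial σ ℂ) :
    MvPolynomial σ ℂ :=
  (List.ofFn vs).foldr (fun v acc => pderiv v acc) f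

/-- The generic Wick product with "holomorphic" variables `u i`,
"anti-holomorphic" variables `v i` and parameter `h`:
`f ⋆ g = Σ_{k≥0} (hᵏ/k!) Σ_{i₁,…,i_k} (∂ᵏf/∂u^{i₁}⋯)·(∂ᵏg/∂v^{i₁}⋯)`; the sum
is finite since the `k`-fold derivative of `f` vanishes for
`k > totalDegree f`, so the truncation loses nothing. -/
noncomputable def wickGen {σ : Type} {n : ℕ} (u v : Fin n → σ)
    (h : MvPolynomial σ ℂ) (f g : MvPolynomial σ ℂ) : MvPolynomial σ ℂ :=
  ∑ k ∈ Finset.range (f.totalDegree + 1),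
    h ^ k * ((k.factorial : ℂ))⁻¹ •
      ∑ t : Fin k → Fin n,
        iterD (fun j => u (t j)) f * iterD (fun j => v (t j)) g

/-- The Wick product `⋆_z` on `B[ħ]`. -/
noncomputable def wickB {n : ℕ} (f g : BH n) : BH n :=
  wickGen (fun i => Sum.inl (Sum.inl i)) (fun i => Sum.inl (Sum.inr i))
    (X (Sum.inr ())) f g

/-- The fiberwise Wick product `⋆_y` on `C[ħ]`. -/
noncomputable def wickC {n : ℕ} (f g : CH n) : CH n :=
  wickGen (fun i => Sum.inr (Sum.inl (Sum.inl i)))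
    (fun i => Sum.inr (Sum.inl (Sum.inr i))) (X (Sum.inr (Sum.inr ()))) f g

/-- The full Taylor expansion `T(f)(z, z̄, y, ȳ, ħ) = f(z+y, z̄+ȳ, ħ)`,
equivalently `T(f) = Σ_{a,b∈ℕⁿ} (1/(a!·b!)) (∂^{|a|+|b|}f/∂z^a∂z̄^b)·y^a ȳ^b`;
it is a ℂ[ħ]-linear algebra map. -/
noncomputable def T {n : ℕ} : BH n →ₐ[ℂ] CH n :=
  aeval fun v => match v with
    | Sum.inl (Sum.inl i) =>
        X (Sum.inl (Sum.inl i)) + X (Sum.inr (Sum.inl (Sum.inl i)))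
    | Sum.inl (Sum.inr i) =>
        X (Sum.inl (Sum.inr i)) + X (Sum.inr (Sum.inl (Sum.inr i)))
    | Sum.inr _ => X (Sum.inr (Sum.inr ()))

/-- Setting `y = ȳ = 0` (the symbol map `C[ħ] → B[ħ]`). -/
noncomputable def symb {n : ℕ} : CH n →ₐ[ℂ] BH n :=
  aeval fun v => match v with
    | Sum.inl w => X (Sum.inl w)
    | Sum.inr (Sum.inl _) => 0
    | Sum.inr (Sum.inr _) => X (Sum.inr ())


/-- Substituting polynomials of total degree at most 1 does not raise total degree. -/
lemma totalDegree_aeval_le {σ τ : Type} (g : σ → MvPolynomial τ ℂ)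
    (hg : ∀ v, (g v).totalDegree ≤ 1) (p : MvPolynomial σ ℂ) :
    (aeval g p).totalDegree ≤ p.totalDegree := by
  rw [aeval_def, eval₂_eq]
  refine (totalDegree_finset_sum _ _).trans (Finset.sup_le fun s hs => ?_)
  have h2 : (∏ i ∈ s.support, g i ^ s i).totalDegree ≤ s.sum fun _ e => e := by
    refine (totalDegree_finset_prod _ _).trans ?_
    rw [Finsupp.sum]
    refine Finset.sum_le_sum fun i _ => ?_
    refine (totalDegree_pow _ _).trans ?_
    calc s i * (g i).totalDegree ≤ s i * 1 := Nat.mul_le_mul_left _ (hg i)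
      _ = s i := Nat.mul_one _
  calc ((algebraMap ℂ (MvPolynomial τ ℂ)) (coeff s p) * ∏ i ∈ s.support, g i ^ s i).totalDegree
      ≤ _ + _ := totalDegree_mul _ _
    _ ≤ s.sum fun _ e => e := by
        rw [MvPolynomial.algebraMap_eq, totalDegree_C, zero_add]; exact h2
    _ ≤ p.totalDegree := le_totalDegree hs

/-- The map `z ↦ 0, z̄ ↦ 0, y ↦ z, ȳ ↦ z̄, ħ ↦ ħ`, a left inverse of `T`. -/
noncomputable def Sback {n : ℕ} : CH n →ₐ[ℂ] BH n :=
  aeval fun v => match v with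
    | Sum.inl _ => 0
    | Sum.inr (Sum.inl w) => X (Sum.inl w)
    | Sum.inr (Sum.inr _) => X (Sum.inr ())

lemma symb_T_eq {n : ℕ} (f : BH n) : symb (T f) = f := by
  have h : (symb.comp (T (n := n))) = AlgHom.id ℂ (BH n) := by
    apply MvPolynomial.algHom_ext
    rintro ((i | i) | ⟨⟩) <;> simp [T, symb]
  calc symb (T f) = (symb.comp (T (n := n))) f := rfl
    _ = f := by rw [h]; rfl

lemma Sback_T_eq {n : ℕ} (f : BH n) : Sback (T f) = f := by
  have h : (Sback.comp (T (n := n))) = AlgHom.id ℂ (BH n) := by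
    apply MvPolynomial.algHom_ext
    rintro ((i | i) | ⟨⟩) <;> simp [T, Sback]
  calc Sback (T f) = (Sback.comp (T (n := n))) f := rfl
    _ = f := by rw [h]; rfl

lemma totalDegree_T {n : ℕ} (f : BH n) : (T f).totalDegree = f.totalDegree := by
  refine le_antisymm (totalDegree_aeval_le _ ?_ f) ?_
  · rintro ((i | i) | ⟨⟩)
    · exact (totalDegree_add _ _).trans (by simp [totalDegree_X])
    · exact (totalDegree_add _ _).trans (by simp [totalDegree_X])
    · simp [totalDegree_X]
  · conv_lhs => rw [← Sback_T_eq f]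
    refine totalDegree_aeval_le _ ?_ (T f)
    rintro ((i | i) | ((i | i) | ⟨⟩)) <;> simp [totalDegree_X]

lemma T_pderiv_X {n : ℕ} (w : Fin n ⊕ Fin n) (v : VB n) :
    T (pderiv (Sum.inl w) (X v : BH n)) = pderiv (Sum.inr (Sum.inl w)) (T (X v)) := by
  have hij : ∀ (i j : Fin n) (a b : BH n) (c d : CH n),
      (j = i → (T a = c)) → (j ≠ i → T b = d) →
      T (if j = i then a else b) = if j = i then c else d := by
    intro i j a b c d h1 h2
    by_cases h : j = i <;> simp [h, h1, h2]
  rcases w with i | i <;> rcases v with (j | j) | u <;>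
    simp only [T, aeval_X, pderiv_X, Pi.single_apply, Sum.inl.injEq, Sum.inr.injEq,
      reduceCtorEq, if_false, map_zero, map_add] <;>
    first
      | rfl
      | (by_cases h : j = i <;> simp [h])

lemma T_pderiv {n : ℕ} (w : Fin n ⊕ Fin n) (f : BH n) :
    T (pderiv (Sum.inl w) f) = pderiv (Sum.inr (Sum.inl w)) (T f) := by
  induction f using MvPolynomial.induction_on with
  | C a => simp [pderiv_C]
  | add p q hp hq => simp only [map_add, hp, hq]
  | mul_X p v ih =>
    rw [pderiv_mul, map_add, map_mul, map_mul, map_mul, pderiv_mul, ih, T_pderiv_X]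

lemma T_iterD {n k : ℕ} (t : Fin k → Fin n ⊕ Fin n) (f : BH n) :
    T (iterD (fun j => (Sum.inl (t j) : VB n)) f)
      = iterD (fun j => (Sum.inr (Sum.inl (t j)) : VC n)) (T f) := by
  induction k with
  | zero => simp [iterD]
  | succ k ih =>
    show T ((List.ofFn fun j => (Sum.inl (t j) : VB n)).foldr _ f) = _
    rw [iterD, List.ofFn_succ, List.ofFn_succ, List.foldr_cons, List.foldr_cons]
    rw [show ((List.ofFn fun j => (Sum.inl (t j.succ) : VB n)).foldr
        (fun v acc => pderiv v acc) f) = iterD (fun j => (Sum.inl (t j.succ) : VB n)) f from rfl]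
    rw [T_pderiv, ih (fun j => t j.succ)]
    rfl

lemma T_iterD_z {n k : ℕ} (t : Fin k → Fin n) (f : BH n) :
    T (iterD (fun j => (Sum.inl (Sum.inl (t j)) : VB n)) f)
      = iterD (fun j => (Sum.inr (Sum.inl (Sum.inl (t j))) : VC n)) (T f) :=
  T_iterD (fun j => Sum.inl (t j)) f

lemma T_iterD_zbar {n k : ℕ} (t : Fin k → Fin n) (f : BH n) :
    T (iterD (fun j => (Sum.inl (Sum.inr (t j)) : VB n)) f)
      = iterD (fun j => (Sum.inr (Sum.inl (Sum.inr (t j))) : VC n)) (T f) :=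
  T_iterD (fun j => Sum.inr (t j)) f

lemma T_wick {n : ℕ} (f g : BH n) : T (wickB f g) = wickC (T f) (T g) := by
  unfold wickB wickC wickGen
  rw [map_sum, totalDegree_T]
  refine Finset.sum_congr rfl fun k _ => ?_
  rw [map_mul, map_pow, map_smul, map_sum]
  have hT : T (X (Sum.inr ()) : BH n) = X (Sum.inr (Sum.inr ())) := by simp [T]
  rw [hT]
  congr 2
  refine Finset.sum_congr rfl fun t _ => ?_
  rw [map_mul, T_iterD_z, T_iterD_zbar]

theorem taylor_intertwines_wick (n : ℕ) (hn : 1 ≤ n) :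
    Function.Injective (T (n := n)) ∧
    (∀ f g : BH n, T (wickB f g) = wickC (T f) (T g)) ∧
    (∀ f : BH n, symb (T f) = f) := by
  refine ⟨Function.LeftInverse.injective (g := symb) symb_T_eq, T_wick, symb_T_eq⟩

end Stmt18
end
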